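/- arXiv:2411.02111 — 3 statements merged into one kernel-verified Lean document; each statement's English description precedes it below -/
import Mathlib

section
/- (Explicit Rayleigh's Monotonicity Law II) Let G be a finite connected weighted graph, let e_i be an edge of G with endpoints p_i, q_i and length L_i, and let G' be obtained from G by replacing e_i by an edge e_i' of length L_i' between the same endpoints. If e_i is not a bridge, then for all vertices s, t of G: r_G(s,t) = r_{G'}(s,t) + ((L_i − L_i')/((L_i+R_i)(L_i'+R_i)))·( j_{p_i}^{G−e_i}(q_i,s) − j_{p_i}^{G−e_i}(q_i,t) )². If e_i is a bridge, then r_G(s,t) = r_{G'}(s,t) when s and t lie in the same connected component of G−e_i, and r_G(s,t) = r_{G'}(s,t) + L_i − L_i' otherwise. -/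
open scoped Classical

/-- A finite weighted multigraph (resistive electrical network): finitely many
vertices and edges; each edge `e` has two endpoints `ends e` and a positive
length (resistance) `len e`.  Multiple edges and self-loops are allowed. -/
structure WMG where
  V : Type
  E : Type
  instV : Fintype V
  instE : Fintype E
  ends : E → V × V
  len : E → ℝ
  len_pos : ∀ e, 0 < len e

attribute [instance] WMG.instV WMG.instE

/-- The Moore–Penrose pseudoinverse of a real square matrix, characterized by
the four Penrose equations (it exists and is unique for real matrices). -/
noncomputable def Matrix.mpinv {n : Type} [Fintype n] (A : Matrix n n ℝ) : Matrix n n ℝ :=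
  if h : ∃ B : Matrix n n ℝ,
      A * B * A = A ∧ B * A * B = B ∧ Matrix.transpose (A * B) = A * B ∧ Matrix.transpose (B * A) = B * A
  then h.choose else 0

namespace WMG

/-- Indicator function. -/
noncomputable def ind {α : Type} (x y : α) : ℝ := if x = y then 1 else 0

/-- The weighted Laplacian: an edge `e` with endpoints `a, b` contributes
`(1/len e) * (δ_{ua} - δ_{ub}) * (δ_{va} - δ_{vb})` to the `(u,v)` entry.  So
the off-diagonal `(u,v)` entry is `-∑ 1/len e` over the edges joining `u` and
`v`, and all row sums are zero. -/
noncomputable def lap (G : WMG) : Matrix G.V G.V ℝ :=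
  ∑ e : G.E, (G.len e)⁻¹ •
    Matrix.of (fun u v : G.V =>
      (ind u (G.ends e).1 - ind u (G.ends e).2) *
      (ind v (G.ends e).1 - ind v (G.ends e).2))

/-- Effective resistance `r(p,q) = L⁺pp - 2·L⁺pq + L⁺qq`. -/
noncomputable def res (G : WMG) (p q : G.V) : ℝ :=
  G.lap.mpinv p p - 2 * G.lap.mpinv p q + G.lap.mpinv q q

/-- Voltage function `j_p(q,s) = L⁺pp - L⁺pq - L⁺ps + L⁺qs`. -/
noncomputable def volt (G : WMG) (p q s : G.V) : ℝ :=
  G.lap.mpinv p p - G.lap.mpinv p q - G.lap.mpinv p s + G.lap.mpinv q s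

/-- Two vertices are adjacent if some edge has them as its endpoints. -/
def Adj (G : WMG) (u v : G.V) : Prop :=
  ∃ e : G.E, G.ends e = (u, v) ∨ G.ends e = (v, u)

/-- `u` and `v` are joined by a walk in `G`. -/
def Reach (G : WMG) (u v : G.V) : Prop := Relation.ReflTransGen G.Adj u v

/-- `G` is connected. -/
def Connected (G : WMG) : Prop := Nonempty G.V ∧ ∀ u v : G.V, G.Reach u v

/-- Quotient graph: identify vertices along (the equivalence generated by) the
relation `r`; all edges are kept. -/
noncomputable def quot (G : WMG) (r : G.V → G.V → Prop) : WMG where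
  V := Quot r
  E := G.E
  instV := Fintype.ofFinite _
  instE := G.instE
  ends e := (Quot.mk r (G.ends e).1, Quot.mk r (G.ends e).2)
  len := G.len
  len_pos := G.len_pos

/-- The canonical map from the vertices of `G` to those of a quotient of `G`. -/
def quotMap (G : WMG) (r : G.V → G.V → Prop) : G.V → (G.quot r).V := Quot.mk r

/-- `G_{pq}`: identify the vertices `p` and `q`. -/
noncomputable def ident2 (G : WMG) (p q : G.V) : WMG :=
  G.quot (fun x y => x = p ∧ y = q)

def ident2Map (G : WMG) (p q : G.V) : G.V → (G.ident2 p q).V :=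
  G.quotMap _

/-- `G_{pqs}`: identify the vertices `p`, `q`, `s` into a single vertex. -/
noncomputable def ident3 (G : WMG) (p q s : G.V) : WMG :=
  G.quot (fun x y => (x = p ∧ y = q) ∨ (x = p ∧ y = s))

/-- `G_{pq,st}`: identify `p` with `q` and, separately, `s` with `t`. -/
noncomputable def ident22 (G : WMG) (p q s t : G.V) : WMG :=
  G.quot (fun x y => (x = p ∧ y = q) ∨ (x = s ∧ y = t))

/-- `G_S`: identify all vertices in the set `S` into a single vertex. -/
noncomputable def identSet (G : WMG) (S : Set G.V) : WMG :=
  G.quot (fun x y => x ∈ S ∧ y ∈ S)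

/-- `G − e`: delete the edge `e` (keeping all vertices). -/
noncomputable def delete (G : WMG) (e : G.E) : WMG where
  V := G.V
  E := {f : G.E // f ≠ e}
  instV := G.instV
  instE := Fintype.ofFinite _
  ends f := G.ends f.1
  len f := G.len f.1
  len_pos f := G.len_pos f.1

/-- `e` is a bridge if `G − e` is disconnected. -/
def IsBridge (G : WMG) (e : G.E) : Prop := ¬ (G.delete e).Connected

/-- `Ḡ_e`: contract the edge `e` (identify its endpoints and delete it). -/
noncomputable def contract (G : WMG) (e : G.E) : WMG :=
  (G.delete e).quot (fun x y => x = (G.ends e).1 ∧ y = (G.ends e).2)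

def contractMap (G : WMG) (e : G.E) : G.V → (G.contract e).V := Quot.mk _

/-- Replace the length of the edge `e` by `L'`. -/
noncomputable def setLen (G : WMG) (e : G.E) (L' : ℝ) (hL' : 0 < L') : WMG where
  V := G.V
  E := G.E
  instV := G.instV
  instE := G.instE
  ends := G.ends
  len f := if f = e then L' else G.len f
  len_pos f := by
    by_cases hf : f = e
    · simpa [hf] using hL'
    · simpa [hf] using G.len_pos f

/-- `T` is (the edge set of) a spanning tree of `G`: using only edges of `T`
any two vertices are joined, and `T` has (number of vertices) − 1 edges. -/
def IsSpanningTree (G : WMG) (T : Finset G.E) : Prop :=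
  (∀ u v : G.V, Relation.ReflTransGen
      (fun x y => ∃ e ∈ T, G.ends e = (x, y) ∨ G.ends e = (y, x)) u v) ∧
  T.card = Fintype.card G.V - 1

/-- `t G`: the number of spanning trees of `G` (equals `1` for a one-vertex
graph; self-loops contribute nothing). -/
noncomputable def t (G : WMG) : ℕ := Nat.card {T : Finset G.E // G.IsSpanningTree T}

/-- `t(G_{pq})`, with the convention `t(G_{pp}) = 0`. -/
noncomputable def t2 (G : WMG) (p q : G.V) : ℕ :=
  if p = q then 0 else (G.ident2 p q).t

/-- Disjoint union of two graphs. -/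
noncomputable def disjUnion (G₁ G₂ : WMG) : WMG where
  V := G₁.V ⊕ G₂.V
  E := G₁.E ⊕ G₂.E
  instV := inferInstance
  instE := inferInstance
  ends := Sum.elim (fun e => (Sum.inl (G₁.ends e).1, Sum.inl (G₁.ends e).2))
                   (fun e => (Sum.inr (G₂.ends e).1, Sum.inr (G₂.ends e).2))
  len := Sum.elim G₁.len G₂.len
  len_pos := by
    rintro (e | e)
    · exact G₁.len_pos e
    · exact G₂.len_pos e

/-- Glue `G₁` and `G₂` along two pairs of vertices (`p₁ ↔ p₂`, `q₁ ↔ q₂`):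
the result is the graph `G = G₁ ∪ G₂` with `G₁ ∩ G₂ = {p, q}` (the two pieces
share exactly these two vertices and no edges). -/
noncomputable def glue2 (G₁ G₂ : WMG) (p₁ q₁ : G₁.V) (p₂ q₂ : G₂.V) : WMG :=
  (G₁.disjUnion G₂).quot (fun x y =>
    (x = Sum.inl p₁ ∧ y = Sum.inr p₂) ∨ (x = Sum.inl q₁ ∧ y = Sum.inr q₂))

/-- Glue `G₁` and `G₂` along three pairs of vertices: the result is the graph
`G = G₁ ∪ G₂` with `G₁ ∩ G₂ = {p, q, s}`. -/
noncomputable def glue3 (G₁ G₂ : WMG) (p₁ q₁ s₁ : G₁.V) (p₂ q₂ s₂ : G₂.V) : WMG :=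
  (G₁.disjUnion G₂).quot (fun x y =>
    (x = Sum.inl p₁ ∧ y = Sum.inr p₂) ∨ (x = Sum.inl q₁ ∧ y = Sum.inr q₂) ∨
    (x = Sum.inl s₁ ∧ y = Sum.inr s₂))

/-- Disjoint union of a finite family of graphs. -/
noncomputable def sigmaGraph {k : ℕ} (G : Fin k → WMG) : WMG where
  V := Σ i, (G i).V
  E := Σ i, (G i).E
  instV := inferInstance
  instE := inferInstance
  ends e := (⟨e.1, ((G e.1).ends e.2).1⟩, ⟨e.1, ((G e.1).ends e.2).2⟩)
  len e := (G e.1).len e.2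
  len_pos e := (G e.1).len_pos e.2

/-- Glue the family `G i` along a common pair of vertices (all the `p i` are
identified together, and all the `q i` are identified together): the result is
`G = ⋃ G_i` with `G_i ∩ G_j = {p, q}` for all `i ≠ j`. -/
noncomputable def glueFam {k : ℕ} (G : Fin k → WMG) (p q : ∀ i, (G i).V) : WMG :=
  (sigmaGraph G).quot (fun x y =>
    (∃ i j, x = ⟨i, p i⟩ ∧ y = ⟨j, p j⟩) ∨ (∃ i j, x = ⟨i, q i⟩ ∧ y = ⟨j, q j⟩))

/-- The cyclic successor on `Fin k`. -/
def finSucc {k : ℕ} (i : Fin k) : Fin k :=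
  ⟨(i.1 + 1) % k, Nat.mod_lt _ (Nat.lt_of_le_of_lt (Nat.zero_le _) i.2)⟩

/-- `CG_k`: replace the `i`-th edge of the cycle `C_k` by the graph `G i`,
identifying `t i` (of `G i`) with `s (i+1)` (of `G (i+1)`), cyclically. -/
noncomputable def cycleGlue {k : ℕ} (G : Fin k → WMG) (s t : ∀ i, (G i).V) : WMG :=
  (sigmaGraph G).quot (fun x y =>
    ∃ i, x = ⟨i, t i⟩ ∧ y = ⟨finSucc i, s (finSucc i)⟩)

/-- Join a new vertex `u` (the vertex `none`) to the vertex `p i` of `H` by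
`a i` parallel unit edges, for each `i`.  The resulting graph `G` has `H = G − u`,
and if `p` is injective with all `a i ≥ 1` then `N_G(u) = {p 1, …, p n}` with
`a i` parallel edges joining `u` to `p i`. -/
noncomputable def cone (H : WMG) {n : ℕ} (p : Fin n → H.V) (a : Fin n → ℕ) : WMG where
  V := Option H.V
  E := H.E ⊕ (Σ i : Fin n, Fin (a i))
  instV := inferInstance
  instE := inferInstance
  ends := Sum.elim (fun e => (some (H.ends e).1, some (H.ends e).2))
                   (fun e => (none, some (p e.1)))
  len := Sum.elim H.len (fun _ => 1)
  len_pos := by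
    rintro (e | e)
    · exact H.len_pos e
    · exact one_pos

/-- The path graph `P_n` on `n` vertices `0, 1, …, n-1`, unit edge lengths. -/
noncomputable def path (n : ℕ) : WMG where
  V := Fin n
  E := Fin (n - 1)
  instV := inferInstance
  instE := inferInstance
  ends i := (⟨i.1, by have := i.2; omega⟩, ⟨i.1 + 1, by have := i.2; omega⟩)
  len _ := 1
  len_pos _ := one_pos

/-- The cycle graph `C_n` on `n` vertices, unit edge lengths. -/
noncomputable def cycle (n : ℕ) : WMG where
  V := Fin n
  E := Fin n
  instV := inferInstance
  instE := inferInstance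
  ends i := (i, finSucc i)
  len _ := 1
  len_pos _ := one_pos

/-- The modified fan graph `F̄an_n`: the path `P_n` together with one new hub
vertex joined to each path vertex by `a` parallel edges. -/
noncomputable def fanGraph (n a : ℕ) : WMG :=
  (path n).cone (fun i : Fin n => i) (fun _ => a)

/-- The modified wheel graph `W̄_n`: the cycle `C_n` together with one new hub
vertex joined to each cycle vertex by `a` parallel edges. -/
noncomputable def wheelGraph (n a : ℕ) : WMG :=
  (cycle n).cone (fun i : Fin n => i) (fun _ => a)

end WMG

/-- The Morgan–Voyce polynomial `B_m(x) = ∑_{k=0}^m C(m+k+1, m−k) x^k`. -/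
noncomputable def morganVoyce (m : ℕ) (x : ℝ) : ℝ :=
  ∑ k ∈ Finset.range (m + 1), (Nat.choose (m + k + 1) (m - k) : ℝ) * x ^ k

/-- The polynomial `W_m(x) = ∑_{k=0}^m ((2m+2)/(m+2+k)) C(m+2+k, m−k) x^k`. -/
noncomputable def wheelPoly (m : ℕ) (x : ℝ) : ℝ :=
  ∑ k ∈ Finset.range (m + 1),
    ((2 * m + 2 : ℝ) / (m + 2 + k : ℝ)) * (Nat.choose (m + 2 + k) (m - k) : ℝ) * x ^ k

/-- The Lucas numbers: `L₀ = 2`, `L₁ = 1`, `L_{m+2} = L_m + L_{m+1}`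
(so `L₂ = 3`). -/
def lucas : ℕ → ℕ
  | 0 => 2
  | 1 => 1
  | n + 2 => lucas n + lucas (n + 1)



namespace Pf
open Matrix

variable {n : Type} [Fintype n]

def Penrose (A B : Matrix n n ℝ) : Prop :=
  A * B * A = A ∧ B * A * B = B ∧ (A * B)ᵀ = A * B ∧ (B * A)ᵀ = B * A

theorem penrose_unique {A B C : Matrix n n ℝ} (hB : Penrose A B) (hC : Penrose A C) : B = C := by
  obtain ⟨hB1, hB2, hB3, hB4⟩ := hB
  obtain ⟨hC1, hC2, hC3, hC4⟩ := hC
  have hab : A * B = A * C := by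
    calc A * B = (A * C * A) * B := by rw [hC1]
    _ = (A*C) * (A*B) := by simp only [Matrix.mul_assoc]
    _ = (A*C)ᵀ * (A*B)ᵀ := by rw [hC3, hB3]
    _ = ((A * B * A) * C)ᵀ := by simp [Matrix.transpose_mul, Matrix.mul_assoc]
    _ = (A * C)ᵀ := by rw [hB1]
    _ = A * C := hC3
  have hba : B * A = C * A := by
    calc B * A = B * (A * C * A) := by rw [hC1]
    _ = (B * A) * (C * A) := by simp only [Matrix.mul_assoc]
    _ = (B*A)ᵀ * (C*A)ᵀ := by rw [hB4, hC4]
    _ = (C * (A * B * A))ᵀ := by simp [Matrix.transpose_mul, Matrix.mul_assoc]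
    _ = (C * A)ᵀ := by rw [hB1]
    _ = C * A := hC4
  calc B = B * A * B := hB2.symm
  _ = C * A * B := by rw [hba]
  _ = C * (A * B) := by rw [Matrix.mul_assoc]
  _ = C * (A * C) := by rw [hab]
  _ = C * A * C := by rw [Matrix.mul_assoc]
  _ = C := hC2

theorem mpinv_eq {A B : Matrix n n ℝ} (h : Penrose A B) : A.mpinv = B := by
  have hex : ∃ B : Matrix n n ℝ,
      A * B * A = A ∧ B * A * B = B ∧ (A * B)ᵀ = A * B ∧ (B * A)ᵀ = B * A := ⟨B, h⟩
  rw [Matrix.mpinv, dif_pos hex]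
  exact penrose_unique hex.choose_spec h

/-- The candidate pseudoinverse. -/
noncomputable def pinvB (A K₀ : Matrix n n ℝ) : Matrix n n ℝ := (A + K₀)⁻¹ - K₀

/-- Abstract pseudoinverse via kernel projection. -/
structure KerProj (A K₀ : Matrix n n ℝ) : Prop where
  hA : Aᵀ = A
  hK : K₀ᵀ = K₀
  hK2 : K₀ * K₀ = K₀
  hAK : A * K₀ = 0
  hker : ∀ v : n → ℝ, (A + K₀) *ᵥ v = 0 → v = 0

namespace KerProj

variable {A K₀ : Matrix n n ℝ} (h : KerProj A K₀)
include h

theorem hKA : K₀ * A = 0 := by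
  have := congrArg Matrix.transpose h.hAK
  rwa [Matrix.transpose_mul, h.hA, h.hK, Matrix.transpose_zero] at this

theorem det_unit : IsUnit (A + K₀).det := by
  rw [isUnit_iff_ne_zero]
  intro hd
  obtain ⟨v, hv, hv0⟩ := Matrix.exists_mulVec_eq_zero_iff.mpr hd
  exact hv (h.hker v hv0)

theorem MK : (A + K₀) * K₀ = K₀ := by rw [Matrix.add_mul, h.hAK, h.hK2, zero_add]
theorem KM : K₀ * (A + K₀) = K₀ := by rw [Matrix.mul_add, h.hKA, h.hK2, zero_add]

theorem invK : (A + K₀)⁻¹ * K₀ = K₀ := by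
  have := congrArg (fun X => (A + K₀)⁻¹ * X) h.MK
  simpa [← Matrix.mul_assoc, Matrix.nonsing_inv_mul _ h.det_unit] using this.symm

theorem Kinv : K₀ * (A + K₀)⁻¹ = K₀ := by
  have := congrArg (fun X => X * (A + K₀)⁻¹) h.KM
  simpa [Matrix.mul_assoc, Matrix.mul_nonsing_inv _ h.det_unit] using this.symm

theorem AB : A * pinvB A K₀ = 1 - K₀ := by
  have hA' : A = (A + K₀) - K₀ := (add_sub_cancel_right A K₀).symm
  rw [pinvB]
  nth_rewrite 1 [hA']
  rw [Matrix.sub_mul, Matrix.mul_sub, Matrix.mul_sub,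
    Matrix.mul_nonsing_inv _ h.det_unit, h.MK, h.Kinv, h.hK2]
  abel

theorem Bsymm : (pinvB A K₀)ᵀ = pinvB A K₀ := by
  rw [pinvB, Matrix.transpose_sub, h.hK, Matrix.transpose_nonsing_inv]
  congr 2
  rw [Matrix.transpose_add, h.hA, h.hK]

theorem BA : pinvB A K₀ * A = 1 - K₀ := by
  have := congrArg Matrix.transpose h.AB
  rw [Matrix.transpose_mul, h.hA, h.Bsymm] at this
  rw [this, Matrix.transpose_sub, Matrix.transpose_one, h.hK]

theorem BK : pinvB A K₀ * K₀ = 0 := by rw [pinvB, Matrix.sub_mul, h.invK, h.hK2, sub_self]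
theorem KB : K₀ * pinvB A K₀ = 0 := by rw [pinvB, Matrix.mul_sub, h.Kinv, h.hK2, sub_self]

theorem penrose : Penrose A (pinvB A K₀) := by
  refine ⟨?_, ?_, ?_, ?_⟩
  · rw [h.AB, Matrix.sub_mul, Matrix.one_mul, h.hKA, sub_zero]
  · rw [Matrix.mul_assoc, h.AB, Matrix.mul_sub, Matrix.mul_one, h.BK, sub_zero]
  · rw [h.AB, Matrix.transpose_sub, Matrix.transpose_one, h.hK]
  · rw [h.BA, Matrix.transpose_sub, Matrix.transpose_one, h.hK]

theorem mpinv_eq' : A.mpinv = pinvB A K₀ := mpinv_eq h.penrose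

end KerProj
end Pf


namespace Pf
open Matrix WMG

section Helpers
variable {n : Type} [Fintype n]

theorem sum_mulVec' {ι : Type*} (s : Finset ι) (A : ι → Matrix n n ℝ) (v : n → ℝ) :
    (∑ i ∈ s, A i) *ᵥ v = ∑ i ∈ s, (A i *ᵥ v) := by
  classical
  induction s using Finset.induction with
  | empty => simp [Matrix.zero_mulVec]
  | insert _ _ h ih => simp [Finset.sum_insert h, Matrix.add_mulVec, ih]

theorem mul_vecMulVec (A : Matrix n n ℝ) (x y : n → ℝ) :
    A * vecMulVec x y = vecMulVec (A *ᵥ x) y := by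
  ext i j
  simp [Matrix.mul_apply, vecMulVec_apply, Matrix.mulVec, dotProduct,
    Finset.sum_mul, mul_assoc]

theorem vecMulVec_mul (A : Matrix n n ℝ) (x y : n → ℝ) :
    vecMulVec x y * A = vecMulVec x (y ᵥ* A) := by
  ext i j
  simp [Matrix.mul_apply, vecMulVec_apply, Matrix.vecMul, dotProduct,
    Finset.mul_sum, mul_assoc]

theorem vecMulVec_mul_vecMulVec (x y z w : n → ℝ) :
    vecMulVec x y * vecMulVec z w = (y ⬝ᵥ z) • vecMulVec x w := by
  ext i j
  simp [Matrix.mul_apply, vecMulVec_apply, dotProduct, Finset.sum_mul,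
    Finset.mul_sum]
  exact Finset.sum_congr rfl fun k _ => by ring

theorem vecMulVec_transpose' (x y : n → ℝ) : (vecMulVec x y)ᵀ = vecMulVec y x := by
  ext i j; simp [vecMulVec_apply, mul_comm]

theorem vecMulVec_mulVec' (x y v : n → ℝ) :
    vecMulVec x y *ᵥ v = (y ⬝ᵥ v) • x := by
  ext i
  simp [vecMulVec_apply, Matrix.mulVec, dotProduct, Finset.mul_sum, mul_assoc,
    mul_comm]
  exact Finset.sum_congr rfl fun k _ => by ring

end Helpers
end Pf

set_option linter.unusedSectionVars false

namespace Pf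
open Matrix WMG

/-- The incidence vector of an edge. -/
noncomputable def dvec (G : WMG) (e : G.E) : G.V → ℝ :=
  fun u => ind u (G.ends e).1 - ind u (G.ends e).2

theorem lap_eq_sum (G : WMG) :
    G.lap = ∑ e : G.E, (G.len e)⁻¹ • vecMulVec (dvec G e) (dvec G e) := rfl

theorem dvec_dot (G : WMG) (e : G.E) (v : G.V → ℝ) :
    dvec G e ⬝ᵥ v = v (G.ends e).1 - v (G.ends e).2 := by
  simp [dvec, ind, dotProduct, sub_mul, ite_mul, Finset.sum_sub_distrib]

theorem dot_dvec (G : WMG) (e : G.E) (v : G.V → ℝ) :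
    v ⬝ᵥ dvec G e = v (G.ends e).1 - v (G.ends e).2 := by
  rw [dotProduct_comm, dvec_dot]

theorem mulVec_dvec (G : WMG) (e : G.E) (M : Matrix G.V G.V ℝ) (u : G.V) :
    (M *ᵥ dvec G e) u = M u (G.ends e).1 - M u (G.ends e).2 := by
  show (M u) ⬝ᵥ dvec G e = _
  rw [dot_dvec]

theorem lap_mulVec (G : WMG) (v : G.V → ℝ) :
    G.lap *ᵥ v = ∑ e : G.E, ((G.len e)⁻¹ * (v (G.ends e).1 - v (G.ends e).2)) • dvec G e := by
  rw [lap_eq_sum, sum_mulVec']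
  refine Finset.sum_congr rfl fun f _ => ?_
  rw [Matrix.smul_mulVec, vecMulVec_mulVec', dvec_dot, smul_smul]

theorem lap_mulVec_zero (G : WMG) (v : G.V → ℝ)
    (h : ∀ e : G.E, v (G.ends e).1 = v (G.ends e).2) : G.lap *ᵥ v = 0 := by
  rw [lap_mulVec]
  refine Finset.sum_eq_zero fun f _ => ?_
  rw [h f, sub_self, mul_zero, zero_smul]

theorem dotProduct_sum' {n ι : Type} [Fintype n] (v : n → ℝ) (s : Finset ι) (f : ι → n → ℝ) :
    v ⬝ᵥ (∑ i ∈ s, f i) = ∑ i ∈ s, v ⬝ᵥ f i := by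
  classical
  induction s using Finset.induction with
  | empty => simp
  | insert _ _ h ih => simp [Finset.sum_insert h, dotProduct_add, ih]

theorem lap_quad (G : WMG) (v : G.V → ℝ) :
    v ⬝ᵥ (G.lap *ᵥ v) = ∑ e : G.E, (G.len e)⁻¹ * (v (G.ends e).1 - v (G.ends e).2) ^ 2 := by
  rw [lap_mulVec, dotProduct_sum']
  refine Finset.sum_congr rfl fun f _ => ?_
  rw [dotProduct_smul, dot_dvec]
  simp [smul_eq_mul]; ring

theorem lap_quad_nonneg (G : WMG) (v : G.V → ℝ) : 0 ≤ v ⬝ᵥ (G.lap *ᵥ v) := by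
  rw [lap_quad]
  refine Finset.sum_nonneg fun f _ => ?_
  have := G.len_pos f
  positivity

theorem lap_transpose (G : WMG) : G.lapᵀ = G.lap := by
  rw [lap_eq_sum, Matrix.transpose_sum]
  refine Finset.sum_congr rfl fun f _ => ?_
  rw [Matrix.transpose_smul, vecMulVec_transpose']

theorem lap_quad_zero (G : WMG) (v : G.V → ℝ)
    (h : v ⬝ᵥ (G.lap *ᵥ v) = 0) (f : G.E) : v (G.ends f).1 = v (G.ends f).2 := by
  rw [lap_quad] at h
  have h0 : ∀ e ∈ Finset.univ, (0:ℝ) ≤ (G.len e)⁻¹ * (v (G.ends e).1 - v (G.ends e).2) ^ 2 := by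
    intro e _
    have := G.len_pos e
    positivity
  have := (Finset.sum_eq_zero_iff_of_nonneg h0).mp h f (Finset.mem_univ f)
  have hl : (G.len f)⁻¹ ≠ 0 := by
    have := G.len_pos f; positivity
  have := (mul_eq_zero.mp this).resolve_left hl
  have := pow_eq_zero_iff (n := 2) (by norm_num) |>.mp this
  linarith [this]

/-- A function which is constant along edges is constant on reachability classes. -/
theorem reach_const (G : WMG) (v : G.V → ℝ)
    (h : ∀ e : G.E, v (G.ends e).1 = v (G.ends e).2) {u w : G.V} (hr : G.Reach u w) :
    v u = v w := by
  induction hr with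
  | refl => rfl
  | tail _ hadj ih =>
      obtain ⟨f, hf | hf⟩ := hadj
      · have := h f; rw [hf] at this; rw [ih]; exact this
      · have := h f; rw [hf] at this; rw [ih]; exact this.symm

theorem reach_symm (G : WMG) {u w : G.V} (h : G.Reach u w) : G.Reach w u := by
  have : Symmetric G.Adj := by
    rintro a b ⟨f, hf | hf⟩
    exacts [⟨f, Or.inr hf⟩, ⟨f, Or.inl hf⟩]
  haveI : Std.Symm G.Adj := ⟨this⟩
  exact Std.Symm.symm (r := Relation.ReflTransGen G.Adj) _ _ h

end Pf

namespace Pf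
open Matrix WMG

theorem sum_univ_inst {X M : Type*} [AddCommMonoid M] (i1 i2 : Fintype X) (f : X → M) :
    @Finset.sum X M _ (@Finset.univ X i1) f = @Finset.sum X M _ (@Finset.univ X i2) f := by
  obtain rfl := Subsingleton.elim i1 i2
  rfl

/-- The Laplacian of `G - e`, as a matrix indexed by the vertices of `G`. -/
noncomputable def dlap (G : WMG) (e : G.E) : Matrix G.V G.V ℝ := (G.delete e).lap

theorem lap_delete (G : WMG) (e : G.E) :
    dlap G e = ∑ f ∈ Finset.univ.erase e, (G.len f)⁻¹ • vecMulVec (dvec G f) (dvec G f) := by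
  have h1 : dlap G e
      = ∑ f : {f : G.E // f ≠ e}, (G.len f.1)⁻¹ • vecMulVec (dvec G f.1) (dvec G f.1) :=
    sum_univ_inst _ _ _
  rw [h1]
  rw [← Finset.sum_subtype (Finset.univ.erase e)
    (fun x => by simp [Finset.mem_erase]) (fun f => (G.len f)⁻¹ • vecMulVec (dvec G f) (dvec G f))]

theorem lap_split (G : WMG) (e : G.E) :
    G.lap = dlap G e + (G.len e)⁻¹ • vecMulVec (dvec G e) (dvec G e) := by
  rw [lap_delete, lap_eq_sum G]
  rw [Finset.sum_erase_add _ _ (Finset.mem_univ e)]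

theorem lap_setLen (G : WMG) (e : G.E) (L' : ℝ) (hL' : 0 < L') :
    (G.setLen e L' hL').lap = dlap G e + L'⁻¹ • vecMulVec (dvec G e) (dvec G e) := by
  have h1 : (G.setLen e L' hL').lap
      = ∑ f : G.E, (if f = e then L' else G.len f)⁻¹ • vecMulVec (dvec G f) (dvec G f) :=
    sum_univ_inst _ _ _
  rw [h1, lap_delete, ← Finset.sum_erase_add _ _ (Finset.mem_univ e)]
  simp only [if_pos rfl]
  congr 1
  refine Finset.sum_congr rfl fun f hf => ?_
  rw [if_neg (Finset.mem_erase.mp hf).1]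

/-- Every vertex of a connected graph reaches, in `G - e`, one of the two
endpoints of `e`. -/
theorem reach_delete_total (G : WMG) (hG : G.Connected) (e : G.E) (v : G.V) :
    (G.delete e).Reach v (G.ends e).1 ∨ (G.delete e).Reach v (G.ends e).2 := by
  have h := hG.2 v (G.ends e).1
  induction h using Relation.ReflTransGen.head_induction_on with
  | refl => exact Or.inl Relation.ReflTransGen.refl
  | head hadj _ ih =>
      rename_i a c _
      obtain ⟨f, hf⟩ := hadj
      by_cases hfe : f = e
      · subst hfe
        rcases hf with hf | hf
        · exact Or.inl (by rw [hf]; exact Relation.ReflTransGen.refl)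
        · exact Or.inr (by rw [hf]; exact Relation.ReflTransGen.refl)
      · have hadj' : (G.delete e).Adj a c := ⟨⟨f, hfe⟩, hf⟩
        rcases ih with ih | ih
        · exact Or.inl (Relation.ReflTransGen.head hadj' ih)
        · exact Or.inr (Relation.ReflTransGen.head hadj' ih)

theorem bridge_not_reach (G : WMG) (hG : G.Connected) (e : G.E) (hb : G.IsBridge e) :
    ¬ (G.delete e).Reach (G.ends e).1 (G.ends e).2 := by
  intro hr
  apply hb
  refine ⟨hG.1, fun u v => ?_⟩
  have hu := reach_delete_total G hG e u
  have hv := reach_delete_total G hG e v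
  have h21 : (G.delete e).Reach (G.ends e).2 (G.ends e).1 := reach_symm _ hr
  have hu1 : (G.delete e).Reach u (G.ends e).1 := hu.elim id (fun h => h.trans h21)
  have hv1 : (G.delete e).Reach v (G.ends e).1 := hv.elim id (fun h => h.trans h21)
  exact hu1.trans (reach_symm _ hv1)

end Pf

namespace Pf
open Matrix WMG

theorem vecMul_vecMulVec {n : Type} [Fintype n] (y z w : n → ℝ) :
    y ᵥ* vecMulVec z w = (y ⬝ᵥ z) • w := by
  ext i
  simp [vecMulVec_apply, Matrix.vecMul, dotProduct, Finset.sum_mul]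
  exact Finset.sum_congr rfl fun k _ => by ring

theorem vecMul_symm {n : Type} [Fintype n] {P : Matrix n n ℝ} (hP : Pᵀ = P) (x : n → ℝ) :
    x ᵥ* P = P *ᵥ x := by
  conv_lhs => rw [← hP]
  rw [Matrix.vecMul_transpose]

/-- The all-ones vector. -/
noncomputable def onev (G : WMG) : G.V → ℝ := fun _ => 1

/-- The all-ones direction projection. -/
noncomputable def Kmat (G : WMG) : Matrix G.V G.V ℝ :=
  (Fintype.card G.V : ℝ)⁻¹ • vecMulVec (onev G) (onev G)

noncomputable def Pmat (G : WMG) (e : G.E) : Matrix G.V G.V ℝ := pinvB (dlap G e) (Kmat G)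

noncomputable def gvec (G : WMG) (e : G.E) : G.V → ℝ := Pmat G e *ᵥ dvec G e

noncomputable def Rres (G : WMG) (e : G.E) : ℝ := dvec G e ⬝ᵥ gvec G e

section NB

variable (G : WMG) (e : G.E)

theorem one_dot_one : onev G ⬝ᵥ onev G = (Fintype.card G.V : ℝ) := by
  simp [dotProduct, onev]

theorem Kmat_transpose : (Kmat G)ᵀ = Kmat G := by
  rw [Kmat, Matrix.transpose_smul, vecMulVec_transpose']

theorem one_dot_dvec : onev G ⬝ᵥ dvec G e = 0 := by
  rw [dotProduct_comm, dvec_dot]; simp [onev]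

theorem dlap_transpose : (dlap G e)ᵀ = dlap G e := lap_transpose (G.delete e)

theorem dlap_mulVec_zero (v : G.V → ℝ)
    (h : ∀ f : (G.delete e).E, v ((G.delete e).ends f).1 = v ((G.delete e).ends f).2) :
    dlap G e *ᵥ v = 0 := lap_mulVec_zero (G.delete e) v h

theorem dlap_quad_nonneg (v : G.V → ℝ) : 0 ≤ v ⬝ᵥ (dlap G e *ᵥ v) :=
  lap_quad_nonneg (G.delete e) v

theorem dlap_mulVec_one : dlap G e *ᵥ onev G = 0 :=
  dlap_mulVec_zero G e _ (fun _ => rfl)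

theorem cardV_ne (hne : Nonempty G.V) : (Fintype.card G.V : ℝ) ≠ 0 := by
  have := Fintype.card_pos_iff.mpr hne
  positivity

theorem Kmat_idem (hne : Nonempty G.V) : Kmat G * Kmat G = Kmat G := by
  rw [Kmat, smul_mul_assoc, mul_smul_comm, vecMulVec_mul_vecMulVec, one_dot_one, smul_smul,
    smul_smul]
  rw [inv_mul_cancel_right₀ (cardV_ne G hne)]

theorem Kmat_mulVec_one (hne : Nonempty G.V) : Kmat G *ᵥ onev G = onev G := by
  rw [Kmat, Matrix.smul_mulVec, vecMulVec_mulVec', one_dot_one, smul_smul,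
    inv_mul_cancel₀ (cardV_ne G hne), one_smul]

theorem dlap_mul_Kmat : dlap G e * Kmat G = 0 := by
  rw [Kmat, mul_smul_comm, mul_vecMulVec, dlap_mulVec_one]
  ext i j; simp [vecMulVec_apply]

theorem kerProj_nb (hne : Nonempty G.V) (hD : (G.delete e).Connected) :
    KerProj (dlap G e) (Kmat G) := by
  refine ⟨dlap_transpose G e, Kmat_transpose G, Kmat_idem G hne, dlap_mul_Kmat G e, ?_⟩
  intro v hv
  have h0 : v ⬝ᵥ ((dlap G e + Kmat G) *ᵥ v) = 0 := by rw [hv]; simp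
  rw [Matrix.add_mulVec, dotProduct_add] at h0
  have hKform : v ⬝ᵥ (Kmat G *ᵥ v)
      = (Fintype.card G.V : ℝ)⁻¹ * (onev G ⬝ᵥ v) ^ 2 := by
    rw [Kmat, Matrix.smul_mulVec, vecMulVec_mulVec', dotProduct_smul,
      dotProduct_smul]
    rw [dotProduct_comm v (onev G)]
    simp [smul_eq_mul]; ring
  have hq1 : 0 ≤ v ⬝ᵥ (dlap G e *ᵥ v) := dlap_quad_nonneg G e v
  have hq2 : 0 ≤ v ⬝ᵥ (Kmat G *ᵥ v) := by
    rw [hKform]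
    have := cardV_ne G hne
    positivity
  have hlz : v ⬝ᵥ (dlap G e *ᵥ v) = 0 := by linarith
  have hKz : v ⬝ᵥ (Kmat G *ᵥ v) = 0 := by linarith
  have hconst : ∀ f : (G.delete e).E,
      v ((G.delete e).ends f).1 = v ((G.delete e).ends f).2 :=
    fun f => lap_quad_zero (G.delete e) v hlz f
  have hreach : ∀ u w : G.V, v u = v w := by
    intro u w
    exact reach_const (G.delete e) v hconst (hD.2 u w)
  have hsum : onev G ⬝ᵥ v = 0 := by
    rw [hKform] at hKz
    have hc := cardV_ne G hne
    rcases mul_eq_zero.mp hKz with h | h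
    · exact absurd h (inv_ne_zero hc)
    · exact pow_eq_zero_iff (n := 2) (by norm_num) |>.mp h
  obtain ⟨u₀⟩ := hne
  have hvall : ∀ u, v u = v u₀ := fun u => hreach u u₀
  have hsum2 : onev G ⬝ᵥ v = (Fintype.card G.V : ℝ) * v u₀ := by
    simp only [dotProduct, onev, one_mul]
    rw [Finset.sum_congr rfl (fun u _ => hvall u), Finset.sum_const]
    simp [mul_comm]
  rw [hsum2] at hsum
  have hv0 : v u₀ = 0 := by
    rcases mul_eq_zero.mp hsum with h | h
    · exact absurd h (cardV_ne G ⟨u₀⟩)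
    · exact h
  funext u
  rw [hvall u, hv0]; rfl

end NB
end Pf

namespace Pf
open Matrix WMG

theorem penrose_of {n : Type} [Fintype n] {A B K : Matrix n n ℝ} (hK : Kᵀ = K)
    (hAB : A * B = 1 - K) (hBA : B * A = 1 - K) (hKA : K * A = 0) (hBK : B * K = 0) :
    Penrose A B := by
  refine ⟨?_, ?_, ?_, ?_⟩
  · rw [hAB, Matrix.sub_mul, Matrix.one_mul, hKA, sub_zero]
  · rw [Matrix.mul_assoc, hAB, Matrix.mul_sub, Matrix.mul_one, hBK, sub_zero]
  · rw [hAB, Matrix.transpose_sub, Matrix.transpose_one, hK]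
  · rw [hBA, Matrix.transpose_sub, Matrix.transpose_one, hK]

theorem vecMul_smul' {n : Type} [Fintype n] (y : n → ℝ) (a : ℝ) (M : Matrix n n ℝ) :
    y ᵥ* (a • M) = a • (y ᵥ* M) := by
  ext i
  simp [Matrix.vecMul, dotProduct, Finset.mul_sum]
  exact Finset.sum_congr rfl fun k _ => by ring

section NB2

variable (G : WMG) (e : G.E) (hne : Nonempty G.V) (hD : (G.delete e).Connected)
include hne hD

theorem Pmat_transpose : (Pmat G e)ᵀ = Pmat G e := (kerProj_nb G e hne hD).Bsymm

theorem Pmat_mulVec_one : Pmat G e *ᵥ onev G = 0 := by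
  have h1 : Pmat G e * Kmat G = 0 := (kerProj_nb G e hne hD).BK
  have h2 := Kmat_mulVec_one G hne
  calc Pmat G e *ᵥ onev G = Pmat G e *ᵥ (Kmat G *ᵥ onev G) := by rw [h2]
  _ = (Pmat G e * Kmat G) *ᵥ onev G := by rw [Matrix.mulVec_mulVec]
  _ = 0 := by rw [h1]; exact Matrix.zero_mulVec _

omit hne hD in
theorem Kmat_mulVec_dvec : Kmat G *ᵥ dvec G e = 0 := by
  rw [Kmat, Matrix.smul_mulVec, vecMulVec_mulVec', one_dot_dvec]
  simp

theorem dlap_mulVec_gvec : dlap G e *ᵥ gvec G e = dvec G e := by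
  have hAB : dlap G e * Pmat G e = 1 - Kmat G := (kerProj_nb G e hne hD).AB
  calc dlap G e *ᵥ gvec G e = (dlap G e * Pmat G e) *ᵥ dvec G e := by
        rw [gvec, Matrix.mulVec_mulVec]
  _ = dvec G e - Kmat G *ᵥ dvec G e := by
        rw [hAB, Matrix.sub_mulVec, Matrix.one_mulVec]
  _ = dvec G e := by rw [Kmat_mulVec_dvec]; exact sub_zero _

theorem Rres_nonneg : 0 ≤ Rres G e := by
  have h := dlap_quad_nonneg G e (gvec G e)
  rw [dlap_mulVec_gvec G e hne hD] at h
  rw [Rres, dotProduct_comm]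
  exact h

theorem one_dot_gvec : onev G ⬝ᵥ gvec G e = 0 := by
  rw [gvec, Matrix.dotProduct_mulVec, vecMul_symm (Pmat_transpose G e hne hD),
    Pmat_mulVec_one G e hne hD]
  simp

theorem gvec_vecMul_Kmat : gvec G e ᵥ* Kmat G = 0 := by
  rw [Kmat, vecMul_smul', vecMul_vecMulVec,
    dotProduct_comm, one_dot_gvec G e hne hD]
  simp

omit hne hD in
theorem dvec_vecMul_Kmat : dvec G e ᵥ* Kmat G = 0 := by
  rw [Kmat, vecMul_smul', vecMul_vecMulVec, dotProduct_comm, one_dot_dvec]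
  simp

theorem penrose_pert (L : ℝ) (hL : 0 < L) :
    Penrose (dlap G e + L⁻¹ • vecMulVec (dvec G e) (dvec G e))
      (Pmat G e - (L + Rres G e)⁻¹ • vecMulVec (gvec G e) (gvec G e)) := by
  have hkp := kerProj_nb G e hne hD
  have hLR : L + Rres G e ≠ 0 := by
    have := Rres_nonneg G e hne hD; positivity
  have hL0 : L ≠ 0 := ne_of_gt hL
  set A := dlap G e with hA
  set x := dvec G e with hx
  set g := gvec G e with hg
  set R := Rres G e with hR
  set K := Kmat G with hK
  have hABP : A * Pmat G e = 1 - K := hkp.AB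
  have hBKP : Pmat G e * K = 0 := hkp.BK
  have hxg : x ⬝ᵥ g = R := rfl
  have hAg : A *ᵥ g = x := dlap_mulVec_gvec G e hne hD
  have hXP : vecMulVec x x * Pmat G e = vecMulVec x g := by
    rw [vecMulVec_mul, vecMul_symm (Pmat_transpose G e hne hD)]
    rfl
  have hsc : L⁻¹ - (L + R)⁻¹ - L⁻¹ * ((L + R)⁻¹ * R) = 0 := by
    field_simp
    ring
  have hAB : (A + L⁻¹ • vecMulVec x x) * (Pmat G e - (L + R)⁻¹ • vecMulVec g g)
      = 1 - K := by
    have hexp : (A + L⁻¹ • vecMulVec x x) * (Pmat G e - (L + R)⁻¹ • vecMulVec g g)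
        = (1 - K) + (L⁻¹ - (L + R)⁻¹ - L⁻¹ * ((L + R)⁻¹ * R)) • vecMulVec x g := by
      rw [Matrix.add_mul, Matrix.mul_sub, Matrix.mul_sub, smul_mul_assoc, smul_mul_assoc,
        mul_smul_comm, mul_smul_comm, hABP, mul_vecMulVec, hAg, hXP,
        vecMulVec_mul_vecMulVec, hxg]
      module
    rw [hexp, hsc, zero_smul, add_zero]
  have hLGt : (A + L⁻¹ • vecMulVec x x)ᵀ = A + L⁻¹ • vecMulVec x x := by
    rw [Matrix.transpose_add, Matrix.transpose_smul, vecMulVec_transpose', hA, dlap_transpose]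
  have hBGt : (Pmat G e - (L + R)⁻¹ • vecMulVec g g)ᵀ
      = Pmat G e - (L + R)⁻¹ • vecMulVec g g := by
    rw [Matrix.transpose_sub, Matrix.transpose_smul, vecMulVec_transpose',
      Pmat_transpose G e hne hD]
  have hBA : (Pmat G e - (L + R)⁻¹ • vecMulVec g g) * (A + L⁻¹ • vecMulVec x x)
      = 1 - K := by
    have h2 := congrArg Matrix.transpose hAB
    rw [Matrix.transpose_mul, hLGt, hBGt] at h2
    rw [h2, Matrix.transpose_sub, Matrix.transpose_one, hK, Kmat_transpose]
  have hLK : (A + L⁻¹ • vecMulVec x x) * K = 0 := by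
    have hvK : dvec G e ᵥ* Kmat G = 0 := dvec_vecMul_Kmat G e
    rw [Matrix.add_mul, hA, hK, dlap_mul_Kmat, smul_mul_assoc, vecMulVec_mul, hx, hvK]
    ext i j; simp [vecMulVec_apply]
  have hKA : K * (A + L⁻¹ • vecMulVec x x) = 0 := by
    have h2 := congrArg Matrix.transpose hLK
    rw [Matrix.transpose_mul, hLGt, hK, Kmat_transpose, Matrix.transpose_zero] at h2
    rw [hK]
    exact h2
  have hBK : (Pmat G e - (L + R)⁻¹ • vecMulVec g g) * K = 0 := by
    rw [Matrix.sub_mul, hBKP, smul_mul_assoc, vecMulVec_mul, hK,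
      gvec_vecMul_Kmat G e hne hD]
    ext i j; simp [vecMulVec_apply]
  exact penrose_of (by rw [hK]; exact Kmat_transpose G) hAB hBA hKA hBK

theorem mpinv_pert (L : ℝ) (hL : 0 < L) :
    Matrix.mpinv (dlap G e + L⁻¹ • vecMulVec (dvec G e) (dvec G e))
      = Pmat G e - (L + Rres G e)⁻¹ • vecMulVec (gvec G e) (gvec G e) :=
  mpinv_eq (penrose_pert G e hne hD L hL)

end NB2
end Pf

namespace Pf
open Matrix WMG

theorem main_nb (G : WMG) (hG : G.Connected) (e : G.E) (L' : ℝ) (hL' : 0 < L')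
    (s t : G.V) (hnb : ¬ G.IsBridge e) :
    G.res s t = (G.setLen e L' hL').res s t +
      ((G.len e - L') /
        ((G.len e + (G.delete e).res (G.ends e).1 (G.ends e).2) *
         (L' + (G.delete e).res (G.ends e).1 (G.ends e).2))) *
        ((G.delete e).volt (G.ends e).1 (G.ends e).2 s -
         (G.delete e).volt (G.ends e).1 (G.ends e).2 t) ^ 2 := by
  have hD : (G.delete e).Connected := not_not.mp hnb
  have hne : Nonempty G.V := hG.1
  have hL := G.len_pos e
  have hR0 := Rres_nonneg G e hne hD
  have hPm : (G.delete e).lap.mpinv = Pmat G e := (kerProj_nb G e hne hD).mpinv_eq'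
  have hmpG : G.lap.mpinv
      = Pmat G e - (G.len e + Rres G e)⁻¹ • vecMulVec (gvec G e) (gvec G e) := by
    rw [lap_split G e]
    exact mpinv_pert G e hne hD (G.len e) hL
  have hmpS : (G.setLen e L' hL').lap.mpinv
      = Pmat G e - (L' + Rres G e)⁻¹ • vecMulVec (gvec G e) (gvec G e) := by
    rw [lap_setLen G e L' hL']
    exact mpinv_pert G e hne hD L' hL'
  have hsym : ∀ u v, Pmat G e u v = Pmat G e v u := fun u v => by
    conv_lhs => rw [← Pmat_transpose G e hne hD]
    rfl
  have hgdef : ∀ u, gvec G e u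
      = Pmat G e u (G.ends e).1 - Pmat G e u (G.ends e).2 :=
    fun u => mulVec_dvec G e (Pmat G e) u
  have hres : (G.delete e).res (G.ends e).1 (G.ends e).2 = Rres G e := by
    simp only [WMG.res]
    rw [hPm]
    have hRd : Rres G e = gvec G e (G.ends e).1 - gvec G e (G.ends e).2 :=
      dvec_dot G e (gvec G e)
    rw [hRd, hgdef, hgdef, hsym (G.ends e).2 (G.ends e).1]
    ring
  rw [hres]
  simp only [WMG.res, WMG.volt]
  rw [hmpG, hmpS, hPm]
  simp only [Matrix.sub_apply, Matrix.smul_apply, vecMulVec_apply, smul_eq_mul]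
  rw [hgdef s, hgdef t]
  rw [hsym (G.ends e).1 s, hsym (G.ends e).2 s, hsym (G.ends e).1 t, hsym (G.ends e).2 t]
  have hne1 : G.len e + Rres G e ≠ 0 := by positivity
  have hne2 : L' + Rres G e ≠ 0 := by positivity
  field_simp
  ring

end Pf

namespace Pf
open Matrix WMG

section Bridge

variable (G : WMG) (e : G.E)

/-- The side of the bridge containing the first endpoint. -/
def Sset (u : G.V) : Prop := (G.delete e).Reach u (G.ends e).1

noncomputable def oneS : G.V → ℝ := fun u => if Sset G e u then 1 else 0
noncomputable def oneT : G.V → ℝ := fun u => if Sset G e u then 0 else 1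

noncomputable def aCard : ℝ := (Finset.univ.filter (fun u => Sset G e u)).card
noncomputable def bCard : ℝ := (Finset.univ.filter (fun u => ¬ Sset G e u)).card

noncomputable def K0 : Matrix G.V G.V ℝ :=
  (aCard G e)⁻¹ • vecMulVec (oneS G e) (oneS G e)
    + (bCard G e)⁻¹ • vecMulVec (oneT G e) (oneT G e)

noncomputable def wvec : G.V → ℝ :=
  (bCard G e / (aCard G e + bCard G e)) • oneS G e
    - (aCard G e / (aCard G e + bCard G e)) • oneT G e

noncomputable def zvec : G.V → ℝ := (aCard G e)⁻¹ • oneS G e - (bCard G e)⁻¹ • oneT G e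

noncomputable def P0 : Matrix G.V G.V ℝ := pinvB (dlap G e) (K0 G e)
noncomputable def g0 : G.V → ℝ := P0 G e *ᵥ dvec G e
noncomputable def R0 : ℝ := dvec G e ⬝ᵥ g0 G e

theorem oneS_dot (v : G.V → ℝ) :
    oneS G e ⬝ᵥ v = ∑ u ∈ Finset.univ.filter (fun u => Sset G e u), v u := by
  rw [dotProduct, Finset.sum_filter]
  refine Finset.sum_congr rfl fun u _ => ?_
  by_cases h : Sset G e u <;> simp [oneS, h]

theorem oneT_dot (v : G.V → ℝ) :
    oneT G e ⬝ᵥ v = ∑ u ∈ Finset.univ.filter (fun u => ¬ Sset G e u), v u := by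
  rw [dotProduct, Finset.sum_filter]
  refine Finset.sum_congr rfl fun u _ => ?_
  by_cases h : Sset G e u <;> simp [oneT, h]

theorem oneS_dot_oneS : oneS G e ⬝ᵥ oneS G e = aCard G e := by
  rw [oneS_dot, aCard]
  rw [Finset.sum_congr rfl (fun u hu => show oneS G e u = 1 by
    simp [oneS, (Finset.mem_filter.mp hu).2])]
  simp

theorem oneT_dot_oneT : oneT G e ⬝ᵥ oneT G e = bCard G e := by
  rw [oneT_dot, bCard]
  rw [Finset.sum_congr rfl (fun u hu => show oneT G e u = 1 by
    simp [oneT, (Finset.mem_filter.mp hu).2])]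
  simp

theorem oneS_dot_oneT : oneS G e ⬝ᵥ oneT G e = 0 := by
  rw [oneS_dot]
  refine Finset.sum_eq_zero fun u hu => ?_
  simp [oneT, (Finset.mem_filter.mp hu).2]

theorem oneT_dot_oneS : oneT G e ⬝ᵥ oneS G e = 0 := by
  rw [oneT_dot]
  refine Finset.sum_eq_zero fun u hu => ?_
  simp [oneS, (Finset.mem_filter.mp hu).2]

theorem oneS_add_oneT : oneS G e + oneT G e = onev G := by
  funext u
  by_cases h : Sset G e u <;> simp [oneS, oneT, onev, h]

theorem hSp : Sset G e (G.ends e).1 := Relation.ReflTransGen.refl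

theorem hSq (hG : G.Connected) (hb : G.IsBridge e) : ¬ Sset G e (G.ends e).2 := by
  intro h
  exact bridge_not_reach G hG e hb (reach_symm _ h)

theorem aCard_pos : 0 < aCard G e := by
  rw [aCard]
  have : (G.ends e).1 ∈ Finset.univ.filter (fun u => Sset G e u) := by
    simp [hSp]
  have := Finset.card_pos.mpr ⟨_, this⟩
  exact_mod_cast this

theorem bCard_pos (hG : G.Connected) (hb : G.IsBridge e) : 0 < bCard G e := by
  rw [bCard]
  have : (G.ends e).2 ∈ Finset.univ.filter (fun u => ¬ Sset G e u) := by
    simp [hSq G e hG hb]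
  have := Finset.card_pos.mpr ⟨_, this⟩
  exact_mod_cast this

theorem card_eq_ab : aCard G e + bCard G e = (Fintype.card G.V : ℝ) := by
  rw [aCard, bCard]
  rw [← Nat.cast_add]
  congr 1
  have := Finset.card_filter_add_card_filter_not (s := (Finset.univ : Finset G.V)) (p := fun u => Sset G e u)
  convert this using 2
  exact Finset.card_univ.symm

theorem sset_edge (f : (G.delete e).E) :
    Sset G e ((G.delete e).ends f).1 ↔ Sset G e ((G.delete e).ends f).2 := by
  have hadj : (G.delete e).Adj ((G.delete e).ends f).1 ((G.delete e).ends f).2 :=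
    ⟨f, Or.inl rfl⟩
  constructor
  · intro h
    exact Relation.ReflTransGen.head (by exact ⟨f, Or.inr rfl⟩) h
  · intro h
    exact Relation.ReflTransGen.head hadj h

theorem oneS_edge (f : (G.delete e).E) :
    oneS G e ((G.delete e).ends f).1 = oneS G e ((G.delete e).ends f).2 := by
  by_cases h : Sset G e ((G.delete e).ends f).1
  · simp [oneS, h, (sset_edge G e f).mp h]
  · have h2 : ¬ Sset G e ((G.delete e).ends f).2 := fun hc => h ((sset_edge G e f).mpr hc)
    simp [oneS, h, h2]

theorem oneT_edge (f : (G.delete e).E) :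
    oneT G e ((G.delete e).ends f).1 = oneT G e ((G.delete e).ends f).2 := by
  by_cases h : Sset G e ((G.delete e).ends f).1
  · simp [oneT, h, (sset_edge G e f).mp h]
  · have h2 : ¬ Sset G e ((G.delete e).ends f).2 := fun hc => h ((sset_edge G e f).mpr hc)
    simp [oneT, h, h2]

theorem dlap_mulVec_oneS : dlap G e *ᵥ oneS G e = 0 :=
  dlap_mulVec_zero G e _ (oneS_edge G e)

theorem dlap_mulVec_oneT : dlap G e *ᵥ oneT G e = 0 :=
  dlap_mulVec_zero G e _ (oneT_edge G e)

end Bridge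
end Pf

namespace Pf
open Matrix WMG

section Bridge2

variable (G : WMG) (e : G.E) (hG : G.Connected) (hb : G.IsBridge e)

theorem K0_transpose : (K0 G e)ᵀ = K0 G e := by
  rw [K0, Matrix.transpose_add, Matrix.transpose_smul, Matrix.transpose_smul,
    vecMulVec_transpose', vecMulVec_transpose']

include hG hb

theorem aCard_ne : aCard G e ≠ 0 := ne_of_gt (aCard_pos G e)
theorem bCard_ne : bCard G e ≠ 0 := ne_of_gt (bCard_pos G e hG hb)

theorem K0_idem : K0 G e * K0 G e = K0 G e := by
  rw [K0, Matrix.add_mul, Matrix.mul_add, Matrix.mul_add,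
    smul_mul_assoc, smul_mul_assoc, smul_mul_assoc, smul_mul_assoc,
    mul_smul_comm, mul_smul_comm, mul_smul_comm, mul_smul_comm,
    vecMulVec_mul_vecMulVec, vecMulVec_mul_vecMulVec,
    vecMulVec_mul_vecMulVec, vecMulVec_mul_vecMulVec,
    oneS_dot_oneS, oneS_dot_oneT, oneT_dot_oneS, oneT_dot_oneT]
  simp only [smul_smul]
  rw [inv_mul_cancel₀ (aCard_ne G e hG hb), inv_mul_cancel₀ (bCard_ne G e hG hb)]
  simp

omit hG hb in
theorem dlap_mul_K0 : dlap G e * K0 G e = 0 := by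
  rw [K0, Matrix.mul_add, mul_smul_comm, mul_smul_comm, mul_vecMulVec, mul_vecMulVec,
    dlap_mulVec_oneS, dlap_mulVec_oneT]
  ext i j; simp [vecMulVec_apply]

omit hG hb in
theorem K0_quad (v : G.V → ℝ) :
    v ⬝ᵥ (K0 G e *ᵥ v) = (aCard G e)⁻¹ * (oneS G e ⬝ᵥ v) ^ 2
      + (bCard G e)⁻¹ * (oneT G e ⬝ᵥ v) ^ 2 := by
  rw [K0, Matrix.add_mulVec, Matrix.smul_mulVec, Matrix.smul_mulVec,
    vecMulVec_mulVec', vecMulVec_mulVec', dotProduct_add,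
    dotProduct_smul, dotProduct_smul, dotProduct_smul,
    dotProduct_smul, dotProduct_comm v (oneS G e),
    dotProduct_comm v (oneT G e)]
  simp [smul_eq_mul]; ring

theorem kerProj_b : KerProj (dlap G e) (K0 G e) := by
  refine ⟨dlap_transpose G e, K0_transpose G e, K0_idem G e hG hb, dlap_mul_K0 G e, ?_⟩
  intro v hv
  have h0 : v ⬝ᵥ ((dlap G e + K0 G e) *ᵥ v) = 0 := by rw [hv]; simp
  rw [Matrix.add_mulVec, dotProduct_add] at h0
  have hKform := K0_quad G e v
  have ha := aCard_pos G e
  have hbp := bCard_pos G e hG hb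
  have hq1 : 0 ≤ v ⬝ᵥ (dlap G e *ᵥ v) := dlap_quad_nonneg G e v
  have hq2a : 0 ≤ (aCard G e)⁻¹ * (oneS G e ⬝ᵥ v) ^ 2 := by positivity
  have hq2b : 0 ≤ (bCard G e)⁻¹ * (oneT G e ⬝ᵥ v) ^ 2 := by positivity
  have hlz : v ⬝ᵥ (dlap G e *ᵥ v) = 0 := by rw [hKform] at h0; linarith
  have haz : (aCard G e)⁻¹ * (oneS G e ⬝ᵥ v) ^ 2 = 0 := by rw [hKform] at h0; linarith
  have hbz : (bCard G e)⁻¹ * (oneT G e ⬝ᵥ v) ^ 2 = 0 := by rw [hKform] at h0; linarith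
  have hconst : ∀ f : (G.delete e).E,
      v ((G.delete e).ends f).1 = v ((G.delete e).ends f).2 :=
    fun f => lap_quad_zero (G.delete e) v hlz f
  have hvS : ∀ u, Sset G e u → v u = v (G.ends e).1 :=
    fun u hu => reach_const (G.delete e) v hconst hu
  have hvT : ∀ u, ¬ Sset G e u → v u = v (G.ends e).2 := by
    intro u hu
    rcases reach_delete_total G hG e u with h | h
    · exact absurd h hu
    · exact reach_const (G.delete e) v hconst h
  have hSsum : oneS G e ⬝ᵥ v = aCard G e * v (G.ends e).1 := by
    rw [oneS_dot]
    rw [Finset.sum_congr rfl (fun u hu => hvS u (Finset.mem_filter.mp hu).2)]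
    rw [Finset.sum_const, aCard]
    simp [mul_comm]
  have hTsum : oneT G e ⬝ᵥ v = bCard G e * v (G.ends e).2 := by
    rw [oneT_dot]
    rw [Finset.sum_congr rfl (fun u hu => hvT u (Finset.mem_filter.mp hu).2)]
    rw [Finset.sum_const, bCard]
    simp [mul_comm]
  have hvp : v (G.ends e).1 = 0 := by
    rcases mul_eq_zero.mp haz with h | h
    · exact absurd h (inv_ne_zero (aCard_ne G e hG hb))
    · have := pow_eq_zero_iff (n := 2) (by norm_num) |>.mp h
      rw [hSsum] at this
      rcases mul_eq_zero.mp this with h2 | h2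
      · exact absurd h2 (aCard_ne G e hG hb)
      · exact h2
  have hvq : v (G.ends e).2 = 0 := by
    rcases mul_eq_zero.mp hbz with h | h
    · exact absurd h (inv_ne_zero (bCard_ne G e hG hb))
    · have := pow_eq_zero_iff (n := 2) (by norm_num) |>.mp h
      rw [hTsum] at this
      rcases mul_eq_zero.mp this with h2 | h2
      · exact absurd h2 (bCard_ne G e hG hb)
      · exact h2
  funext u
  by_cases hu : Sset G e u
  · rw [hvS u hu, hvp]; rfl
  · rw [hvT u hu, hvq]; rfl

end Bridge2
end Pf

namespace Pf
open Matrix WMG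

theorem vecMulVec_sub_left {n : Type} [Fintype n] (u v w : n → ℝ) :
    vecMulVec (u - v) w = vecMulVec u w - vecMulVec v w := by
  ext i j; simp [vecMulVec_apply]; ring

theorem vecMulVec_zero_left {n : Type} [Fintype n] (w : n → ℝ) :
    vecMulVec (0 : n → ℝ) w = 0 := by
  ext i j; simp [vecMulVec_apply]

section Bridge3

variable (G : WMG) (e : G.E) (hG : G.Connected) (hb : G.IsBridge e)
include hG hb

theorem K0_mulVec_oneS : K0 G e *ᵥ oneS G e = oneS G e := by
  rw [K0, Matrix.add_mulVec, Matrix.smul_mulVec, Matrix.smul_mulVec,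
    vecMulVec_mulVec', vecMulVec_mulVec', oneS_dot_oneS, oneT_dot_oneS]
  rw [smul_smul, inv_mul_cancel₀ (aCard_ne G e hG hb)]
  simp

theorem K0_mulVec_oneT : K0 G e *ᵥ oneT G e = oneT G e := by
  rw [K0, Matrix.add_mulVec, Matrix.smul_mulVec, Matrix.smul_mulVec,
    vecMulVec_mulVec', vecMulVec_mulVec', oneS_dot_oneT, oneT_dot_oneT]
  simp only [smul_smul]
  rw [inv_mul_cancel₀ (bCard_ne G e hG hb)]
  simp

theorem oneS_dot_dvec : oneS G e ⬝ᵥ dvec G e = 1 := by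
  rw [dotProduct_comm, dvec_dot]
  simp [oneS, hSp G e, hSq G e hG hb]

theorem oneT_dot_dvec : oneT G e ⬝ᵥ dvec G e = -1 := by
  rw [dotProduct_comm, dvec_dot]
  simp [oneT, hSp G e, hSq G e hG hb]

theorem K0_mulVec_dvec : K0 G e *ᵥ dvec G e = zvec G e := by
  rw [K0, Matrix.add_mulVec, Matrix.smul_mulVec, Matrix.smul_mulVec,
    vecMulVec_mulVec', vecMulVec_mulVec', oneS_dot_dvec G e hG hb,
    oneT_dot_dvec G e hG hb, zvec]
  ext u
  simp
  ring

omit hG hb in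
theorem dlap_mulVec_wvec : dlap G e *ᵥ wvec G e = 0 := by
  rw [wvec, Matrix.mulVec_sub, Matrix.mulVec_smul, Matrix.mulVec_smul,
    dlap_mulVec_oneS, dlap_mulVec_oneT]
  simp

theorem K0_mulVec_wvec : K0 G e *ᵥ wvec G e = wvec G e := by
  rw [wvec, Matrix.mulVec_sub, Matrix.mulVec_smul, Matrix.mulVec_smul,
    K0_mulVec_oneS G e hG hb, K0_mulVec_oneT G e hG hb]

theorem P0_mulVec_ker (v : G.V → ℝ) (h1 : dlap G e *ᵥ v = 0) (h2 : K0 G e *ᵥ v = v) :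
    P0 G e *ᵥ v = 0 := by
  have hkp := kerProj_b G e hG hb
  have hM : (dlap G e + K0 G e) *ᵥ v = v := by
    rw [Matrix.add_mulVec, h1, h2, zero_add]
  have hMinv : (dlap G e + K0 G e)⁻¹ *ᵥ v = v := by
    conv_lhs => rw [← hM]
    rw [Matrix.mulVec_mulVec, Matrix.nonsing_inv_mul _ hkp.det_unit, Matrix.one_mulVec]
  rw [P0, pinvB, Matrix.sub_mulVec, hMinv, h2, sub_self]

theorem P0_mulVec_wvec : P0 G e *ᵥ wvec G e = 0 :=
  P0_mulVec_ker G e hG hb _ (dlap_mulVec_wvec G e) (K0_mulVec_wvec G e hG hb)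

theorem P0_mulVec_onev : P0 G e *ᵥ onev G = 0 := by
  have hS := P0_mulVec_ker G e hG hb _ (dlap_mulVec_oneS G e) (K0_mulVec_oneS G e hG hb)
  have hT := P0_mulVec_ker G e hG hb _ (dlap_mulVec_oneT G e) (K0_mulVec_oneT G e hG hb)
  rw [← oneS_add_oneT, Matrix.mulVec_add, hS, hT, add_zero]

theorem P0_transpose : (P0 G e)ᵀ = P0 G e := (kerProj_b G e hG hb).Bsymm

theorem dlap_mulVec_g0 : dlap G e *ᵥ g0 G e = dvec G e - zvec G e := by
  have hAB : dlap G e * P0 G e = 1 - K0 G e := (kerProj_b G e hG hb).AB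
  calc dlap G e *ᵥ g0 G e = (dlap G e * P0 G e) *ᵥ dvec G e := by
        rw [g0, Matrix.mulVec_mulVec]
  _ = dvec G e - K0 G e *ᵥ dvec G e := by
        rw [hAB, Matrix.sub_mulVec, Matrix.one_mulVec]
  _ = dvec G e - zvec G e := by rw [K0_mulVec_dvec G e hG hb]

theorem dvec_dot_wvec : dvec G e ⬝ᵥ wvec G e = 1 := by
  rw [dvec_dot]
  have hn : aCard G e + bCard G e ≠ 0 := by
    have := aCard_pos G e; have := bCard_pos G e hG hb; positivity
  simp [wvec, oneS, oneT, hSp G e, hSq G e hG hb]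
  field_simp
  ring

theorem onev_dot_wvec : onev G ⬝ᵥ wvec G e = 0 := by
  rw [dotProduct_comm, wvec, sub_dotProduct, smul_dotProduct,
    smul_dotProduct]
  have h1 : oneS G e ⬝ᵥ onev G = aCard G e := by
    rw [dotProduct_comm, ← oneS_add_oneT, add_dotProduct, oneS_dot_oneS,
      oneT_dot_oneS, add_zero]
  have h2 : oneT G e ⬝ᵥ onev G = bCard G e := by
    rw [dotProduct_comm, ← oneS_add_oneT, add_dotProduct, oneS_dot_oneT,
      oneT_dot_oneT, zero_add]
  rw [h1, h2, smul_eq_mul, smul_eq_mul]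
  ring

theorem onev_dot_g0 : onev G ⬝ᵥ g0 G e = 0 := by
  rw [g0, Matrix.dotProduct_mulVec, vecMul_symm (P0_transpose G e hG hb),
    P0_mulVec_onev G e hG hb]
  simp

theorem wvec_vecMul_Kmat : wvec G e ᵥ* Kmat G = 0 := by
  rw [Kmat, vecMul_smul', vecMul_vecMulVec, dotProduct_comm,
    onev_dot_wvec G e hG hb]
  simp

theorem g0_vecMul_Kmat : g0 G e ᵥ* Kmat G = 0 := by
  rw [Kmat, vecMul_smul', vecMul_vecMulVec, dotProduct_comm,
    onev_dot_g0 G e hG hb]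
  simp

theorem P0_mul_Kmat : P0 G e * Kmat G = 0 := by
  rw [Kmat, mul_smul_comm, mul_vecMulVec, P0_mulVec_onev G e hG hb]
  rw [vecMulVec_zero_left]
  simp

theorem Kmat_fix : Kmat G = K0 G e - vecMulVec (zvec G e) (wvec G e) := by
  have ha := aCard_ne G e hG hb
  have hbn := bCard_ne G e hG hb
  have hn : aCard G e + bCard G e ≠ 0 := by
    have := aCard_pos G e; have := bCard_pos G e hG hb; positivity
  have hcard : (Fintype.card G.V : ℝ) = aCard G e + bCard G e := (card_eq_ab G e).symm
  ext u v
  simp only [Kmat, K0, wvec, zvec, Matrix.smul_apply, Matrix.sub_apply, Matrix.add_apply,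
    vecMulVec_apply, smul_eq_mul, Pi.smul_apply, Pi.sub_apply, onev]
  rw [hcard]
  by_cases hu : Sset G e u <;> by_cases hv : Sset G e v <;>
    simp [oneS, oneT, hu, hv] <;> field_simp <;> ring

end Bridge3
end Pf

namespace Pf
open Matrix WMG

theorem vecMulVec_zero_right {n : Type} [Fintype n] (w : n → ℝ) :
    vecMulVec w (0 : n → ℝ) = 0 := by
  ext i j; simp [vecMulVec_apply]

section Bridge4

variable (G : WMG) (e : G.E) (hG : G.Connected) (hb : G.IsBridge e)
include hG hb

theorem penrose_b (L : ℝ) (hL : 0 < L) :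
    Penrose (dlap G e + L⁻¹ • vecMulVec (dvec G e) (dvec G e))
      (P0 G e - vecMulVec (g0 G e) (wvec G e) - vecMulVec (wvec G e) (g0 G e)
        + (L + R0 G e) • vecMulVec (wvec G e) (wvec G e)) := by
  have hkp := kerProj_b G e hG hb
  have hL0 : L ≠ 0 := ne_of_gt hL
  have hABP : dlap G e * P0 G e = 1 - K0 G e := hkp.AB
  have hXP : vecMulVec (dvec G e) (dvec G e) * P0 G e
      = vecMulVec (dvec G e) (g0 G e) := by
    rw [vecMulVec_mul, vecMul_symm (P0_transpose G e hG hb)]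
    rfl
  have hR0d : dvec G e ⬝ᵥ g0 G e = R0 G e := rfl
  have hAB : (dlap G e + L⁻¹ • vecMulVec (dvec G e) (dvec G e)) *
      (P0 G e - vecMulVec (g0 G e) (wvec G e) - vecMulVec (wvec G e) (g0 G e)
        + (L + R0 G e) • vecMulVec (wvec G e) (wvec G e)) = 1 - Kmat G := by
    have hexp : (dlap G e + L⁻¹ • vecMulVec (dvec G e) (dvec G e)) *
        (P0 G e - vecMulVec (g0 G e) (wvec G e) - vecMulVec (wvec G e) (g0 G e)
          + (L + R0 G e) • vecMulVec (wvec G e) (wvec G e))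
        = (1 - K0 G e + vecMulVec (zvec G e) (wvec G e))
          + (L⁻¹ * L - 1) • vecMulVec (dvec G e) (wvec G e) := by
      simp only [Matrix.add_mul, Matrix.mul_add, Matrix.mul_sub, smul_mul_assoc,
        mul_smul_comm]
      rw [hABP, hXP, vecMulVec_mul_vecMulVec, vecMulVec_mul_vecMulVec,
        vecMulVec_mul_vecMulVec, mul_vecMulVec, mul_vecMulVec, mul_vecMulVec,
        dlap_mulVec_g0 G e hG hb, dlap_mulVec_wvec G e, hR0d, dvec_dot_wvec G e hG hb]
      simp only [vecMulVec_sub_left, vecMulVec_zero_left]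
      module
    rw [hexp, show L⁻¹ * L - 1 = 0 by field_simp; ring, zero_smul, add_zero,
      Kmat_fix G e hG hb]
    abel
  have hLGt : (dlap G e + L⁻¹ • vecMulVec (dvec G e) (dvec G e))ᵀ
      = dlap G e + L⁻¹ • vecMulVec (dvec G e) (dvec G e) := by
    rw [Matrix.transpose_add, Matrix.transpose_smul, vecMulVec_transpose', dlap_transpose]
  have hBt : (P0 G e - vecMulVec (g0 G e) (wvec G e) - vecMulVec (wvec G e) (g0 G e)
        + (L + R0 G e) • vecMulVec (wvec G e) (wvec G e))ᵀ
      = P0 G e - vecMulVec (g0 G e) (wvec G e) - vecMulVec (wvec G e) (g0 G e)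
        + (L + R0 G e) • vecMulVec (wvec G e) (wvec G e) := by
    simp only [Matrix.transpose_add, Matrix.transpose_sub, Matrix.transpose_smul,
      vecMulVec_transpose', P0_transpose G e hG hb]
    abel
  have hBA : (P0 G e - vecMulVec (g0 G e) (wvec G e) - vecMulVec (wvec G e) (g0 G e)
        + (L + R0 G e) • vecMulVec (wvec G e) (wvec G e)) *
      (dlap G e + L⁻¹ • vecMulVec (dvec G e) (dvec G e)) = 1 - Kmat G := by
    have h2 := congrArg Matrix.transpose hAB
    rw [Matrix.transpose_mul, hLGt, hBt] at h2
    rw [h2, Matrix.transpose_sub, Matrix.transpose_one, Kmat_transpose]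
  have hLK : (dlap G e + L⁻¹ • vecMulVec (dvec G e) (dvec G e)) * Kmat G = 0 := by
    rw [Matrix.add_mul, dlap_mul_Kmat, smul_mul_assoc, vecMulVec_mul, dvec_vecMul_Kmat,
      vecMulVec_zero_right]
    simp
  have hKA : Kmat G * (dlap G e + L⁻¹ • vecMulVec (dvec G e) (dvec G e)) = 0 := by
    have h2 := congrArg Matrix.transpose hLK
    rw [Matrix.transpose_mul, hLGt, Kmat_transpose, Matrix.transpose_zero] at h2
    exact h2
  have hBK : (P0 G e - vecMulVec (g0 G e) (wvec G e) - vecMulVec (wvec G e) (g0 G e)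
        + (L + R0 G e) • vecMulVec (wvec G e) (wvec G e)) * Kmat G = 0 := by
    rw [Matrix.add_mul, Matrix.sub_mul, Matrix.sub_mul, P0_mul_Kmat G e hG hb,
      vecMulVec_mul, vecMulVec_mul, smul_mul_assoc, vecMulVec_mul,
      wvec_vecMul_Kmat G e hG hb, g0_vecMul_Kmat G e hG hb, vecMulVec_zero_right,
      vecMulVec_zero_right]
    simp
  exact penrose_of (Kmat_transpose G) hAB hBA hKA hBK

theorem mpinv_b (L : ℝ) (hL : 0 < L) :
    Matrix.mpinv (dlap G e + L⁻¹ • vecMulVec (dvec G e) (dvec G e))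
      = P0 G e - vecMulVec (g0 G e) (wvec G e) - vecMulVec (wvec G e) (g0 G e)
        + (L + R0 G e) • vecMulVec (wvec G e) (wvec G e) :=
  mpinv_eq (penrose_b G e hG hb L hL)

end Bridge4
end Pf

namespace Pf
open Matrix WMG

section Bridge5

variable (G : WMG) (e : G.E) (hG : G.Connected) (hb : G.IsBridge e)

theorem reach_iff_side (s t : G.V) (hst : (G.delete e).Reach s t) :
    Sset G e s ↔ Sset G e t := by
  constructor
  · intro h
    exact (reach_symm _ hst).trans h
  · intro h
    exact hst.trans h

include hG in
theorem not_reach_side (s t : G.V) (hst : ¬ (G.delete e).Reach s t) :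
    (Sset G e s ∧ ¬ Sset G e t) ∨ (¬ Sset G e s ∧ Sset G e t) := by
  by_cases hs : Sset G e s <;> by_cases ht : Sset G e t
  · exact absurd (hs.trans (reach_symm _ ht)) hst
  · exact Or.inl ⟨hs, ht⟩
  · exact Or.inr ⟨hs, ht⟩
  · exfalso
    have h1 : (G.delete e).Reach s (G.ends e).2 :=
      (reach_delete_total G hG e s).resolve_left hs
    have h2 : (G.delete e).Reach t (G.ends e).2 :=
      (reach_delete_total G hG e t).resolve_left ht
    exact hst (h1.trans (reach_symm _ h2))

theorem wvec_val_S (u : G.V) (hu : Sset G e u) :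
    wvec G e u = bCard G e / (aCard G e + bCard G e) := by
  simp [wvec, oneS, oneT, hu]

theorem wvec_val_T (u : G.V) (hu : ¬ Sset G e u) :
    wvec G e u = -(aCard G e / (aCard G e + bCard G e)) := by
  simp [wvec, oneS, oneT, hu]

include hG hb in
theorem wvec_sq_one (s t : G.V) (hst : ¬ (G.delete e).Reach s t) :
    (wvec G e s - wvec G e t) ^ 2 = 1 := by
  have hn : aCard G e + bCard G e ≠ 0 := by
    have := aCard_pos G e; have := bCard_pos G e hG hb; positivity
  rcases not_reach_side G e hG s t hst with ⟨h1, h2⟩ | ⟨h1, h2⟩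
  · rw [wvec_val_S G e s h1, wvec_val_T G e t h2]
    rw [show bCard G e / (aCard G e + bCard G e)
        - -(aCard G e / (aCard G e + bCard G e)) = 1 by field_simp; ring]
    norm_num
  · rw [wvec_val_T G e s h1, wvec_val_S G e t h2]
    rw [show -(aCard G e / (aCard G e + bCard G e))
        - bCard G e / (aCard G e + bCard G e) = -1 by field_simp; ring]
    norm_num

theorem wvec_same (s t : G.V) (hst : (G.delete e).Reach s t) :
    wvec G e s = wvec G e t := by
  by_cases hs : Sset G e s
  · have := (reach_iff_side G e s t hst).mp hs
    simp [wvec, oneS, oneT, hs, this]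
  · have ht : ¬ Sset G e t := fun hc => hs ((reach_iff_side G e s t hst).mpr hc)
    simp [wvec, oneS, oneT, hs, ht]

include hG hb in
theorem main_bridge (L' : ℝ) (hL' : 0 < L') (s t : G.V) :
    ((G.delete e).Reach s t → G.res s t = (G.setLen e L' hL').res s t) ∧
      (¬ (G.delete e).Reach s t →
        G.res s t = (G.setLen e L' hL').res s t + G.len e - L') := by
  have hL := G.len_pos e
  have hmpG : G.lap.mpinv
      = P0 G e - vecMulVec (g0 G e) (wvec G e) - vecMulVec (wvec G e) (g0 G e)
        + (G.len e + R0 G e) • vecMulVec (wvec G e) (wvec G e) := by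
    rw [lap_split G e]
    exact mpinv_b G e hG hb (G.len e) hL
  have hmpS : (G.setLen e L' hL').lap.mpinv
      = P0 G e - vecMulVec (g0 G e) (wvec G e) - vecMulVec (wvec G e) (g0 G e)
        + (L' + R0 G e) • vecMulVec (wvec G e) (wvec G e) := by
    rw [lap_setLen G e L' hL']
    exact mpinv_b G e hG hb L' hL'
  constructor
  · intro hst
    have hww := wvec_same G e s t hst
    simp only [WMG.res]
    rw [hmpG, hmpS]
    simp only [Matrix.sub_apply, Matrix.add_apply, Matrix.smul_apply, vecMulVec_apply,
      smul_eq_mul]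
    rw [hww]
    ring
  · intro hst
    have hsq := wvec_sq_one G e hG hb s t hst
    simp only [WMG.res]
    rw [hmpG, hmpS]
    simp only [Matrix.sub_apply, Matrix.add_apply, Matrix.smul_apply, vecMulVec_apply,
      smul_eq_mul]
    linear_combination (G.len e - L') * hsq

end Bridge5
end Pf

/-- **Explicit Rayleigh's Monotonicity Law II.**  Let `G'` be obtained from
the finite connected weighted graph `G` by replacing the edge `e` (endpoints
`p_i, q_i`, length `L_i`) by an edge of length `L_i'` between the same
endpoints.  If `e` is not a bridge, then for all vertices `s, t`:
`r_G(s,t) = r_{G'}(s,t) + ((L_i - L_i')/((L_i+R_i)(L_i'+R_i)))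
              (j^{G-e}_{p_i}(q_i,s) - j^{G-e}_{p_i}(q_i,t))²`.
If `e` is a bridge, `r_G(s,t) = r_{G'}(s,t)` when `s, t` are in the same
connected component of `G − e`, and `r_G(s,t) = r_{G'}(s,t) + L_i - L_i'`
otherwise. -/
theorem explicit_rayleigh_monotonicity_law_II (G : WMG) (hG : G.Connected)
    (e : G.E) (L' : ℝ) (hL' : 0 < L') (s t : G.V) :
    (¬ G.IsBridge e →
      G.res s t = (G.setLen e L' hL').res s t +
        ((G.len e - L') /
          ((G.len e + (G.delete e).res (G.ends e).1 (G.ends e).2) *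
           (L' + (G.delete e).res (G.ends e).1 (G.ends e).2))) *
          ((G.delete e).volt (G.ends e).1 (G.ends e).2 s -
           (G.delete e).volt (G.ends e).1 (G.ends e).2 t) ^ 2) ∧
    (G.IsBridge e →
      ((G.delete e).Reach s t → G.res s t = (G.setLen e L' hL').res s t) ∧
      (¬ (G.delete e).Reach s t →
        G.res s t = (G.setLen e L' hL').res s t + G.len e - L')) := by
  constructor
  · intro hnb
    exact Pf.main_nb G hG e L' hL' s t hnb
  · intro hbr
    exact Pf.main_bridge G e hG hbr L' hL' s t
end

section
/- Let G = G₁ ∪ G₂ be a connected multigraph which is the union of two subgraphs G₁ and G₂ with G₁ ∩ G₂ = {p, q} for two vertices p, q. Then t(G) = t(G₁)·t(G₂,_{pq}) + t(G₂)·t(G₁,_{pq}), where G_j,_{pq} is obtained from G_j by identifying the vertices p and q. -/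
open scoped Classical

namespace STProof

open Relation

variable {V E : Type}

def erel (ends : E → V × V) (T : Finset E) (x y : V) : Prop :=
  ∃ e ∈ T, ends e = (x, y) ∨ ends e = (y, x)

theorem erel_symm {ends : E → V × V} {T : Finset E} : Symmetric (erel ends T) := by
  rintro x y ⟨e, he, h | h⟩
  · exact ⟨e, he, Or.inr h⟩
  · exact ⟨e, he, Or.inl h⟩

/-- `conn ends T x y`: `x` and `y` are joined using edges of `T`. -/
def conn (ends : E → V × V) (T : Finset E) (x y : V) : Prop :=
  ReflTransGen (erel ends T) x y

theorem conn_refl {ends : E → V × V} {T : Finset E} (x : V) : conn ends T x x :=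
  ReflTransGen.refl

theorem conn_symm {ends : E → V × V} {T : Finset E} : Symmetric (conn ends T) :=
  by haveI : Std.Symm (erel ends T) := ⟨fun a b h => erel_symm h⟩; exact fun a b h => (ReflTransGen.stdSymm (r := erel ends T)).symm a b h

theorem conn_trans {ends : E → V × V} {T : Finset E} {x y z : V}
    (h : conn ends T x y) (h' : conn ends T y z) : conn ends T x z :=
  ReflTransGen.trans h h'

theorem rtg_lift {α β : Type*} {r : α → α → Prop} {s : β → β → Prop} (f : α → β)
    (h : ∀ x y, r x y → ReflTransGen s (f x) (f y)) {u v : α}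
    (huv : ReflTransGen r u v) : ReflTransGen s (f u) (f v) := by
  induction huv with
  | refl => exact .refl
  | tail _ hstep ih => exact ih.trans (h _ _ hstep)

theorem conn_mono {ends : E → V × V} {T T' : Finset E} (hTT : T ⊆ T') {u v : V}
    (h : conn ends T u v) : conn ends T' u v := by
  refine rtg_lift id (fun x y ⟨e, he, hor⟩ => ReflTransGen.single ⟨e, hTT he, hor⟩) h

/-- Decomposition of a walk in `insert e T` relative to the edge `e`. -/
theorem conn_insert {ends : E → V × V} {T : Finset E} {e : E} {u v : V}
    (h : conn ends (insert e T) u v) :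
    conn ends T u v ∨
      (conn ends T u (ends e).1 ∧ conn ends T (ends e).2 v) ∨
      (conn ends T u (ends e).2 ∧ conn ends T (ends e).1 v) := by
  induction h with
  | refl => exact Or.inl (conn_refl _)
  | @tail b c _ hstep ih =>
    obtain ⟨f, hf, hor⟩ := hstep
    rcases Finset.mem_insert.mp hf with rfl | hfT
    · rcases hor with h' | h'
      · have ha : (ends f).1 = b := by rw [h']
        have hb2 : (ends f).2 = c := by rw [h']
        rw [ha, hb2]
        rcases ih with h1 | ⟨h1, _⟩ | ⟨h1, _⟩
        · exact Or.inr (Or.inl ⟨h1, conn_refl _⟩)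
        · exact Or.inr (Or.inl ⟨ha ▸ h1, conn_refl _⟩)
        · exact Or.inl (hb2 ▸ h1)
      · have ha : (ends f).1 = c := by rw [h']
        have hb2 : (ends f).2 = b := by rw [h']
        rw [ha, hb2]
        rcases ih with h1 | ⟨h1, _⟩ | ⟨h1, _⟩
        · exact Or.inr (Or.inr ⟨h1, conn_refl _⟩)
        · exact Or.inl (ha ▸ h1)
        · exact Or.inr (Or.inr ⟨hb2 ▸ h1, conn_refl _⟩)
    · have hstep' : erel ends T b c := ⟨f, hfT, hor⟩
      rcases ih with h1 | ⟨h1, h2⟩ | ⟨h1, h2⟩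
      · exact Or.inl (h1.tail hstep')
      · exact Or.inr (Or.inl ⟨h1, h2.tail hstep'⟩)
      · exact Or.inr (Or.inr ⟨h1, h2.tail hstep'⟩)

noncomputable def connSetoid (ends : E → V × V) (T : Finset E) : Setoid V :=
  ⟨conn ends T, ⟨conn_refl, fun h => conn_symm h, conn_trans⟩⟩

theorem card_le_card_add_classes [Fintype V] (ends : E → V × V) (T : Finset E) :
    Fintype.card V ≤ T.card + Nat.card (Quotient (connSetoid ends T)) := by
  classical
  induction T using Finset.induction_on with
  | empty =>
    have hbij : Function.Bijective
        (Quotient.mk'' : V → Quotient (connSetoid ends (∅ : Finset E))) := by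
      constructor
      · intro u v huv
        have h : conn ends (∅ : Finset E) u v := Quotient.eq''.mp huv
        induction h with
        | refl => rfl
        | tail _ hstep ih => obtain ⟨e, he, -⟩ := hstep; exact absurd he (by simp)
      · exact Quotient.mk''_surjective
    have := Nat.card_congr (Equiv.ofBijective _ hbij)
    simp only [Finset.card_empty, zero_add, ← this, Nat.card_eq_fintype_card, le_refl]
  | @insert e T he ih =>
    have key : Nat.card (Quotient (connSetoid ends T)) ≤
        Nat.card (Quotient (connSetoid ends (insert e T))) + 1 := by
      set A : Quotient (connSetoid ends T) := Quotient.mk'' (ends e).1 with hA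
      let f : {x : Quotient (connSetoid ends T) // x ≠ A} →
          Quotient (connSetoid ends (insert e T)) := fun x =>
        Quotient.map' id (fun u v h => conn_mono (Finset.subset_insert e T) h) x.1
      have hinj : Function.Injective f := by
        rintro ⟨x, hx⟩ ⟨y, hy⟩ hfeq
        obtain ⟨u, rfl⟩ := Quotient.exists_rep x
        obtain ⟨v, rfl⟩ := Quotient.exists_rep y
        have h : conn ends (insert e T) u v := Quotient.eq''.mp hfeq
        rcases conn_insert h with h1 | ⟨h1, h2⟩ | ⟨h1, h2⟩
        · exact Subtype.ext (Quotient.sound' h1)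
        · exact absurd (Quotient.sound' h1 : _ = A) hx
        · exact absurd ((Quotient.sound' h2 : A = _).symm) hy
      have hle := Nat.card_le_card_of_injective f hinj
      haveI : Fintype (Quotient (connSetoid ends T)) := Fintype.ofFinite _
      have hcompl : Nat.card {x : Quotient (connSetoid ends T) // x ≠ A} =
          Nat.card (Quotient (connSetoid ends T)) - 1 := by
        simp only [Nat.card_eq_fintype_card]
        have := Fintype.card_subtype_compl (fun x : Quotient (connSetoid ends T) => x = A)
        simpa [Fintype.card_subtype_eq] using this
      have hpos : 1 ≤ Nat.card (Quotient (connSetoid ends T)) := by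
        have : Nonempty (Quotient (connSetoid ends T)) := ⟨A⟩
        simp only [Nat.card_eq_fintype_card]
        exact Fintype.card_pos
      omega
    calc Fintype.card V ≤ T.card + Nat.card (Quotient (connSetoid ends T)) := ih
      _ ≤ T.card + (Nat.card (Quotient (connSetoid ends (insert e T))) + 1) := by omega
      _ = (insert e T).card + Nat.card (Quotient (connSetoid ends (insert e T))) := by
          rw [Finset.card_insert_of_notMem he]; omega

theorem card_le_of_conn [Fintype V] {ends : E → V × V} {T : Finset E}
    (h : ∀ u v : V, conn ends T u v) : Fintype.card V ≤ T.card + 1 := by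
  rcases isEmpty_or_nonempty V with hV | hV
  · simp [Fintype.card_eq_zero]
  · have hsub : Subsingleton (Quotient (connSetoid ends T)) := by
      constructor
      intro a b
      obtain ⟨u, rfl⟩ := Quotient.exists_rep a
      obtain ⟨v, rfl⟩ := Quotient.exists_rep b
      exact Quotient.sound' (h u v)
    have hne : Nonempty (Quotient (connSetoid ends T)) := Nonempty.map Quotient.mk'' hV
    have h1 : Nat.card (Quotient (connSetoid ends T)) = 1 := Nat.card_eq_one_iff_unique.mpr ⟨hsub, hne⟩
    have := card_le_card_add_classes ends T
    omega

end STProof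

namespace STProof

open Relation

section CardNe

variable {α : Type} [Fintype α]

theorem card_ne (q : α) : Fintype.card {v : α // v ≠ q} = Fintype.card α - 1 := by
  classical
  have h := Fintype.card_subtype_compl (fun v : α => v = q)
  rw [Fintype.card_subtype_eq] at h
  exact h

theorem card_ne2 {p q : α} (h : p ≠ q) :
    Fintype.card {v : α // v ≠ p ∧ v ≠ q} = Fintype.card α - 2 := by
  classical
  rw [Fintype.card_subtype]
  have hset : Finset.univ.filter (fun v : α => v ≠ p ∧ v ≠ q) = Finset.univ \ {p, q} := by
    ext v
    simp [not_or]
  rw [hset, Finset.card_sdiff_of_subset (Finset.subset_univ _), Finset.card_univ, Finset.card_pair h]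

end CardNe

section Ident2

variable {H : WMG} {p q : H.V}

theorem ident2_mk_eq : (Quot.mk _ p : (H.ident2 p q).V) = Quot.mk _ q :=
  Quot.sound ⟨rfl, rfl⟩

theorem ident2_ends (e : H.E) :
    (H.ident2 p q).ends e = (Quot.mk _ (H.ends e).1, Quot.mk _ (H.ends e).2) := rfl

noncomputable def ident2Equiv (hpq : p ≠ q) : (H.ident2 p q).V ≃ {v : H.V // v ≠ q} where
  toFun := Quot.lift (fun v => if h : v = q then ⟨p, hpq⟩ else ⟨v, h⟩)
    (by rintro x y ⟨rfl, rfl⟩; simp [hpq])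
  invFun v := Quot.mk _ v.1
  left_inv := by
    apply Quot.ind
    intro v
    by_cases h : v = q
    · subst h
      simp
      exact ident2_mk_eq
    · simp [h]; rfl
  right_inv := by
    rintro ⟨v, hv⟩
    simp [hv]

theorem ident2_card (hpq : p ≠ q) :
    Fintype.card (H.ident2 p q).V = Fintype.card H.V - 1 := by
  rw [Fintype.card_congr (ident2Equiv hpq)]
  exact card_ne q

end Ident2

section Glue2

variable {G₁ G₂ : WMG} {p₁ q₁ : G₁.V} {p₂ q₂ : G₂.V}

/-- The image of a `G₁`-vertex in the glued graph. -/
def inl' (p₁ q₁ : G₁.V) (p₂ q₂ : G₂.V) (v : G₁.V) : (G₁.glue2 G₂ p₁ q₁ p₂ q₂).V :=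
  Quot.mk _ (Sum.inl v)

/-- The image of a `G₂`-vertex in the glued graph. -/
def inr' (p₁ q₁ : G₁.V) (p₂ q₂ : G₂.V) (v : G₂.V) : (G₁.glue2 G₂ p₁ q₁ p₂ q₂).V :=
  Quot.mk _ (Sum.inr v)

theorem glue2_p_eq : inl' p₁ q₁ p₂ q₂ p₁ = inr' p₁ q₁ p₂ q₂ p₂ :=
  Quot.sound (Or.inl ⟨rfl, rfl⟩)

theorem glue2_q_eq : inl' p₁ q₁ p₂ q₂ q₁ = inr' p₁ q₁ p₂ q₂ q₂ :=
  Quot.sound (Or.inr ⟨rfl, rfl⟩)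

theorem glue2_surj (x : (G₁.glue2 G₂ p₁ q₁ p₂ q₂).V) :
    (∃ v, x = inl' p₁ q₁ p₂ q₂ v) ∨ (∃ v, x = inr' p₁ q₁ p₂ q₂ v) := by
  induction x using Quot.ind with
  | _ x =>
    rcases x with v | v
    · exact Or.inl ⟨v, rfl⟩
    · exact Or.inr ⟨v, rfl⟩

theorem glue2_ends_inl (e : G₁.E) :
    (G₁.glue2 G₂ p₁ q₁ p₂ q₂).ends (Sum.inl e) =
      (inl' p₁ q₁ p₂ q₂ (G₁.ends e).1, inl' p₁ q₁ p₂ q₂ (G₁.ends e).2) := rfl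

theorem glue2_ends_inr (e : G₂.E) :
    (G₁.glue2 G₂ p₁ q₁ p₂ q₂).ends (Sum.inr e) =
      (inr' p₁ q₁ p₂ q₂ (G₂.ends e).1, inr' p₁ q₁ p₂ q₂ (G₂.ends e).2) := rfl

noncomputable def glue2Equiv (hpq₂ : p₂ ≠ q₂) :
    (G₁.glue2 G₂ p₁ q₁ p₂ q₂).V ≃ (G₁.V ⊕ {v : G₂.V // v ≠ p₂ ∧ v ≠ q₂}) where
  toFun := Quot.lift (Sum.elim (fun v => Sum.inl v)
      (fun v => if h : v = p₂ then Sum.inl p₁ else if h' : v = q₂ then Sum.inl q₁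
        else Sum.inr ⟨v, h, h'⟩))
    (by rintro x y (⟨rfl, rfl⟩ | ⟨rfl, rfl⟩) <;> simp [hpq₂, Ne.symm hpq₂])
  invFun := Sum.elim (inl' p₁ q₁ p₂ q₂) (fun v => inr' p₁ q₁ p₂ q₂ v.1)
  left_inv := by
    apply Quot.ind
    rintro (v | v)
    · rfl
    · by_cases h : v = p₂
      · subst h
        simpa using glue2_p_eq.symm ▸ rfl
      · by_cases h' : v = q₂
        · subst h'
          simp only [Sum.elim_inr, dif_neg h, dif_pos rfl, Sum.elim_inl]
          exact glue2_q_eq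
        · simp only [Sum.elim_inr, dif_neg h, dif_neg h']
          rfl
  right_inv := by
    rintro (v | ⟨v, h1, h2⟩)
    · rfl
    · show (if h : v = p₂ then Sum.inl p₁ else if h' : v = q₂ then Sum.inl q₁
        else Sum.inr (⟨v, h, h'⟩ : {v : G₂.V // v ≠ p₂ ∧ v ≠ q₂})) = _
      rw [dif_neg h1, dif_neg h2]

theorem glue2_card (hpq₂ : p₂ ≠ q₂) :
    Fintype.card (G₁.glue2 G₂ p₁ q₁ p₂ q₂).V =
      Fintype.card G₁.V + (Fintype.card G₂.V - 2) := by
  rw [Fintype.card_congr (glue2Equiv hpq₂), Fintype.card_sum, card_ne2 hpq₂]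

end Glue2

end STProof

namespace STProof

open Relation

theorem st_iff (G : WMG) (T : Finset G.E) :
    G.IsSpanningTree T ↔ (∀ u v, conn G.ends T u v) ∧ T.card = Fintype.card G.V - 1 :=
  Iff.rfl

section Transfer

variable {G₁ G₂ : WMG} (p₁ q₁ : G₁.V) (p₂ q₂ : G₂.V)

/-- Retraction of the glued graph onto `G₂` with `p, q` identified. -/
noncomputable def ρ₂ : (G₁.glue2 G₂ p₁ q₁ p₂ q₂).V → (G₂.ident2 p₂ q₂).V :=
  Quot.lift (Sum.elim (fun _ => Quot.mk _ p₂) (Quot.mk _))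
    (by rintro x y (⟨rfl, rfl⟩ | ⟨rfl, rfl⟩)
        · rfl
        · exact ident2_mk_eq)

/-- Retraction of the glued graph onto `G₁` with `p, q` identified. -/
noncomputable def ρ₁ : (G₁.glue2 G₂ p₁ q₁ p₂ q₂).V → (G₁.ident2 p₁ q₁).V :=
  Quot.lift (Sum.elim (Quot.mk _) (fun _ => Quot.mk _ p₁))
    (by rintro x y (⟨rfl, rfl⟩ | ⟨rfl, rfl⟩)
        · rfl
        · exact ident2_mk_eq.symm)

/-- Map from `G₂` with `p, q` identified into the glued graph, sending the merged
vertex to the common image of `p₁, p₂`. -/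
noncomputable def ψ₂ (hpq₂ : p₂ ≠ q₂) : (G₂.ident2 p₂ q₂).V → (G₁.glue2 G₂ p₁ q₁ p₂ q₂).V :=
  Quot.lift (fun v => if v = q₂ then inl' p₁ q₁ p₂ q₂ p₁ else inr' p₁ q₁ p₂ q₂ v)
    (by rintro x y ⟨rfl, rfl⟩
        rw [if_neg hpq₂, if_pos rfl]
        exact glue2_p_eq.symm)

noncomputable def ψ₁ (hpq₁ : p₁ ≠ q₁) : (G₁.ident2 p₁ q₁).V → (G₁.glue2 G₂ p₁ q₁ p₂ q₂).V :=
  Quot.lift (fun v => if v = q₁ then inr' p₁ q₁ p₂ q₂ p₂ else inl' p₁ q₁ p₂ q₂ v)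
    (by rintro x y ⟨rfl, rfl⟩
        rw [if_neg hpq₁, if_pos rfl]
        exact glue2_p_eq)

theorem ψ₂_mk (hpq₂ : p₂ ≠ q₂) (v : G₂.V) :
    ψ₂ p₁ q₁ p₂ q₂ hpq₂ (Quot.mk _ v) =
      if v = q₂ then inl' p₁ q₁ p₂ q₂ p₁ else inr' p₁ q₁ p₂ q₂ v := rfl

theorem ψ₁_mk (hpq₁ : p₁ ≠ q₁) (v : G₁.V) :
    ψ₁ p₁ q₁ p₂ q₂ hpq₁ (Quot.mk _ v) =
      if v = q₁ then inr' p₁ q₁ p₂ q₂ p₂ else inl' p₁ q₁ p₂ q₂ v := rfl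

variable {T : Finset (G₁.E ⊕ G₂.E)} {T₁ : Finset G₁.E} {T₂ : Finset G₂.E}

theorem conn_inl (hT₁ : ∀ e, e ∈ T₁ ↔ Sum.inl e ∈ T) {u v : G₁.V}
    (h : conn G₁.ends T₁ u v) :
    conn (G₁.glue2 G₂ p₁ q₁ p₂ q₂).ends T (inl' p₁ q₁ p₂ q₂ u) (inl' p₁ q₁ p₂ q₂ v) := by
  refine rtg_lift (inl' p₁ q₁ p₂ q₂) (fun x y hxy => ?_) h
  obtain ⟨e, he, hor⟩ := hxy
  refine ReflTransGen.single ⟨Sum.inl e, (hT₁ e).mp he, ?_⟩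
  rcases hor with h' | h'
  · exact Or.inl (by rw [glue2_ends_inl, h'])
  · exact Or.inr (by rw [glue2_ends_inl, h'])

theorem conn_inr (hT₂ : ∀ e, e ∈ T₂ ↔ Sum.inr e ∈ T) {u v : G₂.V}
    (h : conn G₂.ends T₂ u v) :
    conn (G₁.glue2 G₂ p₁ q₁ p₂ q₂).ends T (inr' p₁ q₁ p₂ q₂ u) (inr' p₁ q₁ p₂ q₂ v) := by
  refine rtg_lift (inr' p₁ q₁ p₂ q₂) (fun x y hxy => ?_) h
  obtain ⟨e, he, hor⟩ := hxy
  refine ReflTransGen.single ⟨Sum.inr e, (hT₂ e).mp he, ?_⟩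
  rcases hor with h' | h'
  · exact Or.inl (by rw [glue2_ends_inr, h'])
  · exact Or.inr (by rw [glue2_ends_inr, h'])

theorem conn_to_ident2R (hT₂ : ∀ e, e ∈ T₂ ↔ Sum.inr e ∈ T)
    {x y : (G₁.glue2 G₂ p₁ q₁ p₂ q₂).V}
    (h : conn (G₁.glue2 G₂ p₁ q₁ p₂ q₂).ends T x y) :
    conn (G₂.ident2 p₂ q₂).ends T₂ (ρ₂ p₁ q₁ p₂ q₂ x) (ρ₂ p₁ q₁ p₂ q₂ y) := by
  refine rtg_lift (ρ₂ p₁ q₁ p₂ q₂) (fun a b hab => ?_) h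
  obtain ⟨e, he, hor⟩ := hab
  rcases e with e | e
  · rcases hor with h' | h' <;>
    · rw [glue2_ends_inl] at h'
      obtain ⟨rfl, rfl⟩ := Prod.mk.inj h'
      exact ReflTransGen.refl
  · rcases hor with h' | h'
    · rw [glue2_ends_inr] at h'
      obtain ⟨rfl, rfl⟩ := Prod.mk.inj h'
      exact ReflTransGen.single ⟨e, (hT₂ e).mpr he, Or.inl rfl⟩
    · rw [glue2_ends_inr] at h'
      obtain ⟨rfl, rfl⟩ := Prod.mk.inj h'
      exact ReflTransGen.single ⟨e, (hT₂ e).mpr he, Or.inr rfl⟩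

theorem conn_to_ident2L (hT₁ : ∀ e, e ∈ T₁ ↔ Sum.inl e ∈ T)
    {x y : (G₁.glue2 G₂ p₁ q₁ p₂ q₂).V}
    (h : conn (G₁.glue2 G₂ p₁ q₁ p₂ q₂).ends T x y) :
    conn (G₁.ident2 p₁ q₁).ends T₁ (ρ₁ p₁ q₁ p₂ q₂ x) (ρ₁ p₁ q₁ p₂ q₂ y) := by
  refine rtg_lift (ρ₁ p₁ q₁ p₂ q₂) (fun a b hab => ?_) h
  obtain ⟨e, he, hor⟩ := hab
  rcases e with e | e
  · rcases hor with h' | h'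
    · rw [glue2_ends_inl] at h'
      obtain ⟨rfl, rfl⟩ := Prod.mk.inj h'
      exact ReflTransGen.single ⟨e, (hT₁ e).mpr he, Or.inl rfl⟩
    · rw [glue2_ends_inl] at h'
      obtain ⟨rfl, rfl⟩ := Prod.mk.inj h'
      exact ReflTransGen.single ⟨e, (hT₁ e).mpr he, Or.inr rfl⟩
  · rcases hor with h' | h' <;>
    · rw [glue2_ends_inr] at h'
      obtain ⟨rfl, rfl⟩ := Prod.mk.inj h'
      exact ReflTransGen.refl

theorem ψ₂_conn (hpq₂ : p₂ ≠ q₂)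
    (hPQ : conn (G₁.glue2 G₂ p₁ q₁ p₂ q₂).ends T
      (inl' p₁ q₁ p₂ q₂ p₁) (inl' p₁ q₁ p₂ q₂ q₁)) (v : G₂.V) :
    conn (G₁.glue2 G₂ p₁ q₁ p₂ q₂).ends T
      (ψ₂ p₁ q₁ p₂ q₂ hpq₂ (Quot.mk _ v)) (inr' p₁ q₁ p₂ q₂ v) := by
  by_cases h : v = q₂
  · subst h
    rw [ψ₂_mk, if_pos rfl, ← glue2_q_eq]
    exact hPQ
  · rw [ψ₂_mk, if_neg h]
    exact conn_refl _

theorem ψ₁_conn (hpq₁ : p₁ ≠ q₁)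
    (hPQ : conn (G₁.glue2 G₂ p₁ q₁ p₂ q₂).ends T
      (inl' p₁ q₁ p₂ q₂ p₁) (inl' p₁ q₁ p₂ q₂ q₁)) (v : G₁.V) :
    conn (G₁.glue2 G₂ p₁ q₁ p₂ q₂).ends T
      (ψ₁ p₁ q₁ p₂ q₂ hpq₁ (Quot.mk _ v)) (inl' p₁ q₁ p₂ q₂ v) := by
  by_cases h : v = q₁
  · subst h
    rw [ψ₁_mk, if_pos rfl, ← glue2_p_eq]
    exact hPQ
  · rw [ψ₁_mk, if_neg h]
    exact conn_refl _

theorem conn_ident2_to_glueR (hpq₂ : p₂ ≠ q₂) (hT₂ : ∀ e, e ∈ T₂ ↔ Sum.inr e ∈ T)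
    (hPQ : conn (G₁.glue2 G₂ p₁ q₁ p₂ q₂).ends T
      (inl' p₁ q₁ p₂ q₂ p₁) (inl' p₁ q₁ p₂ q₂ q₁))
    {x y : (G₂.ident2 p₂ q₂).V} (h : conn (G₂.ident2 p₂ q₂).ends T₂ x y) :
    conn (G₁.glue2 G₂ p₁ q₁ p₂ q₂).ends T
      (ψ₂ p₁ q₁ p₂ q₂ hpq₂ x) (ψ₂ p₁ q₁ p₂ q₂ hpq₂ y) := by
  refine rtg_lift (ψ₂ p₁ q₁ p₂ q₂ hpq₂) (fun a b hab => ?_) h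
  obtain ⟨e, he, hor⟩ := hab
  have hedge : conn (G₁.glue2 G₂ p₁ q₁ p₂ q₂).ends T
      (inr' p₁ q₁ p₂ q₂ (G₂.ends e).1) (inr' p₁ q₁ p₂ q₂ (G₂.ends e).2) :=
    ReflTransGen.single ⟨Sum.inr e, (hT₂ e).mp he, Or.inl rfl⟩
  rcases hor with h' | h'
  · replace h' := (ident2_ends (H := G₂) (p := p₂) (q := q₂) e).symm.trans h'
    obtain ⟨rfl, rfl⟩ := Prod.mk.inj h'
    exact conn_trans (conn_trans (ψ₂_conn p₁ q₁ p₂ q₂ hpq₂ hPQ _) hedge)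
      (conn_symm (ψ₂_conn p₁ q₁ p₂ q₂ hpq₂ hPQ _))
  · replace h' := (ident2_ends (H := G₂) (p := p₂) (q := q₂) e).symm.trans h'
    obtain ⟨rfl, rfl⟩ := Prod.mk.inj h'
    exact conn_trans (conn_trans (ψ₂_conn p₁ q₁ p₂ q₂ hpq₂ hPQ _) (conn_symm hedge))
      (conn_symm (ψ₂_conn p₁ q₁ p₂ q₂ hpq₂ hPQ _))

theorem conn_ident2_to_glueL (hpq₁ : p₁ ≠ q₁) (hT₁ : ∀ e, e ∈ T₁ ↔ Sum.inl e ∈ T)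
    (hPQ : conn (G₁.glue2 G₂ p₁ q₁ p₂ q₂).ends T
      (inl' p₁ q₁ p₂ q₂ p₁) (inl' p₁ q₁ p₂ q₂ q₁))
    {x y : (G₁.ident2 p₁ q₁).V} (h : conn (G₁.ident2 p₁ q₁).ends T₁ x y) :
    conn (G₁.glue2 G₂ p₁ q₁ p₂ q₂).ends T
      (ψ₁ p₁ q₁ p₂ q₂ hpq₁ x) (ψ₁ p₁ q₁ p₂ q₂ hpq₁ y) := by
  refine rtg_lift (ψ₁ p₁ q₁ p₂ q₂ hpq₁) (fun a b hab => ?_) h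
  obtain ⟨e, he, hor⟩ := hab
  have hedge : conn (G₁.glue2 G₂ p₁ q₁ p₂ q₂).ends T
      (inl' p₁ q₁ p₂ q₂ (G₁.ends e).1) (inl' p₁ q₁ p₂ q₂ (G₁.ends e).2) :=
    ReflTransGen.single ⟨Sum.inl e, (hT₁ e).mp he, Or.inl rfl⟩
  rcases hor with h' | h'
  · replace h' := (ident2_ends (H := G₁) (p := p₁) (q := q₁) e).symm.trans h'
    obtain ⟨rfl, rfl⟩ := Prod.mk.inj h'
    exact conn_trans (conn_trans (ψ₁_conn p₁ q₁ p₂ q₂ hpq₁ hPQ _) hedge)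
      (conn_symm (ψ₁_conn p₁ q₁ p₂ q₂ hpq₁ hPQ _))
  · replace h' := (ident2_ends (H := G₁) (p := p₁) (q := q₁) e).symm.trans h'
    obtain ⟨rfl, rfl⟩ := Prod.mk.inj h'
    exact conn_trans (conn_trans (ψ₁_conn p₁ q₁ p₂ q₂ hpq₁ hPQ _) (conn_symm hedge))
      (conn_symm (ψ₁_conn p₁ q₁ p₂ q₂ hpq₁ hPQ _))

end Transfer

end STProof

namespace STProof

open Relation

section Retract

variable {G₁ G₂ : WMG} (p₁ q₁ : G₁.V) (p₂ q₂ : G₂.V)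

/-- Edge relation together with a "jump" between `p` and `q`. -/
def jrel {V E : Type} (ends : E → V × V) (T : Finset E) (p q : V) (x y : V) : Prop :=
  erel ends T x y ∨ (x = p ∧ y = q) ∨ (x = q ∧ y = p)

theorem jrel_rtg_le {V E : Type} {ends : E → V × V} {T : Finset E} {p q : V}
    (hpq : conn ends T p q) {x y : V}
    (h : ReflTransGen (jrel ends T p q) x y) : conn ends T x y := by
  refine rtg_lift id (fun a b hab => ?_) h
  rcases hab with hab | ⟨rfl, rfl⟩ | ⟨rfl, rfl⟩
  · exact ReflTransGen.single hab
  · exact hpq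
  · exact conn_symm hpq

noncomputable def σ₁ (hpq₂ : p₂ ≠ q₂) : (G₁.glue2 G₂ p₁ q₁ p₂ q₂).V → G₁.V :=
  Quot.lift (Sum.elim id (fun v => if v = q₂ then q₁ else p₁))
    (by rintro x y (⟨rfl, rfl⟩ | ⟨rfl, rfl⟩) <;> simp [hpq₂])

noncomputable def σ₂ (hpq₁ : p₁ ≠ q₁) : (G₁.glue2 G₂ p₁ q₁ p₂ q₂).V → G₂.V :=
  Quot.lift (Sum.elim (fun v => if v = q₁ then q₂ else p₂) id)
    (by rintro x y (⟨rfl, rfl⟩ | ⟨rfl, rfl⟩) <;> simp [hpq₁])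

theorem σ₁_inl (hpq₂ : p₂ ≠ q₂) (v : G₁.V) :
    σ₁ p₁ q₁ p₂ q₂ hpq₂ (inl' p₁ q₁ p₂ q₂ v) = v := rfl

theorem σ₂_inr (hpq₁ : p₁ ≠ q₁) (v : G₂.V) :
    σ₂ p₁ q₁ p₂ q₂ hpq₁ (inr' p₁ q₁ p₂ q₂ v) = v := rfl

variable {T : Finset (G₁.E ⊕ G₂.E)} {T₁ : Finset G₁.E} {T₂ : Finset G₂.E}

theorem conn_to_G₁ (hpq₂ : p₂ ≠ q₂) (hT₁ : ∀ e, e ∈ T₁ ↔ Sum.inl e ∈ T)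
    (hc : conn G₁.ends T₁ p₁ q₁) {x y : (G₁.glue2 G₂ p₁ q₁ p₂ q₂).V}
    (h : conn (G₁.glue2 G₂ p₁ q₁ p₂ q₂).ends T x y) :
    conn G₁.ends T₁ (σ₁ p₁ q₁ p₂ q₂ hpq₂ x) (σ₁ p₁ q₁ p₂ q₂ hpq₂ y) := by
  have hval : ∀ v : G₂.V, σ₁ p₁ q₁ p₂ q₂ hpq₂ (inr' p₁ q₁ p₂ q₂ v) = p₁ ∨
      σ₁ p₁ q₁ p₂ q₂ hpq₂ (inr' p₁ q₁ p₂ q₂ v) = q₁ := by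
    intro v
    by_cases hv : v = q₂
    · right
      show (if v = q₂ then q₁ else p₁) = q₁
      rw [if_pos hv]
    · left
      show (if v = q₂ then q₁ else p₁) = p₁
      rw [if_neg hv]
  have hjump : ∀ u w : G₁.V, (u = p₁ ∨ u = q₁) → (w = p₁ ∨ w = q₁) →
      ReflTransGen (jrel G₁.ends T₁ p₁ q₁) u w := by
    rintro u w (rfl | rfl) (rfl | rfl)
    exacts [ReflTransGen.refl, ReflTransGen.single (Or.inr (Or.inl ⟨rfl, rfl⟩)),
      ReflTransGen.single (Or.inr (Or.inr ⟨rfl, rfl⟩)), ReflTransGen.refl]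
  have key : ReflTransGen (jrel G₁.ends T₁ p₁ q₁)
      (σ₁ p₁ q₁ p₂ q₂ hpq₂ x) (σ₁ p₁ q₁ p₂ q₂ hpq₂ y) := by
    refine rtg_lift (σ₁ p₁ q₁ p₂ q₂ hpq₂) (fun a b hab => ?_) h
    obtain ⟨e, he, hor⟩ := hab
    rcases e with e | e
    · rcases hor with h' | h'
      · rw [glue2_ends_inl] at h'
        obtain ⟨rfl, rfl⟩ := Prod.mk.inj h'
        exact ReflTransGen.single (Or.inl ⟨e, (hT₁ e).mpr he, Or.inl rfl⟩)
      · rw [glue2_ends_inl] at h'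
        obtain ⟨rfl, rfl⟩ := Prod.mk.inj h'
        exact ReflTransGen.single (Or.inl ⟨e, (hT₁ e).mpr he, Or.inr rfl⟩)
    · rcases hor with h' | h' <;>
      · rw [glue2_ends_inr] at h'
        obtain ⟨rfl, rfl⟩ := Prod.mk.inj h'
        exact hjump _ _ (hval _) (hval _)
  exact jrel_rtg_le hc key

theorem conn_to_G₂ (hpq₁ : p₁ ≠ q₁) (hT₂ : ∀ e, e ∈ T₂ ↔ Sum.inr e ∈ T)
    (hc : conn G₂.ends T₂ p₂ q₂) {x y : (G₁.glue2 G₂ p₁ q₁ p₂ q₂).V}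
    (h : conn (G₁.glue2 G₂ p₁ q₁ p₂ q₂).ends T x y) :
    conn G₂.ends T₂ (σ₂ p₁ q₁ p₂ q₂ hpq₁ x) (σ₂ p₁ q₁ p₂ q₂ hpq₁ y) := by
  have hval : ∀ v : G₁.V, σ₂ p₁ q₁ p₂ q₂ hpq₁ (inl' p₁ q₁ p₂ q₂ v) = p₂ ∨
      σ₂ p₁ q₁ p₂ q₂ hpq₁ (inl' p₁ q₁ p₂ q₂ v) = q₂ := by
    intro v
    by_cases hv : v = q₁
    · right
      show (if v = q₁ then q₂ else p₂) = q₂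
      rw [if_pos hv]
    · left
      show (if v = q₁ then q₂ else p₂) = p₂
      rw [if_neg hv]
  have hjump : ∀ u w : G₂.V, (u = p₂ ∨ u = q₂) → (w = p₂ ∨ w = q₂) →
      ReflTransGen (jrel G₂.ends T₂ p₂ q₂) u w := by
    rintro u w (rfl | rfl) (rfl | rfl)
    exacts [ReflTransGen.refl, ReflTransGen.single (Or.inr (Or.inl ⟨rfl, rfl⟩)),
      ReflTransGen.single (Or.inr (Or.inr ⟨rfl, rfl⟩)), ReflTransGen.refl]
  have key : ReflTransGen (jrel G₂.ends T₂ p₂ q₂)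
      (σ₂ p₁ q₁ p₂ q₂ hpq₁ x) (σ₂ p₁ q₁ p₂ q₂ hpq₁ y) := by
    refine rtg_lift (σ₂ p₁ q₁ p₂ q₂ hpq₁) (fun a b hab => ?_) h
    obtain ⟨e, he, hor⟩ := hab
    rcases e with e | e
    · rcases hor with h' | h' <;>
      · rw [glue2_ends_inl] at h'
        obtain ⟨rfl, rfl⟩ := Prod.mk.inj h'
        exact hjump _ _ (hval _) (hval _)
    · rcases hor with h' | h'
      · rw [glue2_ends_inr] at h'
        obtain ⟨rfl, rfl⟩ := Prod.mk.inj h'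
        exact ReflTransGen.single (Or.inl ⟨e, (hT₂ e).mpr he, Or.inl rfl⟩)
      · rw [glue2_ends_inr] at h'
        obtain ⟨rfl, rfl⟩ := Prod.mk.inj h'
        exact ReflTransGen.single (Or.inl ⟨e, (hT₂ e).mpr he, Or.inr rfl⟩)
  exact jrel_rtg_le hc key

/-- If `p` and `q` are joined in the glued graph, they are joined within one piece. -/
theorem conn_pq_or (hT₁ : ∀ e, e ∈ T₁ ↔ Sum.inl e ∈ T) (hT₂ : ∀ e, e ∈ T₂ ↔ Sum.inr e ∈ T)
    (hPQ : conn (G₁.glue2 G₂ p₁ q₁ p₂ q₂).ends T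
      (inl' p₁ q₁ p₂ q₂ p₁) (inl' p₁ q₁ p₂ q₂ q₁)) :
    conn G₁.ends T₁ p₁ q₁ ∨ conn G₂.ends T₂ p₂ q₂ := by
  by_contra hcon
  rw [not_or] at hcon
  obtain ⟨hn₁, hn₂⟩ := hcon
  let col : (G₁.glue2 G₂ p₁ q₁ p₂ q₂).V → Prop :=
    Quot.lift (Sum.elim (fun v => conn G₁.ends T₁ v p₁) (fun v => conn G₂.ends T₂ v p₂))
      (by rintro x y (⟨rfl, rfl⟩ | ⟨rfl, rfl⟩)
          · exact propext (iff_of_true (conn_refl _) (conn_refl _))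
          · exact propext (iff_of_false (fun h => hn₁ (conn_symm h))
              (fun h => hn₂ (conn_symm h))))
  have hstep : ∀ a b, erel (G₁.glue2 G₂ p₁ q₁ p₂ q₂).ends T a b → (col a ↔ col b) := by
    rintro a b ⟨e, he, hor⟩
    rcases e with e | e
    · have hs : erel G₁.ends T₁ (G₁.ends e).1 (G₁.ends e).2 := ⟨e, (hT₁ e).mpr he, Or.inl rfl⟩
      have hiff : conn G₁.ends T₁ (G₁.ends e).1 p₁ ↔ conn G₁.ends T₁ (G₁.ends e).2 p₁ :=
        ⟨fun h => conn_trans (ReflTransGen.single (erel_symm hs)) h,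
         fun h => conn_trans (ReflTransGen.single hs) h⟩
      rcases hor with h' | h'
      · rw [glue2_ends_inl] at h'
        obtain ⟨rfl, rfl⟩ := Prod.mk.inj h'
        exact hiff
      · rw [glue2_ends_inl] at h'
        obtain ⟨rfl, rfl⟩ := Prod.mk.inj h'
        exact hiff.symm
    · have hs : erel G₂.ends T₂ (G₂.ends e).1 (G₂.ends e).2 := ⟨e, (hT₂ e).mpr he, Or.inl rfl⟩
      have hiff : conn G₂.ends T₂ (G₂.ends e).1 p₂ ↔ conn G₂.ends T₂ (G₂.ends e).2 p₂ :=
        ⟨fun h => conn_trans (ReflTransGen.single (erel_symm hs)) h,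
         fun h => conn_trans (ReflTransGen.single hs) h⟩
      rcases hor with h' | h'
      · rw [glue2_ends_inr] at h'
        obtain ⟨rfl, rfl⟩ := Prod.mk.inj h'
        exact hiff
      · rw [glue2_ends_inr] at h'
        obtain ⟨rfl, rfl⟩ := Prod.mk.inj h'
        exact hiff.symm
  have hcol : ∀ x y, conn (G₁.glue2 G₂ p₁ q₁ p₂ q₂).ends T x y → (col x ↔ col y) := by
    intro x y h
    induction h with
    | refl => exact Iff.rfl
    | tail _ hs ih => exact ih.trans (hstep _ _ hs)
  have h1 : col (inl' p₁ q₁ p₂ q₂ p₁) := conn_refl p₁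
  have h2 : col (inl' p₁ q₁ p₂ q₂ q₁) := (hcol _ _ hPQ).mp h1
  exact hn₁ (conn_symm h2)

end Retract

end STProof

namespace STProof

open Relation

section Main

variable {G₁ G₂ : WMG} {p₁ q₁ : G₁.V} {p₂ q₂ : G₂.V}
variable {T : Finset (G₁.E ⊕ G₂.E)} {T₁ : Finset G₁.E} {T₂ : Finset G₂.E}

theorem main_iff (hpq₁ : p₁ ≠ q₁) (hpq₂ : p₂ ≠ q₂)
    (hT₁ : ∀ e, e ∈ T₁ ↔ Sum.inl e ∈ T) (hT₂ : ∀ e, e ∈ T₂ ↔ Sum.inr e ∈ T) :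
    (G₁.glue2 G₂ p₁ q₁ p₂ q₂).IsSpanningTree T ↔
      (G₁.IsSpanningTree T₁ ∧ (G₂.ident2 p₂ q₂).IsSpanningTree T₂) ∨
      (G₂.IsSpanningTree T₂ ∧ (G₁.ident2 p₁ q₁).IsSpanningTree T₁) := by
  have hn₁ : 1 < Fintype.card G₁.V := Fintype.one_lt_card_iff.mpr ⟨p₁, q₁, hpq₁⟩
  have hn₂ : 1 < Fintype.card G₂.V := Fintype.one_lt_card_iff.mpr ⟨p₂, q₂, hpq₂⟩
  have hcardV : Fintype.card (G₁.glue2 G₂ p₁ q₁ p₂ q₂).V =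
      Fintype.card G₁.V + (Fintype.card G₂.V - 2) := glue2_card hpq₂
  have hTsum : T = T₁.disjSum T₂ := by
    ext x
    rcases x with e | e
    · rw [Finset.inl_mem_disjSum]
      exact (hT₁ e).symm
    · rw [Finset.inr_mem_disjSum]
      exact (hT₂ e).symm
  have hsplit : T.card = T₁.card + T₂.card := by
    rw [hTsum, Finset.card_disjSum]
  have hcT : @Finset.card (G₁.glue2 G₂ p₁ q₁ p₂ q₂).E T = @Finset.card (G₁.E ⊕ G₂.E) T := rfl
  have hcT₁ : @Finset.card (G₁.ident2 p₁ q₁).E T₁ = @Finset.card G₁.E T₁ := rfl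
  have hcT₂ : @Finset.card (G₂.ident2 p₂ q₂).E T₂ = @Finset.card G₂.E T₂ := rfl
  constructor
  · intro hST
    obtain ⟨hconn, hcard⟩ := (st_iff _ _).mp hST
    have hconnI₂ : ∀ x y : (G₂.ident2 p₂ q₂).V, conn (G₂.ident2 p₂ q₂).ends T₂ x y := by
      intro x y
      obtain ⟨u, rfl⟩ := Quot.exists_rep x
      obtain ⟨v, rfl⟩ := Quot.exists_rep y
      exact conn_to_ident2R p₁ q₁ p₂ q₂ hT₂
        (hconn (inr' p₁ q₁ p₂ q₂ u) (inr' p₁ q₁ p₂ q₂ v))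
    have hconnI₁ : ∀ x y : (G₁.ident2 p₁ q₁).V, conn (G₁.ident2 p₁ q₁).ends T₁ x y := by
      intro x y
      obtain ⟨u, rfl⟩ := Quot.exists_rep x
      obtain ⟨v, rfl⟩ := Quot.exists_rep y
      exact conn_to_ident2L p₁ q₁ p₂ q₂ hT₁
        (hconn (inl' p₁ q₁ p₂ q₂ u) (inl' p₁ q₁ p₂ q₂ v))
    have hI₂card : Fintype.card G₂.V - 1 ≤ T₂.card + 1 := by
      have := card_le_of_conn hconnI₂
      rwa [ident2_card hpq₂] at this
    have hI₁card : Fintype.card G₁.V - 1 ≤ T₁.card + 1 := by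
      have := card_le_of_conn hconnI₁
      rwa [ident2_card hpq₁] at this
    by_cases hc : conn G₁.ends T₁ p₁ q₁
    · left
      have hconn₁ : ∀ u v : G₁.V, conn G₁.ends T₁ u v := by
        intro u v
        exact conn_to_G₁ p₁ q₁ p₂ q₂ hpq₂ hT₁ hc
          (hconn (inl' p₁ q₁ p₂ q₂ u) (inl' p₁ q₁ p₂ q₂ v))
      have h1 : Fintype.card G₁.V ≤ T₁.card + 1 := card_le_of_conn hconn₁
      refine ⟨(st_iff _ _).mpr ⟨hconn₁, ?_⟩, (st_iff _ _).mpr ⟨hconnI₂, ?_⟩⟩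
      · rw [hcardV] at hcard
        omega
      · rw [ident2_card hpq₂]
        rw [hcardV] at hcard
        omega
    · right
      have hc₂ : conn G₂.ends T₂ p₂ q₂ := by
        rcases conn_pq_or p₁ q₁ p₂ q₂ hT₁ hT₂ (hconn _ _) with h | h
        · exact absurd h hc
        · exact h
      have hconn₂ : ∀ u v : G₂.V, conn G₂.ends T₂ u v := by
        intro u v
        exact conn_to_G₂ p₁ q₁ p₂ q₂ hpq₁ hT₂ hc₂
          (hconn (inr' p₁ q₁ p₂ q₂ u) (inr' p₁ q₁ p₂ q₂ v))
      have h2 : Fintype.card G₂.V ≤ T₂.card + 1 := card_le_of_conn hconn₂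
      have hc₁ : ¬ (Fintype.card G₁.V ≤ T₁.card) := by
        intro hle
        -- too many edges in G₁ side: count
        rw [hcardV] at hcard
        -- then T₂.card ≤ n₂ - 2, contradicting h2? derive contradiction via totals
        omega
      refine ⟨(st_iff _ _).mpr ⟨hconn₂, ?_⟩, (st_iff _ _).mpr ⟨hconnI₁, ?_⟩⟩
      · rw [hcardV] at hcard
        omega
      · rw [ident2_card hpq₁]
        rw [hcardV] at hcard
        omega
  · rintro (⟨hA₁, hA₂⟩ | ⟨hB₂, hB₁⟩)
    · obtain ⟨hA₁c, hA₁card⟩ := (st_iff _ _).mp hA₁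
      obtain ⟨hA₂c, hA₂card⟩ := (st_iff _ _).mp hA₂
      rw [ident2_card hpq₂] at hA₂card
      have hPQ : conn (G₁.glue2 G₂ p₁ q₁ p₂ q₂).ends T
          (inl' p₁ q₁ p₂ q₂ p₁) (inl' p₁ q₁ p₂ q₂ q₁) :=
        conn_inl p₁ q₁ p₂ q₂ hT₁ (hA₁c p₁ q₁)
      have toP : ∀ x : (G₁.glue2 G₂ p₁ q₁ p₂ q₂).V,
          conn (G₁.glue2 G₂ p₁ q₁ p₂ q₂).ends T x (inl' p₁ q₁ p₂ q₂ p₁) := by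
        intro x
        rcases glue2_surj x with ⟨v, rfl⟩ | ⟨v, rfl⟩
        · exact conn_inl p₁ q₁ p₂ q₂ hT₁ (hA₁c v p₁)
        · have h4 := conn_ident2_to_glueR p₁ q₁ p₂ q₂ hpq₂ hT₂ hPQ
            (hA₂c (Quot.mk _ v) (Quot.mk _ p₂))
          have hψp : ψ₂ p₁ q₁ p₂ q₂ hpq₂ (Quot.mk _ p₂) = inl' p₁ q₁ p₂ q₂ p₁ := by
            rw [ψ₂_mk, if_neg hpq₂, ← glue2_p_eq]
          have hψv := ψ₂_conn p₁ q₁ p₂ q₂ hpq₂ hPQ v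
          exact conn_trans (conn_symm hψv) (hψp ▸ h4)
      refine (st_iff _ _).mpr ⟨fun x y => conn_trans (toP x) (conn_symm (toP y)), ?_⟩
      rw [hcardV]
      omega
    · obtain ⟨hB₂c, hB₂card⟩ := (st_iff _ _).mp hB₂
      obtain ⟨hB₁c, hB₁card⟩ := (st_iff _ _).mp hB₁
      rw [ident2_card hpq₁] at hB₁card
      have hPQ : conn (G₁.glue2 G₂ p₁ q₁ p₂ q₂).ends T
          (inl' p₁ q₁ p₂ q₂ p₁) (inl' p₁ q₁ p₂ q₂ q₁) := by
        rw [glue2_p_eq, glue2_q_eq]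
        exact conn_inr p₁ q₁ p₂ q₂ hT₂ (hB₂c p₂ q₂)
      have toP : ∀ x : (G₁.glue2 G₂ p₁ q₁ p₂ q₂).V,
          conn (G₁.glue2 G₂ p₁ q₁ p₂ q₂).ends T x (inr' p₁ q₁ p₂ q₂ p₂) := by
        intro x
        rcases glue2_surj x with ⟨v, rfl⟩ | ⟨v, rfl⟩
        · have h4 := conn_ident2_to_glueL p₁ q₁ p₂ q₂ hpq₁ hT₁ hPQ
            (hB₁c (Quot.mk _ v) (Quot.mk _ p₁))
          have hψp : ψ₁ p₁ q₁ p₂ q₂ hpq₁ (Quot.mk _ p₁) = inr' p₁ q₁ p₂ q₂ p₂ := by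
            rw [ψ₁_mk, if_neg hpq₁, glue2_p_eq]
          have hψv := ψ₁_conn p₁ q₁ p₂ q₂ hpq₁ hPQ v
          exact conn_trans (conn_symm hψv) (hψp ▸ h4)
        · exact conn_inr p₁ q₁ p₂ q₂ hT₂ (hB₂c v p₂)
      refine (st_iff _ _).mpr ⟨fun x y => conn_trans (toP x) (conn_symm (toP y)), ?_⟩
      rw [hcardV]
      omega

end Main

end STProof

namespace STProof

noncomputable def finsetSumEquiv {α β : Type} : Finset (α ⊕ β) ≃ Finset α × Finset β where
  toFun T := (T.preimage Sum.inl Sum.inl_injective.injOn,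
              T.preimage Sum.inr Sum.inr_injective.injOn)
  invFun P := P.1.disjSum P.2
  left_inv T := by
    ext x
    rcases x with e | e
    · simp [Finset.inl_mem_disjSum, Finset.mem_preimage]
    · simp [Finset.inr_mem_disjSum, Finset.mem_preimage]
  right_inv P := by
    refine Prod.ext ?_ ?_ <;> ext e <;>
      simp [Finset.mem_preimage, Finset.inl_mem_disjSum, Finset.inr_mem_disjSum]

end STProof

theorem spanning_trees_of_two_vertex_union' (G₁ G₂ : WMG)
    (p₁ q₁ : G₁.V) (p₂ q₂ : G₂.V) (hpq₁ : p₁ ≠ q₁) (hpq₂ : p₂ ≠ q₂) :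
    (G₁.glue2 G₂ p₁ q₁ p₂ q₂).t =
      G₁.t * (G₂.ident2 p₂ q₂).t + G₂.t * (G₁.ident2 p₁ q₁).t := by
  classical
  set pre₁ : Finset (G₁.E ⊕ G₂.E) → Finset G₁.E :=
    fun T => T.preimage Sum.inl Sum.inl_injective.injOn with hpre₁
  set pre₂ : Finset (G₁.E ⊕ G₂.E) → Finset G₂.E :=
    fun T => T.preimage Sum.inr Sum.inr_injective.injOn with hpre₂
  set A : Finset (G₁.E ⊕ G₂.E) → Prop := fun T =>
    G₁.IsSpanningTree (pre₁ T) ∧ (G₂.ident2 p₂ q₂).IsSpanningTree (pre₂ T) with hA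
  set B : Finset (G₁.E ⊕ G₂.E) → Prop := fun T =>
    G₂.IsSpanningTree (pre₂ T) ∧ (G₁.ident2 p₁ q₁).IsSpanningTree (pre₁ T) with hB
  have key : ∀ T : Finset (G₁.E ⊕ G₂.E),
      (G₁.glue2 G₂ p₁ q₁ p₂ q₂).IsSpanningTree T ↔ A T ∨ B T := by
    intro T
    exact STProof.main_iff hpq₁ hpq₂
      (fun e => Finset.mem_preimage) (fun e => Finset.mem_preimage)
  have hn₁ : 1 < Fintype.card G₁.V := Fintype.one_lt_card_iff.mpr ⟨p₁, q₁, hpq₁⟩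
  have hdisj : Disjoint A B := by
    rw [Pi.disjoint_iff]
    intro T
    rw [Prop.disjoint_iff]
    rintro ⟨⟨hA₁, -⟩, ⟨-, hB₁⟩⟩
    have h1 := hA₁.2
    have h2 := hB₁.2
    rw [STProof.ident2_card hpq₁] at h2
    have hc : @Finset.card (G₁.ident2 p₁ q₁).E (pre₁ T) = @Finset.card G₁.E (pre₁ T) := rfl
    omega
  have step0 : (G₁.glue2 G₂ p₁ q₁ p₂ q₂).t =
      Nat.card {T : Finset (G₁.E ⊕ G₂.E) //
        (G₁.glue2 G₂ p₁ q₁ p₂ q₂).IsSpanningTree T} := rfl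
  have step1 : (G₁.glue2 G₂ p₁ q₁ p₂ q₂).t =
      Nat.card {T : Finset (G₁.E ⊕ G₂.E) // A T ∨ B T} := by
    rw [step0]
    exact Nat.card_congr (Equiv.subtypeEquivRight key)
  have step2 : Nat.card {T : Finset (G₁.E ⊕ G₂.E) // A T ∨ B T} =
      Nat.card {T : Finset (G₁.E ⊕ G₂.E) // A T} +
      Nat.card {T : Finset (G₁.E ⊕ G₂.E) // B T} := by
    rw [Nat.card_congr (subtypeOrEquiv A B hdisj), Nat.card_sum]
  have stepA : Nat.card {T : Finset (G₁.E ⊕ G₂.E) // A T} =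
      G₁.t * (G₂.ident2 p₂ q₂).t := by
    have e1 : {T : Finset (G₁.E ⊕ G₂.E) // A T} ≃
        {P : Finset G₁.E × Finset G₂.E //
          G₁.IsSpanningTree P.1 ∧ (G₂.ident2 p₂ q₂).IsSpanningTree P.2} :=
      (STProof.finsetSumEquiv).subtypeEquiv (fun T => Iff.rfl)
    rw [Nat.card_congr (e1.trans (Equiv.subtypeProdEquivProd (p := G₁.IsSpanningTree) (q := (G₂.ident2 p₂ q₂).IsSpanningTree))), Nat.card_prod]
    rfl
  have stepB : Nat.card {T : Finset (G₁.E ⊕ G₂.E) // B T} =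
      G₂.t * (G₁.ident2 p₁ q₁).t := by
    have e0 : {T : Finset (G₁.E ⊕ G₂.E) // B T} ≃
        {P : Finset G₁.E × Finset G₂.E //
          (G₁.ident2 p₁ q₁).IsSpanningTree P.1 ∧ G₂.IsSpanningTree P.2} :=
      (STProof.finsetSumEquiv).subtypeEquiv (fun T => and_comm)
    rw [Nat.card_congr (e0.trans (Equiv.subtypeProdEquivProd (p := (G₁.ident2 p₁ q₁).IsSpanningTree) (q := G₂.IsSpanningTree))), Nat.card_prod]
    rw [Nat.mul_comm]
    rfl
  rw [step1, step2, stepA, stepB]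

/-- If the connected multigraph `G` is the union of two connected subgraphs
`G₁, G₂` sharing exactly two vertices `p, q` (and no edges), then
`t(G) = t(G₁) t(G₂,_{pq}) + t(G₂) t(G₁,_{pq})`. -/
theorem spanning_trees_of_two_vertex_union (G₁ G₂ : WMG)
    (h₁ : G₁.Connected) (h₂ : G₂.Connected)
    (p₁ q₁ : G₁.V) (p₂ q₂ : G₂.V) (hpq₁ : p₁ ≠ q₁) (hpq₂ : p₂ ≠ q₂) :
    (G₁.glue2 G₂ p₁ q₁ p₂ q₂).t =
      G₁.t * (G₂.ident2 p₂ q₂).t + G₂.t * (G₁.ident2 p₁ q₁).t := by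
  exact spanning_trees_of_two_vertex_union' G₁ G₂ p₁ q₁ p₂ q₂ hpq₁ hpq₂
end

section
/- Let G = ⋃_{i=1}^{k} G_i be a connected multigraph which is the union of k subgraphs with G_i ∩ G_j = {p, q} for every pair of distinct indices i, j. Then t(G) = ( ∏_{j=1}^{k} t(G_{j,pq}) ) · Σ_{i=1}^{k} t(G_i)/t(G_{i,pq}), where G_{j,pq} is obtained from G_j by identifying p and q. In particular, if every G_i is a copy of the same graph G₁ (glued along the same two vertices p, q), then t(G) = k·t(G₁)·t(G_{1,pq})^{k−1}. -/
open scoped Classical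

section BananaAux
open Relation
set_option linter.unusedSectionVars false
namespace Banana

variable {α : Type*}

def pairS (a b : α) : α → α → Prop := fun x y => (x = a ∧ y = b) ∨ (x = b ∧ y = a)

lemma pairS_symm {a b x y : α} (h : pairS a b x y) : pairS a b y x := by
  rcases h with ⟨h1, h2⟩ | ⟨h1, h2⟩
  · exact Or.inr ⟨h2, h1⟩
  · exact Or.inl ⟨h2, h1⟩

lemma eqvGen_pairS_iff {a b x y : α} :
    EqvGen (pairS a b) x y ↔ x = y ∨ pairS a b x y := by
  constructor
  · intro h
    induction h with
    | rel x y h => exact Or.inr h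
    | refl x => exact Or.inl rfl
    | symm x y _ ih =>
      rcases ih with h | h
      · exact Or.inl h.symm
      · exact Or.inr (pairS_symm h)
    | trans x y z _ _ ih1 ih2 =>
      rcases ih1 with rfl | h1
      · exact ih2
      · rcases ih2 with rfl | h2
        · exact Or.inr h1
        · unfold pairS at h1 h2 ⊢
          aesop
  · rintro (rfl | h)
    · exact EqvGen.refl _
    · exact EqvGen.rel _ _ h

/-- Transfer `Quot` across relations with the same `EqvGen`. -/
def quotCongrRel {r s : α → α → Prop} (hrs : ∀ x y, r x y → EqvGen s x y)
    (hsr : ∀ x y, s x y → EqvGen r x y) : Quot r ≃ Quot s where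
  toFun := Quot.lift (Quot.mk s) (fun x y h => Quot.eqvGen_sound (hrs x y h))
  invFun := Quot.lift (Quot.mk r) (fun x y h => Quot.eqvGen_sound (hsr x y h))
  left_inv := by rintro ⟨x⟩; rfl
  right_inv := by rintro ⟨x⟩; rfl

/-- `Quot (pairS a b) ≃ {x // x ≠ a}` when `a ≠ b`. -/
noncomputable def quotPairSEquiv {a b : α} (hab : a ≠ b) : Quot (pairS a b) ≃ {x : α // x ≠ a} where
  toFun := Quot.lift (fun x => if hx : x = a then ⟨b, (Ne.symm hab)⟩ else ⟨x, hx⟩) (by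
    rintro x y (⟨rfl, rfl⟩ | ⟨rfl, rfl⟩) <;> simp [hab, Ne.symm hab])
  invFun := fun y => Quot.mk _ y.1
  left_inv := by
    rintro ⟨x⟩
    show Quot.mk _ _ = _
    by_cases hx : x = a
    · subst hx
      simp only [dif_pos]
      exact (Quot.sound (Or.inr ⟨rfl, rfl⟩))
    · simp only [dif_neg hx]
  right_inv := by
    rintro ⟨y, hy⟩
    show (if hx : y = a then _ else _) = _
    simp only [dif_neg hy]

lemma card_quot_pairS [Finite α] {a b : α} (hab : a ≠ b) :
    Nat.card (Quot (pairS a b)) + 1 = Nat.card α := by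
  have : Fintype α := Fintype.ofFinite α
  rw [Nat.card_congr (quotPairSEquiv hab), Nat.card_eq_fintype_card, Nat.card_eq_fintype_card]
  have h1 : Fintype.card {x : α // ¬ x = a} = Fintype.card α - Fintype.card {x : α // x = a} :=
    Fintype.card_subtype_compl _
  have h2 : Fintype.card {x : α // x = a} = 1 := Fintype.card_subtype_eq a
  have h3 : 1 ≤ Fintype.card α := Fintype.card_pos_iff.mpr ⟨a⟩
  have : Fintype.card {x : α // x ≠ a} = Fintype.card {x : α // ¬ x = a} := rfl
  omega


variable {E : Type*}

def stepRel (endp : E → α × α) (T : Finset E) : α → α → Prop :=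
  fun x y => ∃ e ∈ T, endp e = (x, y) ∨ endp e = (y, x)

lemma stepRel_symm {endp : E → α × α} {T : Finset E} {x y : α} (h : stepRel endp T x y) :
    stepRel endp T y x := by obtain ⟨e, he, h⟩ := h; exact ⟨e, he, h.symm⟩
lemma stepRel_insert (endp : E → α × α) (e : E) (T : Finset E) :
    stepRel endp (insert e T) =
      fun x y => stepRel endp T x y ∨ pairS (endp e).1 (endp e).2 x y := by
  funext x y
  apply propext
  constructor
  · rintro ⟨f, hf, h⟩
    rcases Finset.mem_insert.mp hf with rfl | hf
    · refine Or.inr ?_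
      rcases h with h | h
      · exact Or.inl ⟨by rw [h], by rw [h]⟩
      · exact Or.inr ⟨by rw [h], by rw [h]⟩
    · exact Or.inl ⟨f, hf, h⟩
  · rintro (⟨f, hf, h⟩ | h)
    · exact ⟨f, Finset.mem_insert_of_mem hf, h⟩
    · refine ⟨e, Finset.mem_insert_self e T, ?_⟩
      rcases h with ⟨h1, h2⟩ | ⟨h1, h2⟩
      · exact Or.inl (by rw [h1, h2])
      · exact Or.inr (by rw [h1, h2])
lemma mono_stepRel {endp : E → α × α} {T T' : Finset E} (hT : T' ⊆ T) {x y : α}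
    (h : stepRel endp T' x y) : stepRel endp T x y := by
  obtain ⟨e, he, h⟩ := h; exact ⟨e, hT he, h⟩
def quotSupPairEquiv (r : α → α → Prop) (a b : α) :
    Quot (fun x y => r x y ∨ pairS a b x y) ≃ Quot (pairS (Quot.mk r a) (Quot.mk r b)) where
  toFun := Quot.lift (fun x => Quot.mk _ (Quot.mk r x)) (by
    rintro x y (h | (⟨rfl, rfl⟩ | ⟨rfl, rfl⟩))
    · show Quot.mk _ (Quot.mk r x) = Quot.mk _ (Quot.mk r y)
      rw [Quot.sound h]
    · exact Quot.sound (Or.inl ⟨rfl, rfl⟩)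
    · exact Quot.sound (Or.inr ⟨rfl, rfl⟩))
  invFun := Quot.lift
    (Quot.lift (fun x => Quot.mk (fun x y => r x y ∨ pairS a b x y) x)
      (fun x y h => Quot.sound (Or.inl h))) (by
    rintro x y (⟨rfl, rfl⟩ | ⟨rfl, rfl⟩)
    · exact Quot.sound (Or.inr (Or.inl ⟨rfl, rfl⟩))
    · exact Quot.sound (Or.inr (Or.inr ⟨rfl, rfl⟩)))
  left_inv := by rintro ⟨x⟩; rfl
  right_inv := by rintro ⟨⟨x⟩⟩; rfl
lemma eqvGen_sup_of_related {r : α → α → Prop} {a b : α} (hab : EqvGen r a b) {x y : α}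
    (h : EqvGen (fun x y => r x y ∨ pairS a b x y) x y) : EqvGen r x y := by
  induction h with
  | rel x y h =>
    rcases h with h | (⟨rfl, rfl⟩ | ⟨rfl, rfl⟩)
    · exact EqvGen.rel _ _ h
    · exact hab
    · exact hab.symm _ _
  | refl x => exact EqvGen.refl _
  | symm x y _ ih => exact ih.symm _ _
  | trans x y z _ _ ih1 ih2 => exact ih1.trans _ _ _ ih2
lemma eqvGen_sup_congr {r r' s : α → α → Prop} (h : ∀ x y, EqvGen r x y ↔ EqvGen r' x y)
    {x y : α} (hx : EqvGen (fun x y => r x y ∨ s x y) x y) :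
    EqvGen (fun x y => r' x y ∨ s x y) x y := by
  induction hx with
  | rel x y h' =>
    rcases h' with h' | h'
    · exact ((h x y).mp (EqvGen.rel _ _ h')).mono (fun a b hab => Or.inl hab)
    · exact EqvGen.rel _ _ (Or.inr h')
  | refl x => exact EqvGen.refl _
  | symm x y _ ih => exact ih.symm _ _
  | trans x y z _ _ ih1 ih2 => exact ih1.trans _ _ _ ih2


def quotStepEmptyEquiv (endp : E → α × α) : Quot (stepRel endp ∅) ≃ α where
  toFun := Quot.lift id (by rintro x y ⟨e, he, -⟩; simp at he)
  invFun := Quot.mk _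
  left_inv := by rintro ⟨x⟩; rfl
  right_inv := fun x => rfl

lemma eqvGen_insert_iff_of_related {endp : E → α × α} {T : Finset E} {e : E}
    (hrel : EqvGen (stepRel endp T) (endp e).1 (endp e).2) (x y : α) :
    EqvGen (stepRel endp (insert e T)) x y ↔ EqvGen (stepRel endp T) x y := by
  rw [stepRel_insert]
  constructor
  · exact eqvGen_sup_of_related hrel
  · exact fun h => h.mono (fun a b hab => Or.inl hab)

instance quotFinite [Finite α] (r : α → α → Prop) : Finite (Quot r) :=
  Finite.of_surjective (Quot.mk r) (Quot.mk_surjective)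

lemma exists_forest [Finite α] (endp : E → α × α) (T : Finset E) :
    ∃ T' ⊆ T, (∀ x y, EqvGen (stepRel endp T') x y ↔ EqvGen (stepRel endp T) x y) ∧
      T'.card + Nat.card (Quot (stepRel endp T)) = Nat.card α := by
  classical
  induction T using Finset.induction_on with
  | empty =>
    refine ⟨∅, le_refl _, fun _ _ => Iff.rfl, ?_⟩
    rw [Finset.card_empty, Nat.card_congr (quotStepEmptyEquiv endp), zero_add]
  | @insert e T hniT ih =>
    obtain ⟨T', hT'sub, hT'eqv, hT'card⟩ := ih
    set a := (endp e).1
    set b := (endp e).2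
    by_cases hrel : EqvGen (stepRel endp T) a b
    · refine ⟨T', hT'sub.trans (Finset.subset_insert e T), ?_, ?_⟩
      · intro x y
        rw [hT'eqv x y, eqvGen_insert_iff_of_related hrel x y]
      · have : Nat.card (Quot (stepRel endp (insert e T))) = Nat.card (Quot (stepRel endp T)) := by
          refine Nat.card_congr (Equiv.mk
            (Quot.lift (Quot.mk _) (fun x y h => Quot.eqvGen_sound
              ((eqvGen_insert_iff_of_related hrel x y).mp (EqvGen.rel _ _ h))))
            (Quot.lift (Quot.mk _) (fun x y h => Quot.eqvGen_sound
              ((eqvGen_insert_iff_of_related hrel x y).mpr (EqvGen.rel _ _ h)).symm ▸ rfl))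
            ?_ ?_) <;> (rintro ⟨x⟩ ; rfl)
        omega
    · refine ⟨insert e T', Finset.insert_subset_insert e hT'sub, ?_, ?_⟩
      · intro x y
        rw [stepRel_insert, stepRel_insert]
        constructor
        · intro h
          exact eqvGen_sup_congr (fun x y => hT'eqv x y) h
        · intro h
          exact eqvGen_sup_congr (fun x y => (hT'eqv x y).symm) h
      · have hniT' : e ∉ T' := fun h => hniT (hT'sub h)
        rw [Finset.card_insert_of_notMem hniT']
        have hne : Quot.mk (stepRel endp T) a ≠ Quot.mk (stepRel endp T) b :=
          fun h => hrel (Quot.eqvGen_exact h)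
        have h1 : Nat.card (Quot (stepRel endp (insert e T))) + 1
            = Nat.card (Quot (stepRel endp T)) := by
          rw [stepRel_insert, Nat.card_congr (quotSupPairEquiv (stepRel endp T) a b)]
          exact card_quot_pairS hne
        omega

lemma eqvGen_of_rtg {r : α → α → Prop} {x y : α} (h : ReflTransGen r x y) : EqvGen r x y := by
  induction h with
  | refl => exact EqvGen.refl _
  | tail _ h ih => exact ih.trans _ _ _ (EqvGen.rel _ _ h)

lemma rtg_of_eqvGen {r : α → α → Prop} (hs : ∀ x y, r x y → r y x) {x y : α}
    (h : EqvGen r x y) : ReflTransGen r x y := by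
  induction h with
  | rel x y h => exact ReflTransGen.single h
  | refl x => exact ReflTransGen.refl
  | symm x y _ ih => exact (letI : Std.Symm r := ⟨fun a b hab => hs a b hab⟩; ReflTransGen.symmetric.symm _ _ ih)
  | trans x y z _ _ ih1 ih2 => exact ih1.trans ih2

lemma card_quot_eq_one [Finite α] [Nonempty α] {endp : E → α × α} {T : Finset E}
    (hconn : ∀ x y : α, ReflTransGen (stepRel endp T) x y) :
    Nat.card (Quot (stepRel endp T)) = 1 := by
  rw [Nat.card_eq_one_iff_unique]
  constructor
  · constructor
    intro u v
    induction u using Quot.ind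
    induction v using Quot.ind
    exact Quot.eqvGen_sound (eqvGen_of_rtg (hconn _ _))
  · exact ⟨Quot.mk _ (Classical.arbitrary α)⟩

lemma exists_spanning_connected [Finite α] [Nonempty α] (endp : E → α × α) (T : Finset E)
    (hconn : ∀ x y : α, ReflTransGen (stepRel endp T) x y) :
    ∃ T' ⊆ T, (∀ x y : α, ReflTransGen (stepRel endp T') x y) ∧ T'.card + 1 = Nat.card α := by
  obtain ⟨T', hsub, heqv, hcard⟩ := exists_forest endp T
  rw [card_quot_eq_one hconn] at hcard
  refine ⟨T', hsub, fun x y => ?_, hcard⟩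
  exact rtg_of_eqvGen (fun a b h => stepRel_symm h)
    ((heqv x y).mpr (eqvGen_of_rtg (hconn x y)))

lemma card_le_of_connected [Finite α] [Nonempty α] {endp : E → α × α} {T : Finset E}
    (hconn : ∀ x y : α, ReflTransGen (stepRel endp T) x y) :
    Nat.card α ≤ T.card + 1 := by
  obtain ⟨T', hsub, -, hcard⟩ := exists_spanning_connected endp T hconn
  have := Finset.card_le_card hsub
  omega


end Banana
end BananaAux

section BananaWMG
open Relation Banana
set_option linter.unusedSectionVars false

namespace Banana

lemma rtg_lift_rtg {α β : Type*} {r : α → α → Prop} {s : β → β → Prop} (f : α → β)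
    (hf : ∀ x y, r x y → ReflTransGen s (f x) (f y)) {x y : α} (h : ReflTransGen r x y) :
    ReflTransGen s (f x) (f y) := by
  induction h with
  | refl => exact .refl
  | tail _ hstep ih => exact ih.trans (hf _ _ hstep)

lemma eqvGen_hom {α : Type*} {r s : α → α → Prop} (h : ∀ a b, r a b → EqvGen s a b) {x y : α}
    (hx : EqvGen r x y) : EqvGen s x y := by
  induction hx with
  | rel a b hab => exact h a b hab
  | refl a => exact EqvGen.refl _
  | symm a b _ ih => exact ih.symm _ _
  | trans a b c _ _ ih1 ih2 => exact ih1.trans _ _ _ ih2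

/-- Decode a walk in a quotient graph back to the base. -/
lemma rtg_quot_decode {V E : Type*} {ρ : V → V → Prop} (endp : E → V × V) (S : Finset E)
    {u' v' : Quot ρ}
    (h : ReflTransGen
      (stepRel (fun e => (Quot.mk ρ (endp e).1, Quot.mk ρ (endp e).2)) S) u' v') :
    ∀ x y : V, u' = Quot.mk ρ x → v' = Quot.mk ρ y →
      ReflTransGen (fun a b => stepRel endp S a b ∨ EqvGen ρ a b) x y := by
  induction h with
  | refl =>
    intro x y hx hy
    exact ReflTransGen.single (Or.inr (Quot.eqvGen_exact (hx.symm.trans hy)))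
  | tail _ hstep ih =>
    intro x y hx hy
    obtain ⟨e, he, hcase⟩ := hstep
    rcases hcase with hc | hc
    · rw [Prod.ext_iff] at hc
      obtain ⟨h1, h2⟩ := hc
      refine (ih x (endp e).1 hx h1.symm).tail (Or.inl ⟨e, he, Or.inl rfl⟩) |>.tail ?_
      exact Or.inr (Quot.eqvGen_exact (h2.trans hy))
    · rw [Prod.ext_iff] at hc
      obtain ⟨h1, h2⟩ := hc
      refine (ih x (endp e).2 hx h2.symm).tail (Or.inl ⟨e, he, Or.inr rfl⟩) |>.tail ?_
      exact Or.inr (Quot.eqvGen_exact (h1.trans hy))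

end Banana

namespace WMG
open Banana

lemma isSpanningTree_iff (G : WMG) (hne : Nonempty G.V) (T : Finset G.E) :
    G.IsSpanningTree T ↔
      (∀ u v : G.V, ReflTransGen (Banana.stepRel G.ends T) u v) ∧ T.card + 1 = Nat.card G.V := by
  have h1 : Nat.card G.V = Fintype.card G.V := Nat.card_eq_fintype_card
  have h2 : 1 ≤ Fintype.card G.V := Fintype.card_pos_iff.mpr hne
  constructor
  · rintro ⟨hc, hcard⟩
    exact ⟨hc, by omega⟩
  · rintro ⟨hc, hcard⟩
    exact ⟨hc, by omega⟩

lemma t_eq_card_filter (G : WMG) :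
    G.t = (Finset.univ.filter (fun T : Finset G.E => G.IsSpanningTree T)).card := by
  rw [WMG.t, Nat.card_eq_fintype_card, Fintype.card_subtype]

lemma exists_spanningTree (G : WMG) (h : G.Connected) : ∃ T, G.IsSpanningTree T := by
  obtain ⟨hne, hconn⟩ := h
  have hconn' : ∀ u v : G.V, ReflTransGen (stepRel G.ends (Finset.univ : Finset G.E)) u v := by
    intro u v
    refine ReflTransGen.mono ?_ u v (hconn u v)
    rintro a b ⟨e, he⟩
    exact ⟨e, Finset.mem_univ e, he⟩
  obtain ⟨T', -, hc, hcard⟩ := Banana.exists_spanning_connected G.ends Finset.univ hconn'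
  exact ⟨T', (G.isSpanningTree_iff hne T').mpr ⟨hc, hcard⟩⟩

lemma t_pos (G : WMG) (h : G.Connected) : 0 < G.t := by
  obtain ⟨T, hT⟩ := G.exists_spanningTree h
  have : Nonempty {T : Finset G.E // G.IsSpanningTree T} := ⟨⟨T, hT⟩⟩
  exact Nat.card_pos

lemma eqvGen_pq_hom1 {G : WMG} {p q : G.V} (a b : G.V) (h : (fun x y => x = p ∧ y = q) a b) :
    EqvGen (pairS p q) a b := EqvGen.rel _ _ (Or.inl h)

lemma eqvGen_pq_hom2 {G : WMG} {p q : G.V} (a b : G.V) (h : pairS p q a b) :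
    EqvGen (fun x y => x = p ∧ y = q) a b := by
  rcases h with h | ⟨h1, h2⟩
  · exact EqvGen.rel _ _ h
  · exact (EqvGen.rel _ _ ⟨h2, h1⟩).symm _ _

lemma ident2_mk_eq_iff {G : WMG} {p q x y : G.V} :
    (Quot.mk _ x : (G.ident2 p q).V) = Quot.mk _ y ↔ x = y ∨ pairS p q x y := by
  rw [← eqvGen_pairS_iff]
  constructor
  · intro h
    exact eqvGen_hom eqvGen_pq_hom1 (Quot.eqvGen_exact h)
  · intro h
    exact Quot.eqvGen_sound (eqvGen_hom eqvGen_pq_hom2 h)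

lemma card_ident2_V (G : WMG) (p q : G.V) (hpq : p ≠ q) :
    Nat.card (G.ident2 p q).V + 1 = Nat.card G.V := by
  have : Nat.card (G.ident2 p q).V = Nat.card (Quot (pairS p q)) :=
    Nat.card_congr (quotCongrRel eqvGen_pq_hom1 eqvGen_pq_hom2)
  rw [this]
  exact card_quot_pairS hpq

lemma ident2_connected (G : WMG) (p q : G.V) (h : G.Connected) : (G.ident2 p q).Connected := by
  obtain ⟨⟨v⟩, hconn⟩ := h
  refine ⟨⟨Quot.mk _ v⟩, ?_⟩
  intro u' v'
  induction u' using Quot.ind with | _ x => ?_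
  induction v' using Quot.ind with | _ y => ?_
  refine ReflTransGen.lift (Quot.mk _) ?_ x y (hconn x y)
  rintro a b ⟨e, he | he⟩
  · refine ⟨e, Or.inl ?_⟩
    show (Quot.mk _ (G.ends e).1, Quot.mk _ (G.ends e).2) = _
    rw [he]
    rfl
  · refine ⟨e, Or.inr ?_⟩
    show (Quot.mk _ (G.ends e).1, Quot.mk _ (G.ends e).2) = _
    rw [he]
    rfl

lemma t2_pos (G : WMG) (p q : G.V) (h : G.Connected) : 0 < ((G.ident2 p q).t) :=
  (G.ident2 p q).t_pos (G.ident2_connected p q h)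

/-- Decode connectivity in `G_{pq}` to connectivity in `G` up to jumping between `p` and `q`. -/
lemma ident2_reach_decode {G : WMG} {p q : G.V} (S : Finset G.E) {x y : G.V}
    (h : ReflTransGen (stepRel (G.ident2 p q).ends S)
      (Quot.mk _ x) (Quot.mk _ y)) :
    ReflTransGen (fun a b => stepRel G.ends S a b ∨ pairS p q a b) x y := by
  have h0 := rtg_quot_decode (ρ := fun x y : G.V => x = p ∧ y = q) G.ends S h x y rfl rfl
  refine rtg_lift_rtg (s := fun a b => stepRel G.ends S a b ∨ pairS p q a b) id ?_ h0
  rintro a b (hab | hab)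
  · exact ReflTransGen.single (Or.inl hab)
  · have := eqvGen_pairS_iff.mp (eqvGen_hom eqvGen_pq_hom1 hab)
    rcases this with rfl | hp
    · exact ReflTransGen.refl
    · exact ReflTransGen.single (Or.inr hp)

end WMG
end BananaWMG

section BananaGlue
open Relation Banana
set_option linter.unusedSectionVars false
namespace WMG

variable {k : ℕ} (G : Fin k → WMG) (p q : ∀ i, (G i).V)

/-- The gluing relation of `glueFam`. -/
def rg : (Σ i, (G i).V) → (Σ i, (G i).V) → Prop := fun x y =>
  (∃ i j, x = ⟨i, p i⟩ ∧ y = ⟨j, p j⟩) ∨ (∃ i j, x = ⟨i, q i⟩ ∧ y = ⟨j, q j⟩)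

def isP (G : Fin k → WMG) (p : ∀ i, (G i).V) : (Σ i, (G i).V) → Prop :=
  fun x => ∃ i, x = ⟨i, p i⟩

variable {G p q}

lemma sigma_pq_ne (hpq : ∀ i, p i ≠ q i) (i j : Fin k) :
    (⟨i, p i⟩ : Σ i, (G i).V) ≠ ⟨j, q j⟩ := by
  intro h
  rw [Sigma.mk.inj_iff] at h
  obtain ⟨rfl, h2⟩ := h
  exact hpq i (eq_of_heq h2)

lemma not_isP_isQ (hpq : ∀ i, p i ≠ q i) {x : Σ i, (G i).V} (h1 : isP G p x)
    (h2 : isP G q x) : False := by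
  obtain ⟨i, rfl⟩ := h1
  obtain ⟨j, hj⟩ := h2
  exact sigma_pq_ne hpq i j hj

lemma eqvGen_rg_iff (hpq : ∀ i, p i ≠ q i) {x y : Σ i, (G i).V} :
    EqvGen (rg G p q) x y ↔
      x = y ∨ (isP G p x ∧ isP G p y) ∨ (isP G q x ∧ isP G q y) := by
  constructor
  · intro h
    induction h with
    | rel a b hab =>
      rcases hab with ⟨i, j, rfl, rfl⟩ | ⟨i, j, rfl, rfl⟩
      · exact Or.inr (Or.inl ⟨⟨i, rfl⟩, ⟨j, rfl⟩⟩)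
      · exact Or.inr (Or.inr ⟨⟨i, rfl⟩, ⟨j, rfl⟩⟩)
    | refl a => exact Or.inl rfl
    | symm a b _ ih =>
      rcases ih with rfl | ⟨h1, h2⟩ | ⟨h1, h2⟩
      · exact Or.inl rfl
      · exact Or.inr (Or.inl ⟨h2, h1⟩)
      · exact Or.inr (Or.inr ⟨h2, h1⟩)
    | trans a b c _ _ ih1 ih2 =>
      rcases ih1 with rfl | ⟨h1, h2⟩ | ⟨h1, h2⟩
      · exact ih2
      · rcases ih2 with rfl | ⟨h3, h4⟩ | ⟨h3, h4⟩
        · exact Or.inr (Or.inl ⟨h1, h2⟩)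
        · exact Or.inr (Or.inl ⟨h1, h4⟩)
        · exact absurd h2 (fun hP => not_isP_isQ hpq hP h3)
      · rcases ih2 with rfl | ⟨h3, h4⟩ | ⟨h3, h4⟩
        · exact Or.inr (Or.inr ⟨h1, h2⟩)
        · exact absurd h3 (fun hP => not_isP_isQ hpq hP h2)
        · exact Or.inr (Or.inr ⟨h1, h4⟩)
  · rintro (rfl | ⟨⟨i, rfl⟩, ⟨j, rfl⟩⟩ | ⟨⟨i, rfl⟩, ⟨j, rfl⟩⟩)
    · exact EqvGen.refl _
    · exact EqvGen.rel _ _ (Or.inl ⟨i, j, rfl, rfl⟩)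
    · exact EqvGen.rel _ _ (Or.inr ⟨i, j, rfl, rfl⟩)

lemma glue_mk_eq_iff (hpq : ∀ i, p i ≠ q i) {x y : Σ i, (G i).V} :
    (Quot.mk (rg G p q) x = Quot.mk (rg G p q) y) ↔
      x = y ∨ (isP G p x ∧ isP G p y) ∨ (isP G q x ∧ isP G q y) := by
  rw [← eqvGen_rg_iff hpq]
  exact ⟨Quot.eqvGen_exact, Quot.eqvGen_sound⟩

lemma glueFam_V_eq : (glueFam G p q).V = Quot (rg G p q) := rfl

noncomputable def glueNorm (G : Fin k → WMG) (p q : ∀ i, (G i).V) (i0 : Fin k) :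
    (Σ i, (G i).V) → Σ i, (G i).V := fun x =>
  if x.2 = p x.1 then ⟨i0, p i0⟩ else if x.2 = q x.1 then ⟨i0, q i0⟩ else x

lemma glueNorm_p (i0 i : Fin k) : glueNorm G p q i0 ⟨i, p i⟩ = ⟨i0, p i0⟩ := by
  unfold glueNorm
  rw [if_pos rfl]

lemma glueNorm_q (hpq : ∀ i, p i ≠ q i) (i0 i : Fin k) :
    glueNorm G p q i0 ⟨i, q i⟩ = ⟨i0, q i0⟩ := by
  unfold glueNorm
  rw [if_neg (fun h => hpq i h.symm), if_pos rfl]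

lemma glueNorm_other (i0 : Fin k) {x : Σ i, (G i).V} (h1 : x.2 ≠ p x.1) (h2 : x.2 ≠ q x.1) :
    glueNorm G p q i0 x = x := by
  unfold glueNorm
  rw [if_neg h1, if_neg h2]

lemma glueNorm_eqvGen (hpq : ∀ i, p i ≠ q i) (i0 : Fin k) (x : Σ i, (G i).V) :
    EqvGen (rg G p q) x (glueNorm G p q i0 x) := by
  by_cases h1 : x.2 = p x.1
  · have hx : x = ⟨x.1, p x.1⟩ := by rw [← h1]
    rw [show glueNorm G p q i0 x = ⟨i0, p i0⟩ by rw [hx]; exact glueNorm_p i0 x.1]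
    exact EqvGen.rel _ _ (Or.inl ⟨x.1, i0, hx, rfl⟩)
  · by_cases h2 : x.2 = q x.1
    · have hx : x = ⟨x.1, q x.1⟩ := by rw [← h2]
      rw [show glueNorm G p q i0 x = ⟨i0, q i0⟩ by rw [hx]; exact glueNorm_q hpq i0 x.1]
      exact EqvGen.rel _ _ (Or.inr ⟨x.1, i0, hx, rfl⟩)
    · rw [glueNorm_other i0 h1 h2]
      exact EqvGen.refl _

lemma card_glueFam_V (hk : 0 < k) (hpq : ∀ i, p i ≠ q i) :
    Nat.card (glueFam G p q).V + 2 * k = (∑ i, Nat.card (G i).V) + 2 := by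
  classical
  have : Fintype (Quot (rg G p q)) := Fintype.ofFinite _
  set i0 : Fin k := ⟨0, hk⟩ with hi0
  have hg : ∀ x y, rg G p q x y → glueNorm G p q i0 x = glueNorm G p q i0 y := by
    rintro x y (⟨i, j, rfl, rfl⟩ | ⟨i, j, rfl, rfl⟩)
    · rw [glueNorm_p, glueNorm_p]
    · rw [glueNorm_q hpq, glueNorm_q hpq]
  set f : Quot (rg G p q) → Σ i, (G i).V := Quot.lift (glueNorm G p q i0) hg with hfdef
  have hfinj : Function.Injective f := by
    intro u v
    induction u using Quot.ind with | _ x => ?_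
    induction v using Quot.ind with | _ y => ?_
    intro hxy
    have h1 : Quot.mk (rg G p q) x = Quot.mk (rg G p q) (glueNorm G p q i0 x) :=
      Quot.eqvGen_sound (glueNorm_eqvGen hpq i0 x)
    have h2 : Quot.mk (rg G p q) y = Quot.mk (rg G p q) (glueNorm G p q i0 y) :=
      Quot.eqvGen_sound (glueNorm_eqvGen hpq i0 y)
    rw [h1, h2]
    exact congrArg _ hxy
  have himg : Finset.univ.image f = Finset.univ.image (glueNorm G p q i0) := by
    ext y
    simp only [Finset.mem_image, Finset.mem_univ, true_and]
    constructor
    · rintro ⟨c, rfl⟩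
      induction c using Quot.ind with | _ x => ?_
      exact ⟨x, rfl⟩
    · rintro ⟨x, rfl⟩
      exact ⟨Quot.mk _ x, rfl⟩
  set A : Finset (Σ i, (G i).V) := Finset.univ.filter
    (fun x => (x.2 ≠ p x.1 ∧ x.2 ≠ q x.1) ∨ x = ⟨i0, p i0⟩ ∨ x = ⟨i0, q i0⟩) with hAdef
  have himgA : Finset.univ.image (glueNorm G p q i0) = A := by
    ext x
    simp only [hAdef, Finset.mem_image, Finset.mem_filter, Finset.mem_univ, true_and]
    constructor
    · rintro ⟨y, rfl⟩
      by_cases h1 : y.2 = p y.1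
      · have hy : glueNorm G p q i0 y = ⟨i0, p i0⟩ := by
          rw [show y = ⟨y.1, p y.1⟩ by rw [← h1]]
          exact glueNorm_p i0 y.1
        rw [hy]
        exact Or.inr (Or.inl rfl)
      · by_cases h2 : y.2 = q y.1
        · have hy : glueNorm G p q i0 y = ⟨i0, q i0⟩ := by
            rw [show y = ⟨y.1, q y.1⟩ by rw [← h2]]
            exact glueNorm_q hpq i0 y.1
          rw [hy]
          exact Or.inr (Or.inr rfl)
        · rw [glueNorm_other i0 h1 h2]
          exact Or.inl ⟨h1, h2⟩
    · rintro (⟨h1, h2⟩ | rfl | rfl)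
      · exact ⟨x, glueNorm_other i0 h1 h2⟩
      · exact ⟨⟨i0, p i0⟩, glueNorm_p i0 i0⟩
      · exact ⟨⟨i0, q i0⟩, glueNorm_q hpq i0 i0⟩
  set B : Finset (Σ i, (G i).V) :=
    ((Finset.univ.erase i0).image (fun i => (⟨i, p i⟩ : Σ i, (G i).V))) ∪
    ((Finset.univ.erase i0).image (fun i => (⟨i, q i⟩ : Σ i, (G i).V))) with hBdef
  have hcompl : Finset.univ.filter
      (fun x : Σ i, (G i).V => ¬ ((x.2 ≠ p x.1 ∧ x.2 ≠ q x.1) ∨ x = ⟨i0, p i0⟩ ∨ x = ⟨i0, q i0⟩))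
      = B := by
    ext x
    rw [Finset.mem_filter, hBdef, Finset.mem_union]
    constructor
    · rintro ⟨-, h⟩
      push_neg at h
      obtain ⟨h1, h2, h3⟩ := h
      by_cases hp1 : x.2 = p x.1
      · have hx : x = ⟨x.1, p x.1⟩ := by rw [← hp1]
        refine Or.inl (Finset.mem_image.mpr ⟨x.1, Finset.mem_erase.mpr ⟨?_, Finset.mem_univ _⟩, hx.symm⟩)
        intro hi0
        exact h2 (by rw [hx, hi0])
      · have hq1 := h1 hp1
        have hx : x = ⟨x.1, q x.1⟩ := by rw [← hq1]
        refine Or.inr (Finset.mem_image.mpr ⟨x.1, Finset.mem_erase.mpr ⟨?_, Finset.mem_univ _⟩, hx.symm⟩)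
        intro hi0
        exact h3 (by rw [hx, hi0])
    · intro hx
      refine ⟨Finset.mem_univ _, ?_⟩
      rcases hx with hx | hx
      · obtain ⟨i, hi, rfl⟩ := Finset.mem_image.mp hx
        have hine := (Finset.mem_erase.mp hi).1
        rintro (⟨h1, -⟩ | h | h)
        · exact h1 rfl
        · rw [Sigma.mk.inj_iff] at h
          exact hine h.1
        · exact sigma_pq_ne hpq i i0 h
      · obtain ⟨i, hi, rfl⟩ := Finset.mem_image.mp hx
        have hine := (Finset.mem_erase.mp hi).1
        rintro (⟨-, h2⟩ | h | h)
        · exact h2 rfl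
        · exact sigma_pq_ne hpq i0 i h.symm
        · rw [Sigma.mk.inj_iff] at h
          exact hine h.1
  have hBcard : B.card = (k - 1) + (k - 1) := by
    rw [hBdef, Finset.card_union_of_disjoint, Finset.card_image_of_injective,
      Finset.card_image_of_injective, Finset.card_erase_of_mem (Finset.mem_univ _),
      Finset.card_univ, Fintype.card_fin]
    · intro a b hab
      exact congrArg Sigma.fst hab
    · intro a b hab
      exact congrArg Sigma.fst hab
    · rw [Finset.disjoint_left]
      rintro x hx1 hx2
      simp only [Finset.mem_image, Finset.mem_erase] at hx1 hx2
      obtain ⟨i, -, rfl⟩ := hx1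
      obtain ⟨j, -, hj⟩ := hx2
      exact sigma_pq_ne hpq i j hj.symm
  have hsplit : A.card + B.card = Fintype.card (Σ i, (G i).V) := by
    rw [hAdef, ← hcompl, ← Finset.card_univ]
    simpa using Finset.card_filter_add_card_filter_not
      (s := (Finset.univ : Finset (Σ i, (G i).V)))
      (p := fun x => (x.2 ≠ p x.1 ∧ x.2 ≠ q x.1) ∨ x = ⟨i0, p i0⟩ ∨ x = ⟨i0, q i0⟩)
  have hcardQuot : Nat.card (Quot (rg G p q)) = A.card := by
    rw [← himgA, ← himg, Finset.card_image_of_injective _ hfinj, Finset.card_univ,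
      Nat.card_eq_fintype_card]
  have hcards : Fintype.card (Σ i, (G i).V) = ∑ i, Nat.card (G i).V := by
    rw [Fintype.card_sigma]
    exact Finset.sum_congr rfl (fun i _ => (Nat.card_eq_fintype_card).symm)
  have hNV : Nat.card (glueFam G p q).V = Nat.card (Quot (rg G p q)) := rfl
  rw [hNV, hcardQuot]
  omega

end WMG
end BananaGlue

section BananaGlue2
open Relation Banana
set_option linter.unusedSectionVars false
namespace WMG
variable {k : ℕ} {G : Fin k → WMG} {p q : ∀ i, (G i).V}

/-- The fiber of an edge set of a glued graph over the piece `j`. -/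
noncomputable def fib (G : Fin k → WMG) (T : Finset (Σ i, (G i).E)) (j : Fin k) :
    Finset (G j).E :=
  T.preimage (@Sigma.mk (Fin k) (fun i => (G i).E) j) (by
    intro a _ b _ h
    exact eq_of_heq (Sigma.mk.inj_iff.mp h).2)

lemma mem_fib (G : Fin k → WMG) {T : Finset (Σ i, (G i).E)} {j : Fin k} {e : (G j).E} :
    e ∈ fib G T j ↔ ⟨j, e⟩ ∈ T := Finset.mem_preimage

lemma sigma_fib (G : Fin k → WMG) (T : Finset (Σ i, (G i).E)) :
    Finset.univ.sigma (fun j => fib G T j) = T := by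
  ext ⟨j, e⟩
  rw [Finset.mem_sigma, mem_fib]
  simp

lemma card_fib_sum (G : Fin k → WMG) (T : Finset (Σ i, (G i).E)) :
    ∑ j, (fib G T j).card = T.card := by
  conv_rhs => rw [← sigma_fib G T]
  rw [Finset.card_sigma]

lemma fib_sigma (G : Fin k → WMG) (S : ∀ j, Finset (G j).E) (j : Fin k) :
    fib G (Finset.univ.sigma S) j = S j := by
  ext e
  rw [mem_fib, Finset.mem_sigma]
  simp

lemma glue_step_lift {T : Finset (Σ i, (G i).E)} (j : Fin k) {x y : (G j).V}
    (h : stepRel (G j).ends (fib G T j) x y) :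
    stepRel (glueFam G p q).ends T (Quot.mk (rg G p q) ⟨j, x⟩) (Quot.mk (rg G p q) ⟨j, y⟩) := by
  obtain ⟨e, he, hc⟩ := h
  refine ⟨⟨j, e⟩, (mem_fib G).mp he, ?_⟩
  rcases hc with hc | hc
  · left
    show (Quot.mk (rg G p q) ⟨j, ((G j).ends e).1⟩, Quot.mk (rg G p q) ⟨j, ((G j).ends e).2⟩) = _
    rw [hc]
    rfl
  · right
    show (Quot.mk (rg G p q) ⟨j, ((G j).ends e).1⟩, Quot.mk (rg G p q) ⟨j, ((G j).ends e).2⟩) = _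
    rw [hc]
    rfl

/-- Projection to the piece `j`, collapsing everything else to the glued vertex. -/
noncomputable def projAux (G : Fin k → WMG) (p q : ∀ i, (G i).V) (j : Fin k) :
    (Σ i, (G i).V) → ((G j).ident2 (p j) (q j)).V :=
  fun x => if h : x.1 = j then Quot.mk _ (cast (congrArg (fun i => (G i).V) h) x.2)
    else Quot.mk _ (p j)

lemma projAux_mk (j : Fin k) (v : (G j).V) :
    projAux G p q j ⟨j, v⟩ = Quot.mk _ v := by
  unfold projAux
  exact dif_pos rfl

lemma projAux_ne (j : Fin k) {x : Σ i, (G i).V} (h : x.1 ≠ j) :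
    projAux G p q j x = Quot.mk _ (p j) := by
  unfold projAux
  exact dif_neg h

lemma projAux_p (j a : Fin k) : projAux G p q j ⟨a, p a⟩ = Quot.mk _ (p j) := by
  by_cases h : a = j
  · subst h
    rw [projAux_mk]
  · exact projAux_ne j h

lemma projAux_q (j a : Fin k) : projAux G p q j ⟨a, q a⟩ = Quot.mk _ (q j) := by
  by_cases h : a = j
  · subst h
    rw [projAux_mk]
  · rw [projAux_ne j h]
    exact Quot.sound ⟨rfl, rfl⟩

noncomputable def proj (G : Fin k → WMG) (p q : ∀ i, (G i).V) (j : Fin k) :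
    (glueFam G p q).V → ((G j).ident2 (p j) (q j)).V :=
  Quot.lift (projAux G p q j) (by
    rintro x y (⟨a, b, rfl, rfl⟩ | ⟨a, b, rfl, rfl⟩)
    · rw [projAux_p, projAux_p]
    · rw [projAux_q, projAux_q])

lemma proj_mk (j : Fin k) (v : (G j).V) :
    proj G p q j (Quot.mk (rg G p q) ⟨j, v⟩) = Quot.mk _ v := projAux_mk j v

lemma proj_mk_ne {j a : Fin k} (h : a ≠ j) (v : (G a).V) :
    proj G p q j (Quot.mk (rg G p q) ⟨a, v⟩) = Quot.mk _ (p j) := projAux_ne j h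

lemma proj_step (j : Fin k) {T : Finset (Σ i, (G i).E)} {u' v' : (glueFam G p q).V}
    (h : stepRel (glueFam G p q).ends T u' v') :
    ReflTransGen (stepRel ((G j).ident2 (p j) (q j)).ends (fib G T j))
      (proj G p q j u') (proj G p q j v') := by
  obtain ⟨⟨a, e⟩, he, hc⟩ := h
  have hends : (glueFam G p q).ends ⟨a, e⟩ =
      (Quot.mk (rg G p q) ⟨a, ((G a).ends e).1⟩, Quot.mk (rg G p q) ⟨a, ((G a).ends e).2⟩) := rfl
  by_cases haj : a = j
  · subst haj
    rcases hc with hc | hc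
    · rw [hends] at hc
      obtain ⟨h1, h2⟩ := Prod.mk_inj.mp hc
      rw [← h1, ← h2, proj_mk, proj_mk]
      exact ReflTransGen.single ⟨e, (mem_fib G).mpr he, Or.inl rfl⟩
    · rw [hends] at hc
      obtain ⟨h1, h2⟩ := Prod.mk_inj.mp hc
      rw [← h1, ← h2, proj_mk, proj_mk]
      exact ReflTransGen.single ⟨e, (mem_fib G).mpr he, Or.inr rfl⟩
  · rcases hc with hc | hc
    · rw [hends] at hc
      obtain ⟨h1, h2⟩ := Prod.mk_inj.mp hc
      rw [← h1, ← h2, proj_mk_ne haj, proj_mk_ne haj]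
      exact ReflTransGen.refl
    · rw [hends] at hc
      obtain ⟨h1, h2⟩ := Prod.mk_inj.mp hc
      rw [← h1, ← h2, proj_mk_ne haj, proj_mk_ne haj]
      exact ReflTransGen.refl

end WMG
end BananaGlue2

section BananaGlue3
open Relation Banana
set_option linter.unusedSectionVars false
namespace WMG
variable {k : ℕ} {G : Fin k → WMG} {p q : ∀ i, (G i).V}

lemma exists_piece_pq_reach (hk : 0 < k) {T : Finset (Σ i, (G i).E)}
    (hT : ∀ u v : (glueFam G p q).V, ReflTransGen (stepRel (glueFam G p q).ends T) u v) :
    ∃ i, ReflTransGen (stepRel (G i).ends (fib G T i)) (p i) (q i) := by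
  by_contra hcon
  push_neg at hcon
  have hφresp : ∀ x y, rg G p q x y →
      (ReflTransGen (stepRel (G x.1).ends (fib G T x.1)) x.2 (q x.1)) =
      (ReflTransGen (stepRel (G y.1).ends (fib G T y.1)) y.2 (q y.1)) := by
    rintro x y (⟨a, b, rfl, rfl⟩ | ⟨a, b, rfl, rfl⟩)
    · rw [eq_false (hcon a), eq_false (hcon b)]
    · rw [eq_true (ReflTransGen.refl), eq_true (ReflTransGen.refl)]
  set Φ : (glueFam G p q).V → Prop :=
    Quot.lift (fun x : Σ i, (G i).V =>
      ReflTransGen (stepRel (G x.1).ends (fib G T x.1)) x.2 (q x.1)) hφresp with hΦdef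
  have hstep : ∀ u' v', stepRel (glueFam G p q).ends T u' v' → (Φ u' ↔ Φ v') := by
    rintro u' v' ⟨⟨a, e⟩, he, hc⟩
    have hs : stepRel (G a).ends (fib G T a) ((G a).ends e).1 ((G a).ends e).2 :=
      ⟨e, (mem_fib G).mpr he, Or.inl rfl⟩
    have key : ∀ w1 w2 : (G a).V, stepRel (G a).ends (fib G T a) w1 w2 →
        (Φ (Quot.mk (rg G p q) ⟨a, w1⟩) ↔ Φ (Quot.mk (rg G p q) ⟨a, w2⟩)) := by
      intro w1 w2 hs
      show ReflTransGen _ w1 (q a) ↔ ReflTransGen _ w2 (q a)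
      constructor
      · intro h
        exact (ReflTransGen.single (stepRel_symm hs)).trans h
      · intro h
        exact (ReflTransGen.single hs).trans h
    have hends : (glueFam G p q).ends ⟨a, e⟩ =
        (Quot.mk (rg G p q) ⟨a, ((G a).ends e).1⟩, Quot.mk (rg G p q) ⟨a, ((G a).ends e).2⟩) := rfl
    rcases hc with hc | hc <;> rw [hends] at hc <;>
      obtain ⟨h1, h2⟩ := Prod.mk_inj.mp hc
    · rw [← h1, ← h2]
      exact key _ _ hs
    · rw [← h1, ← h2]
      exact (key _ _ hs).symm
  have hrtg : ∀ u' v', ReflTransGen (stepRel (glueFam G p q).ends T) u' v' → (Φ u' ↔ Φ v') := by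
    intro u' v' h
    induction h with
    | refl => exact Iff.rfl
    | tail _ hs ih => exact ih.trans (hstep _ _ hs)
  have h1 := hrtg _ _ (hT (Quot.mk (rg G p q) ⟨⟨0, hk⟩, p ⟨0, hk⟩⟩)
    (Quot.mk (rg G p q) ⟨⟨0, hk⟩, q ⟨0, hk⟩⟩))
  exact (hcon ⟨0, hk⟩) (h1.mpr ReflTransGen.refl)

lemma glue_spanningTree_iff (hk : 0 < k) (hpq : ∀ i, p i ≠ q i)
    (T : Finset (Σ i, (G i).E)) :
    (glueFam G p q).IsSpanningTree T ↔
      ∃ i, (G i).IsSpanningTree (fib G T i) ∧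
        ∀ j, j ≠ i → ((G j).ident2 (p j) (q j)).IsSpanningTree (fib G T j) := by
  have hne : Nonempty (glueFam G p q).V := ⟨Quot.mk _ ⟨⟨0, hk⟩, p ⟨0, hk⟩⟩⟩
  have hnej : ∀ j, Nonempty ((G j).ident2 (p j) (q j)).V := fun j => ⟨Quot.mk _ (p j)⟩
  have hv : ∀ j : Fin k, Nat.card ((G j).ident2 (p j) (q j)).V + 1 = Nat.card (G j).V :=
    fun j => card_ident2_V (G j) (p j) (q j) (hpq j)
  have hNH := card_glueFam_V (G := G) (p := p) (q := q) hk hpq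
  have hsum := card_fib_sum G T
  constructor
  · intro hT
    obtain ⟨hTconn, hTcard⟩ := (isSpanningTree_iff _ hne T).mp hT
    have hTcard' : T.card + 1 = Nat.card (glueFam G p q).V := hTcard
    have hid : ∀ j, ∀ u' v' : ((G j).ident2 (p j) (q j)).V,
        ReflTransGen (stepRel ((G j).ident2 (p j) (q j)).ends (fib G T j)) u' v' := by
      intro j u' v'
      obtain ⟨x, rfl⟩ := Quot.exists_rep u'
      obtain ⟨y, rfl⟩ := Quot.exists_rep v'
      have h := rtg_lift_rtg (proj G p q j) (fun a b hs => proj_step j hs)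
        (hTconn (Quot.mk (rg G p q) ⟨j, x⟩) (Quot.mk (rg G p q) ⟨j, y⟩))
      rw [proj_mk, proj_mk] at h
      exact h
    obtain ⟨i, hpqreach⟩ := exists_piece_pq_reach hk hTconn
    have hconn_i : ∀ x y : (G i).V, ReflTransGen (stepRel (G i).ends (fib G T i)) x y := by
      intro x y
      have hdec := ident2_reach_decode (fib G T i) (hid i (Quot.mk _ x) (Quot.mk _ y))
      refine rtg_lift_rtg id ?_ hdec
      rintro a b (hab | (⟨rfl, rfl⟩ | ⟨rfl, rfl⟩))
      · exact ReflTransGen.single hab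
      · exact hpqreach
      · exact (letI : Std.Symm (stepRel (G i).ends (fib G T i)) := ⟨fun u v h => stepRel_symm h⟩; ReflTransGen.symmetric.symm _ _ hpqreach)
    have hle2 : ∀ j, Nat.card ((G j).ident2 (p j) (q j)).V ≤ (fib G T j).card + 1 := by
      intro j
      haveI := hnej j
      exact card_le_of_connected (hid j)
    have hle1 : Nat.card (G i).V ≤ (fib G T i).card + 1 := by
      haveI : Nonempty (G i).V := ⟨p i⟩
      exact card_le_of_connected hconn_i
    have hsum_le : ∑ j ∈ Finset.univ.erase i, Nat.card (G j).V ≤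
        ∑ j ∈ Finset.univ.erase i, ((fib G T j).card + 2) :=
      Finset.sum_le_sum (fun j _ => by have h1 := hle2 j; have h2 := hv j; omega)
    have hsplitn : Nat.card (G i).V + ∑ j ∈ Finset.univ.erase i, Nat.card (G j).V
        = ∑ j, Nat.card (G j).V :=
      Finset.add_sum_erase Finset.univ (fun j => Nat.card (G j).V) (Finset.mem_univ i)
    have hsplitf : (fib G T i).card + ∑ j ∈ Finset.univ.erase i, (fib G T j).card
        = ∑ j, (fib G T j).card :=
      Finset.add_sum_erase Finset.univ (fun j => (fib G T j).card) (Finset.mem_univ i)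
    have hsum2 : ∑ j ∈ Finset.univ.erase i, ((fib G T j).card + 2)
        = (∑ j ∈ Finset.univ.erase i, (fib G T j).card) + 2 * (k - 1) := by
      rw [Finset.sum_add_distrib, Finset.sum_const, Finset.card_erase_of_mem (Finset.mem_univ i),
        Finset.card_univ, Fintype.card_fin, smul_eq_mul]
      omega
    have hni : Nat.card (G i).V = (fib G T i).card + 1 := by omega
    have hsums : ∑ j ∈ Finset.univ.erase i, Nat.card (G j).V
        = ∑ j ∈ Finset.univ.erase i, ((fib G T j).card + 2) := by omega
    have heq_erase := (Finset.sum_eq_sum_iff_of_le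
      (fun j _ => by have h1 := hle2 j; have h2 := hv j; omega)).mp hsums
    refine ⟨i, (isSpanningTree_iff _ ⟨p i⟩ _).mpr ⟨hconn_i, by omega⟩, ?_⟩
    intro j hji
    have hj := heq_erase j (Finset.mem_erase.mpr ⟨hji, Finset.mem_univ j⟩)
    refine (isSpanningTree_iff _ (hnej j) _).mpr ⟨hid j, ?_⟩
    have h2 := hv j
    show (fib G T j).card + 1 = _
    omega
  · rintro ⟨i, hSTi, hSTj⟩
    obtain ⟨hconn_i, hcard_i⟩ := (isSpanningTree_iff _ ⟨p i⟩ _).mp hSTi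
    have hsymH : ∀ u v : (glueFam G p q).V, stepRel (glueFam G p q).ends T u v →
        stepRel (glueFam G p q).ends T v u := fun u v h => stepRel_symm h
    have hPQ : ReflTransGen (stepRel (glueFam G p q).ends T)
        (Quot.mk (rg G p q) ⟨i, p i⟩) (Quot.mk (rg G p q) ⟨i, q i⟩) :=
      rtg_lift_rtg (fun v => Quot.mk (rg G p q) ⟨i, v⟩)
        (fun a b h => ReflTransGen.single (glue_step_lift i h)) (hconn_i (p i) (q i))
    have hreach : ∀ (j : Fin k) (v : (G j).V), ReflTransGen (stepRel (glueFam G p q).ends T)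
        (Quot.mk (rg G p q) ⟨j, v⟩) (Quot.mk (rg G p q) ⟨j, p j⟩) := by
      intro j v
      by_cases hji : j = i
      · subst hji
        exact rtg_lift_rtg (fun w => Quot.mk (rg G p q) ⟨j, w⟩)
          (fun a b h => ReflTransGen.single (glue_step_lift j h)) (hconn_i v (p j))
      · obtain ⟨hconnj, hcardj⟩ := (isSpanningTree_iff _ (hnej j) _).mp (hSTj j hji)
        have hdec := ident2_reach_decode (fib G T j) (hconnj (Quot.mk _ v) (Quot.mk _ (p j)))
        refine rtg_lift_rtg (fun w => Quot.mk (rg G p q) ⟨j, w⟩) ?_ hdec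
        have e1 : Quot.mk (rg G p q) ⟨j, p j⟩ = Quot.mk (rg G p q) ⟨i, p i⟩ :=
          Quot.sound (Or.inl ⟨j, i, rfl, rfl⟩)
        have e2 : Quot.mk (rg G p q) ⟨j, q j⟩ = Quot.mk (rg G p q) ⟨i, q i⟩ :=
          Quot.sound (Or.inr ⟨j, i, rfl, rfl⟩)
        rintro a b (hab | (⟨rfl, rfl⟩ | ⟨rfl, rfl⟩))
        · exact ReflTransGen.single (glue_step_lift j hab)
        · show ReflTransGen (stepRel (glueFam G p q).ends T)
            (Quot.mk (rg G p q) ⟨j, p j⟩) (Quot.mk (rg G p q) ⟨j, q j⟩)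
          rw [e1, e2]
          exact hPQ
        · show ReflTransGen (stepRel (glueFam G p q).ends T)
            (Quot.mk (rg G p q) ⟨j, q j⟩) (Quot.mk (rg G p q) ⟨j, p j⟩)
          rw [e1, e2]
          exact (letI : Std.Symm (stepRel (glueFam G p q).ends T) := ⟨hsymH⟩; ReflTransGen.symmetric.symm _ _ hPQ)
    have hconn : ∀ u v : (glueFam G p q).V,
        ReflTransGen (stepRel (glueFam G p q).ends T) u v := by
      intro u v
      obtain ⟨⟨a, xv⟩, rfl⟩ := Quot.exists_rep u
      obtain ⟨⟨b, yv⟩, rfl⟩ := Quot.exists_rep v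
      have h1 := hreach a xv
      have h2 := hreach b yv
      have e : Quot.mk (rg G p q) ⟨a, p a⟩ = Quot.mk (rg G p q) ⟨b, p b⟩ :=
        Quot.sound (Or.inl ⟨a, b, rfl, rfl⟩)
      rw [e] at h1
      exact h1.trans (letI : Std.Symm (stepRel (glueFam G p q).ends T) := ⟨hsymH⟩; ReflTransGen.symmetric.symm _ _ h2)
    -- cardinality
    have hcards_j : ∀ j ∈ Finset.univ.erase i, (fib G T j).card + 2 = Nat.card (G j).V := by
      intro j hj
      have hji := (Finset.mem_erase.mp hj).1
      obtain ⟨-, hcardj⟩ := (isSpanningTree_iff _ (hnej j) _).mp (hSTj j hji)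
      have h2 := hv j
      have hcardj' : (fib G T j).card + 1 = Nat.card ((G j).ident2 (p j) (q j)).V := hcardj
      omega
    have hsum_eq : ∑ j ∈ Finset.univ.erase i, ((fib G T j).card + 2)
        = ∑ j ∈ Finset.univ.erase i, Nat.card (G j).V :=
      Finset.sum_congr rfl hcards_j
    have hsplitn : Nat.card (G i).V + ∑ j ∈ Finset.univ.erase i, Nat.card (G j).V
        = ∑ j, Nat.card (G j).V :=
      Finset.add_sum_erase Finset.univ (fun j => Nat.card (G j).V) (Finset.mem_univ i)
    have hsplitf : (fib G T i).card + ∑ j ∈ Finset.univ.erase i, (fib G T j).card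
        = ∑ j, (fib G T j).card :=
      Finset.add_sum_erase Finset.univ (fun j => (fib G T j).card) (Finset.mem_univ i)
    have hsum2 : ∑ j ∈ Finset.univ.erase i, ((fib G T j).card + 2)
        = (∑ j ∈ Finset.univ.erase i, (fib G T j).card) + 2 * (k - 1) := by
      rw [Finset.sum_add_distrib, Finset.sum_const, Finset.card_erase_of_mem (Finset.mem_univ i),
        Finset.card_univ, Fintype.card_fin, smul_eq_mul]
      omega
    exact (isSpanningTree_iff _ hne T).mpr ⟨hconn, by show T.card + 1 = _; omega⟩

end WMG
end BananaGlue3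

section BananaCount
open Relation Banana
set_option linter.unusedSectionVars false
namespace WMG
variable {k : ℕ} {G : Fin k → WMG} {p q : ∀ i, (G i).V}

def pieceR (G : Fin k → WMG) (p q : ∀ i, (G i).V) (i j : Fin k)
    (S : Finset (G j).E) : Prop :=
  (j = i → (G j).IsSpanningTree S) ∧ (j ≠ i → ((G j).ident2 (p j) (q j)).IsSpanningTree S)

noncomputable def pieceEquiv (G : Fin k → WMG) (p q : ∀ i, (G i).V) (i : Fin k) :
    {T : Finset (Σ j, (G j).E) // ∀ j, pieceR G p q i j (fib G T j)} ≃
    (∀ j, {S : Finset (G j).E // pieceR G p q i j S}) where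
  toFun := fun T j => ⟨fib G T.1 j, T.2 j⟩
  invFun := fun F => ⟨Finset.univ.sigma (fun j => (F j).1), fun j => by
    rw [fib_sigma]
    exact (F j).2⟩
  left_inv := by
    rintro ⟨T, h⟩
    exact Subtype.ext (sigma_fib G T)
  right_inv := by
    intro F
    funext j
    exact Subtype.ext (fib_sigma G _ j)

lemma glue_t_eq (hk : 0 < k) (hpq : ∀ i, p i ≠ q i) :
    (glueFam G p q).t =
      ∑ i, (G i).t * ∏ j ∈ Finset.univ.erase i, ((G j).ident2 (p j) (q j)).t := by
  classical
  have h0 : (glueFam G p q).t = (Finset.univ.filter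
      (fun T : Finset (Σ j, (G j).E) => (glueFam G p q).IsSpanningTree T)).card :=
    t_eq_card_filter _
  rw [h0]
  have hsplit : Finset.univ.filter
      (fun T : Finset (Σ j, (G j).E) => (glueFam G p q).IsSpanningTree T)
      = Finset.univ.biUnion (fun i => Finset.univ.filter
          (fun T : Finset (Σ j, (G j).E) => ∀ j, pieceR G p q i j (fib G T j))) := by
    ext T
    simp only [Finset.mem_filter, Finset.mem_biUnion, Finset.mem_univ, true_and]
    rw [glue_spanningTree_iff hk hpq]
    constructor
    · rintro ⟨i, h1, h2⟩
      refine ⟨i, fun j => ⟨fun hj => ?_, fun hj => h2 j hj⟩⟩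
      subst hj
      exact h1
    · rintro ⟨i, h⟩
      exact ⟨i, (h i).1 rfl, fun j hj => (h j).2 hj⟩
  rw [hsplit, Finset.card_biUnion]
  · refine Finset.sum_congr rfl (fun i _ => ?_)
    have h1 : (Finset.univ.filter
        (fun T : Finset (Σ j, (G j).E) => ∀ j, pieceR G p q i j (fib G T j))).card
        = Fintype.card {T : Finset (Σ j, (G j).E) // ∀ j, pieceR G p q i j (fib G T j)} :=
      (Fintype.card_subtype _).symm
    rw [h1, Fintype.card_congr (pieceEquiv G p q i), Fintype.card_pi]
    rw [← Finset.mul_prod_erase Finset.univ _ (Finset.mem_univ i)]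
    have h2 : Fintype.card {S : Finset (G i).E // pieceR G p q i i S} = (G i).t := by
      rw [WMG.t, Nat.card_eq_fintype_card]
      refine Fintype.card_congr (Equiv.subtypeEquivRight (fun S => ?_))
      exact ⟨fun h => h.1 rfl, fun h => ⟨fun _ => h, fun hne => absurd rfl hne⟩⟩
    have h3 : ∀ j ∈ Finset.univ.erase i,
        Fintype.card {S : Finset (G j).E // pieceR G p q i j S}
          = ((G j).ident2 (p j) (q j)).t := by
      intro j hj
      have hji := (Finset.mem_erase.mp hj).1
      rw [WMG.t, Nat.card_eq_fintype_card]
      refine Fintype.card_congr (Equiv.subtypeEquivRight (fun S => ?_))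
      exact ⟨fun h => h.2 hji, fun h => ⟨fun he => absurd he hji, fun _ => h⟩⟩
    rw [h2]
    exact congrArg _ (Finset.prod_congr rfl h3)
  · intro i hi i' hi' hne
    rw [Function.onFun, Finset.disjoint_left]
    rintro T hT hT'
    simp only [Finset.mem_filter, Finset.mem_univ, true_and] at hT hT'
    have h1 := (hT i).1 rfl
    have h2 := (hT' i).2 (by exact fun h => hne h)
    haveI : Nonempty (G i).V := ⟨p i⟩
    obtain ⟨-, hc1⟩ := (isSpanningTree_iff _ ⟨p i⟩ _).mp h1
    obtain ⟨-, hc2⟩ := (isSpanningTree_iff _ ⟨Quot.mk _ (p i)⟩ _).mp h2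
    have h3 := card_ident2_V (G i) (p i) (q i) (hpq i)
    have hc2' : (fib G T i).card + 1 = Nat.card ((G i).ident2 (p i) (q i)).V := hc2
    omega

end WMG
end BananaCount

/-- If the connected multigraph `G` is the union of `k` connected subgraphs
`G_i`, pairwise sharing exactly two vertices `p, q` (and no edges), then
`t(G) = (∏_j t(G_{j,pq})) ∑_i t(G_i)/t(G_{i,pq})`.  In particular, if all
`G_i` are copies of the same graph `G₀` glued along the same two vertices,
then `t(G) = k ⬝ t(G₀) ⬝ t(G₀,_{pq})^{k-1}`. -/
theorem spanning_trees_of_banana_union :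
    (∀ (k : ℕ), 1 ≤ k → ∀ (G : Fin k → WMG) (p q : ∀ i, (G i).V),
      (∀ i, (G i).Connected) → (∀ i, p i ≠ q i) →
      ((WMG.glueFam G p q).t : ℝ) =
        (∏ j, (((G j).ident2 (p j) (q j)).t : ℝ)) *
          ∑ i, ((G i).t : ℝ) / (((G i).ident2 (p i) (q i)).t : ℝ)) ∧
    (∀ (k : ℕ), 1 ≤ k → ∀ (G₀ : WMG) (p₀ q₀ : G₀.V),
      G₀.Connected → p₀ ≠ q₀ →
      (WMG.glueFam (fun _ : Fin k => G₀) (fun _ => p₀) (fun _ => q₀)).t =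
        k * G₀.t * (G₀.ident2 p₀ q₀).t ^ (k - 1)) := by
  constructor
  · intro k hk G p q hconn hpq
    have hpos : ∀ i, 0 < ((G i).ident2 (p i) (q i)).t :=
      fun i => (G i).t2_pos (p i) (q i) (hconn i)
    rw [WMG.glue_t_eq hk hpq]
    push_cast
    rw [Finset.mul_sum]
    refine Finset.sum_congr rfl (fun i _ => ?_)
    have hsplit : (∏ j, (((G j).ident2 (p j) (q j)).t : ℝ))
        = (((G i).ident2 (p i) (q i)).t : ℝ) *
          ∏ j ∈ Finset.univ.erase i, (((G j).ident2 (p j) (q j)).t : ℝ) :=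
      (Finset.mul_prod_erase _ _ (Finset.mem_univ i)).symm
    rw [hsplit]
    have hne : (((G i).ident2 (p i) (q i)).t : ℝ) ≠ 0 :=
      Nat.cast_ne_zero.mpr (hpos i).ne'
    field_simp
  · intro k hk G₀ p₀ q₀ hconn hpq
    rw [WMG.glue_t_eq hk (fun _ => hpq)]
    rw [Finset.sum_congr rfl (fun i (_ : i ∈ Finset.univ) => by
      rw [Finset.prod_const, Finset.card_erase_of_mem (Finset.mem_univ i),
        Finset.card_univ, Fintype.card_fin])]
    rw [Finset.sum_const, Finset.card_univ, Fintype.card_fin, smul_eq_mul]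
    ring
end
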